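/- arXiv:1609.06561 — 7 statements merged into one kernel-verified Lean document; each statement's English description precedes it below -/
import Mathlib

section
/- Let 0 < s < 1. Then there exists a real number u > 0 with tan(u) = u such that tan(u/s) ≠ u/s. Equivalently, among the positive roots u_k of the equation u = tan(u), there is some u_{k_0} such that u_{k_0}/s is not a root of the equation v = tan(v). -/
open Real

lemma my_arctan_lt_self {x : ℝ} (hx : 0 < x) : Real.arctan x < x := by
  have h0 : 0 < Real.arctan x := by
    have := Real.arctan_strictMono hx
    rwa [Real.arctan_zero] at this
  have h2 := Real.lt_tan h0 (Real.arctan_lt_pi_div_two x)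
  rwa [Real.tan_arctan] at h2

lemma my_cos_ne_zero (k : ℕ) {v : ℝ} (h1 : (k : ℝ) * π ≤ v) (h2 : v < (k : ℝ) * π + π / 2) :
    Real.cos v ≠ 0 := by
  intro h
  obtain ⟨j, hj⟩ := Real.cos_eq_zero_iff.mp h
  have hπ := Real.pi_pos
  subst hj
  -- (2j+1)*π/2 between kπ and kπ + π/2
  have hk1 : (2 * (j : ℝ) + 1) < 2 * k + 1 := by nlinarith
  have hk2 : (2 * (k : ℝ)) ≤ 2 * j + 1 := by nlinarith
  have hj1 : (j : ℝ) < k := by linarith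
  have hj2 : j < (k : ℤ) := by exact_mod_cast hj1
  have hj3 : (j : ℝ) ≤ (k : ℝ) - 1 := by
    have : j ≤ (k : ℤ) - 1 := by omega
    have : (j:ℝ) ≤ ((k:ℤ):ℝ) - 1 := by exact_mod_cast this
    push_cast at this
    linarith
  linarith

lemma my_exists_root (k : ℕ) :
    ∃ u : ℝ, ((k : ℝ) + 1) * π < u ∧ u < ((k : ℝ) + 1) * π + π / 2 ∧ Real.tan u = u := by
  have hπ := Real.pi_pos
  set K : ℝ := ((k : ℝ) + 1) * π with hK
  set b : ℝ := Real.arctan (K + π / 2) with hb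
  have hKpos : 0 < K := by positivity
  have hb0 : 0 < b := by
    have := Real.arctan_strictMono (show (0:ℝ) < K + π/2 by linarith)
    rwa [Real.arctan_zero] at this
  have hbhalf : b < π / 2 := Real.arctan_lt_pi_div_two _
  have hKcast : K = ((k + 1 : ℕ) : ℝ) * π := by push_cast; ring
  have hcont : ContinuousOn (fun v => Real.tan v - v) (Set.Icc K (K + b)) := by
    intro v hv
    apply ContinuousAt.continuousWithinAt
    apply ContinuousAt.sub _ continuousAt_id
    refine Real.continuousAt_tan.mpr ?_
    refine my_cos_ne_zero (k + 1) ?_ ?_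
    · rw [← hKcast]; exact hv.1
    · rw [← hKcast]; have := hv.2; linarith
  have htanK : Real.tan K = 0 := by
    rw [hKcast]
    have := (Real.tan_periodic.nat_mul (k + 1)).eq
    simpa using this
  have htanKb : Real.tan (K + b) = K + π / 2 := by
    rw [hKcast, add_comm]
    rw [Real.tan_periodic.nat_mul (k + 1) b, hb, Real.tan_arctan, hKcast]
  have hfa : Real.tan K - K < 0 := by rw [htanK]; linarith
  have hfb : 0 < Real.tan (K + b) - (K + b) := by rw [htanKb]; linarith
  have hsub := intermediate_value_Ioo (le_of_lt (by linarith : K < K + b)) hcont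
  have h0mem : (0 : ℝ) ∈ Set.Ioo (Real.tan K - K) (Real.tan (K + b) - (K + b)) :=
    ⟨hfa, hfb⟩
  obtain ⟨u, hu, hfu⟩ := hsub h0mem
  simp only [] at hfu
  have htu : Real.tan u = u := by
    have : Real.tan u - u = 0 := hfu
    linarith
  exact ⟨u, hu.1, by linarith [hu.2], htu⟩


lemma my_root_rep {v : ℝ} (hv : 0 < v) (ht : Real.tan v = v) :
    ∃ m : ℤ, v = (m : ℝ) * π + Real.arctan v := by
  have hcos : Real.cos v ≠ 0 := by
    intro h
    rw [Real.tan_eq_sin_div_cos, h, div_zero] at ht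
    linarith
  have hsv : Real.sin v = v * Real.cos v := by
    rw [Real.tan_eq_sin_div_cos] at ht
    field_simp at ht
    linarith
  have hsin : Real.sin (v - Real.arctan v) = 0 := by
    rw [Real.sin_sub, Real.sin_arctan, Real.cos_arctan, hsv]
    ring
  obtain ⟨n, hn⟩ := Real.sin_eq_zero_iff.mp hsin
  exact ⟨n, by linarith⟩

-- pin the integer when v ∈ ((k+1)π, (k+1)π + π/2)
lemma my_pin (k : ℕ) {v : ℝ} (hv : 0 < v) (h1 : ((k : ℝ) + 1) * π < v)
    (h2 : v < ((k : ℝ) + 1) * π + π / 2) {m : ℤ}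
    (hm : v = (m : ℝ) * π + Real.arctan v) : (m : ℝ) = (k : ℝ) + 1 := by
  have hπ := Real.pi_pos
  have ha0 : 0 < Real.arctan v := by
    have := Real.arctan_strictMono hv; rwa [Real.arctan_zero] at this
  have ha2 : Real.arctan v < π / 2 := Real.arctan_lt_pi_div_two v
  -- mπ < v < mπ + π/2 and (k+1)π < v < (k+1)π + π/2
  have hA : ((m : ℝ) - ((k : ℝ) + 1)) * π < π := by nlinarith
  have hB : (((k : ℝ) + 1) - (m : ℝ)) * π < π := by nlinarith
  have hA' : (m : ℝ) - ((k : ℝ) + 1) < 1 := by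
    by_contra hc
    push_neg at hc
    nlinarith
  have hB' : ((k : ℝ) + 1) - (m : ℝ) < 1 := by
    by_contra hc
    push_neg at hc
    nlinarith
  have h1 : (m : ℝ) < (k : ℝ) + 2 := by linarith
  have h2 : (k : ℝ) < (m : ℝ) := by linarith
  have hi1 : m < (k : ℤ) + 2 := by exact_mod_cast h1
  have hi2 : (k : ℤ) < m := by exact_mod_cast h2
  have : m = (k : ℤ) + 1 := by omega
  rw [this]; push_cast; ring

/-- Among the positive roots of `u = tan u`, for any `0 < s < 1` there is one, `u`,
such that `u / s` is not a root of `v = tan v`. -/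
theorem tan_root_not_scaled_root (s : ℝ) (hs0 : 0 < s) (hs1 : s < 1) :
    ∃ u : ℝ, 0 < u ∧ Real.tan u = u ∧ Real.tan (u / s) ≠ u / s := by
  by_contra hcon
  push_neg at hcon
  have hπ := Real.pi_pos
  have hπ3 := Real.pi_gt_three
  choose u hu1 hu2 hu3 using my_exists_root
  have hupos : ∀ k : ℕ, 0 < u k := fun k => lt_trans (by positivity) (hu1 k)
  have hupos' : ∀ k : ℕ, 0 < u k / s := fun k => div_pos (hupos k) hs0
  have hscaled : ∀ k, Real.tan (u k / s) = u k / s := fun k => hcon (u k) (hupos k) (hu3 k)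
  have hrepu : ∀ k : ℕ, u k = ((k : ℝ) + 1) * π + Real.arctan (u k) := by
    intro k
    obtain ⟨mm, hmm⟩ := my_root_rep (hupos k) (hu3 k)
    have h := my_pin k (hupos k) (hu1 k) (hu2 k) hmm
    rw [h] at hmm
    exact hmm
  choose m hm using fun k => my_root_rep (hupos' k) (hscaled k)
  set D : ℕ → ℝ := fun k => (π / 2 - Real.arctan (u k)) / s - (π / 2 - Real.arctan (u k / s))
    with hD
  set c : ℝ := (1 / s - 1) * π / 2 with hc
  have hsne : s ≠ 0 := ne_of_gt hs0
  clear_value D c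
  have claim1 : ∀ k : ℕ, (m k : ℝ) * π = ((k : ℝ) + 1) * π / s + c - D k := by
    intro k
    simp only [hD, hc]
    linear_combination -(hm k) + (1 / s) * (hrepu k)
  have claim2 : ∀ k : ℕ, 0 < D k := by
    intro k
    have h1 : Real.arctan (u k) < Real.arctan (u k / s) := by
      apply Real.arctan_strictMono
      rw [lt_div_iff₀ hs0]
      nlinarith [hupos k]
    have h2 : Real.arctan (u k) < π / 2 := Real.arctan_lt_pi_div_two _
    have h3 : π / 2 - Real.arctan (u k) < (π / 2 - Real.arctan (u k)) / s := by
      rw [lt_div_iff₀ hs0]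
      nlinarith
    simp only [hD]
    linarith
  have claim3 : ∀ k : ℕ, D k < 1 / (s * (((k : ℝ) + 1) * 3)) := by
    intro k
    have e1 : π / 2 - Real.arctan (u k) = Real.arctan (u k)⁻¹ :=
      (Real.arctan_inv_of_pos (hupos k)).symm
    have e2 : Real.arctan (u k)⁻¹ < (u k)⁻¹ := my_arctan_lt_self (inv_pos.mpr (hupos k))
    have e4 : ((k : ℝ) + 1) * 3 < u k := by nlinarith [hu1 k]
    have e3 : 1 / u k < 1 / (((k : ℝ) + 1) * 3) :=
      one_div_lt_one_div_of_lt (by positivity) e4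
    have e5 : π / 2 - Real.arctan (u k / s) > 0 :=
      sub_pos.mpr (Real.arctan_lt_pi_div_two _)
    have e6 : (π / 2 - Real.arctan (u k)) / s < (1 / (((k : ℝ) + 1) * 3)) / s := by
      gcongr
      have := one_div (u k)
      linarith
    have e7 : (1 / (((k : ℝ) + 1) * 3)) / s = 1 / (s * (((k : ℝ) + 1) * 3)) := by
      rw [div_div, mul_comm]
    have e8 : D k < (π / 2 - Real.arctan (u k)) / s := by
      simp only [hD]; linarith
    linarith

  have claim4 : ∀ k : ℕ, π * ((m (2 * k + 1) : ℝ) - 2 * (m k : ℝ)) + c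
      = 2 * D k - D (2 * k + 1) := by
    intro k
    have hA := claim1 (2 * k + 1)
    have hB := claim1 k
    have hcast : ((2 * k + 1 : ℕ) : ℝ) + 1 = 2 * ((k : ℝ) + 1) := by push_cast; ring
    rw [hcast] at hA
    linear_combination hA - 2 * hB
  have hb1 : ∀ k : ℕ, D (2 * k + 1) < 1 / (s * (((k : ℝ) + 1) * 3)) := by
    intro k
    refine lt_of_lt_of_le (claim3 (2 * k + 1)) ?_
    apply one_div_le_one_div_of_le (by positivity)
    have hkc : (0 : ℝ) ≤ (k : ℝ) := Nat.cast_nonneg k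
    have : ((k : ℝ) + 1) ≤ ((2 * k + 1 : ℕ) : ℝ) + 1 := by push_cast; linarith
    nlinarith
  have claim5 : ∀ k : ℕ, |π * ((m (2 * k + 1) : ℝ) - 2 * (m k : ℝ)) + c|
      < 1 / (s * ((k : ℝ) + 1)) := by
    intro k
    rw [claim4 k, abs_lt]
    have h1 := claim2 k
    have h2 := claim2 (2 * k + 1)
    have h3 := claim3 k
    have h4 := hb1 k
    have e : 3 * (1 / (s * (((k : ℝ) + 1) * 3))) = 1 / (s * ((k : ℝ) + 1)) := by
      have hkne : ((k : ℝ) + 1) ≠ 0 := by positivity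
      field_simp
    have hBpos : 0 < 1 / (s * ((k : ℝ) + 1)) := by positivity
    constructor <;> linarith
  obtain ⟨K, hK⟩ := exists_nat_gt (2 / (s * π))
  have hKb : 1 / (s * ((K : ℝ) + 1)) < π / 2 := by
    rw [div_lt_iff₀ (by positivity)]
    rw [div_lt_iff₀ (by positivity)] at hK
    nlinarith [mul_pos hs0 hπ]
  have hmono : ∀ k : ℕ, K ≤ k → 1 / (s * ((k : ℝ) + 1)) ≤ 1 / (s * ((K : ℝ) + 1)) := by
    intro k hk
    apply one_div_le_one_div_of_le (by positivity)
    have : (K : ℝ) ≤ k := Nat.cast_le.mpr hk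
    nlinarith
  have hconst : ∀ k : ℕ, K ≤ k →
      m (2 * k + 1) - 2 * m k = m (2 * K + 1) - 2 * m K := by
    intro k hk
    have h1 : |π * ((m (2 * k + 1) : ℝ) - 2 * (m k : ℝ)) + c| < π / 2 :=
      ((claim5 k).trans_le (hmono k hk)).trans hKb
    have h2 : |π * ((m (2 * K + 1) : ℝ) - 2 * (m K : ℝ)) + c| < π / 2 :=
      (claim5 K).trans hKb
    set Ak : ℝ := π * ((m (2 * k + 1) : ℝ) - 2 * (m k : ℝ)) + c with hAk
    set AK : ℝ := π * ((m (2 * K + 1) : ℝ) - 2 * (m K : ℝ)) + c with hAK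
    have tri : |Ak - AK| ≤ |Ak| + |AK| := by
      rw [sub_eq_add_neg]
      exact (abs_add_le _ _).trans (by rw [abs_neg])
    set d : ℤ := (m (2 * k + 1) - 2 * m k) - (m (2 * K + 1) - 2 * m K) with hd
    have hdd : (d : ℝ) = ((m (2 * k + 1) : ℝ) - 2 * (m k : ℝ))
        - ((m (2 * K + 1) : ℝ) - 2 * (m K : ℝ)) := by
      rw [hd]; push_cast; ring
    have hπd : |π * (d : ℝ)| < π := by
      have e2 : π * (d : ℝ) = Ak - AK := by rw [hdd, hAk, hAK]; ring
      rw [e2]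
      calc |Ak - AK| ≤ |Ak| + |AK| := tri
        _ < π := by linarith
    rw [abs_mul, abs_of_pos hπ] at hπd
    have habs1 : |(d : ℝ)| < 1 := by
      nlinarith [abs_nonneg (d : ℝ)]
    have hd1 : |d| < 1 := by
      have h9 : ((|d| : ℤ) : ℝ) < 1 := by rw [Int.cast_abs]; exact habs1
      exact_mod_cast h9
    have hd0 : d = 0 := by
      rcases abs_lt.mp hd1 with ⟨h9a, h9b⟩
      omega
    rw [hd] at hd0
    exact sub_eq_zero.mp hd0
  -- the constant γ is zero
  have hγ0 : π * ((m (2 * K + 1) : ℝ) - 2 * (m K : ℝ)) + c = 0 := by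
    have hγbound : ∀ k : ℕ, K ≤ k →
        |π * ((m (2 * K + 1) : ℝ) - 2 * (m K : ℝ)) + c| < 1 / (s * ((k : ℝ) + 1)) := by
      intro k hk
      have h := hconst k hk
      have hcast : (m (2 * k + 1) : ℝ) - 2 * (m k : ℝ)
          = (m (2 * K + 1) : ℝ) - 2 * (m K : ℝ) := by
        have : ((m (2 * k + 1) - 2 * m k : ℤ) : ℝ) = ((m (2 * K + 1) - 2 * m K : ℤ) : ℝ) := by
          exact_mod_cast h
        push_cast at this
        linarith
      rw [← hcast]
      exact claim5 k
    by_contra hne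
    have habs : 0 < |π * ((m (2 * K + 1) : ℝ) - 2 * (m K : ℝ)) + c| := abs_pos.mpr hne
    set G : ℝ := |π * ((m (2 * K + 1) : ℝ) - 2 * (m K : ℝ)) + c| with hG
    obtain ⟨k0, hk0⟩ := exists_nat_gt (1 / (s * G))
    have hb := hγbound (max k0 K) (le_max_right _ _)
    have hkk : (k0 : ℝ) ≤ ((max k0 K : ℕ) : ℝ) := Nat.cast_le.mpr (le_max_left _ _)
    rw [div_lt_iff₀ (by positivity)] at hk0
    have h2 : 1 / (s * (((max k0 K : ℕ) : ℝ) + 1)) < G := by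
      rw [div_lt_iff₀ (by positivity)]
      nlinarith [mul_pos hs0 habs]
    linarith
  have hdouble : ∀ k : ℕ, K ≤ k → D (2 * k + 1) = 2 * D k := by
    intro k hk
    have h := claim4 k
    have hcast : (m (2 * k + 1) : ℝ) - 2 * (m k : ℝ)
        = (m (2 * K + 1) : ℝ) - 2 * (m K : ℝ) := by
      have h2 := hconst k hk
      have : ((m (2 * k + 1) - 2 * m k : ℤ) : ℝ) = ((m (2 * K + 1) - 2 * m K : ℤ) : ℝ) := by
        exact_mod_cast h2
      push_cast at this
      linarith
    rw [hcast, hγ0] at h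
    linarith
  -- the doubling sequence
  set g : ℕ → ℕ := fun j => 2 ^ j * (K + 1) - 1 with hg
  have hg0 : ∀ j, 0 < 2 ^ j * (K + 1) :=
    fun j => Nat.mul_pos (pow_pos (by norm_num) j) (Nat.succ_pos K)
  have hg1 : ∀ j, g j + 1 = 2 ^ j * (K + 1) := by
    intro j
    simp only [hg]
    exact Nat.sub_add_cancel (hg0 j)
  have hgK : ∀ j, K ≤ g j := by
    intro j
    have h2 : K + 1 ≤ 2 ^ j * (K + 1) := Nat.le_mul_of_pos_left _ (pow_pos (by norm_num) j)
    rw [← hg1 j] at h2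
    exact Nat.le_of_succ_le_succ h2
  have hgs : ∀ j, g (j + 1) = 2 * g j + 1 := by
    intro j
    have h : g (j + 1) + 1 = (2 * g j + 1) + 1 := by
      calc g (j + 1) + 1 = 2 ^ (j + 1) * (K + 1) := hg1 _
        _ = 2 * (2 ^ j * (K + 1)) := by rw [pow_succ]; ring
        _ = 2 * (g j + 1) := by rw [hg1 j]
        _ = (2 * g j + 1) + 1 := by ring
    exact Nat.add_right_cancel h
  have hDg : ∀ j, D (g j) = 2 ^ j * D K := by
    intro j
    induction j with
    | zero =>
      have h1 : g 0 + 1 = K + 1 := by rw [hg1 0]; norm_num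
      have h2 : g 0 = K := Nat.add_right_cancel h1
      rw [h2]; norm_num
    | succ j ih =>
      rw [hgs j, hdouble (g j) (hgK j), ih, pow_succ]
      ring
  have hfin : ∀ j : ℕ, ((2 : ℝ) ^ j * D K) * (s * ((2 : ℝ) ^ j * ((K : ℝ) + 1) * 3)) < 1 := by
    intro j
    have h := claim3 (g j)
    rw [hDg j] at h
    have hcast : ((g j : ℕ) : ℝ) + 1 = (2 : ℝ) ^ j * ((K : ℝ) + 1) := by
      have h1 := hg1 j
      have h2 : ((g j + 1 : ℕ) : ℝ) = ((2 ^ j * (K + 1) : ℕ) : ℝ) := by rw [h1]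
      push_cast at h2
      linarith
    rw [hcast] at h
    have hX : (0 : ℝ) < s * ((2 : ℝ) ^ j * ((K : ℝ) + 1) * 3) := by positivity
    calc ((2 : ℝ) ^ j * D K) * (s * ((2 : ℝ) ^ j * ((K : ℝ) + 1) * 3))
        < (1 / (s * ((2 : ℝ) ^ j * ((K : ℝ) + 1) * 3))) * (s * ((2 : ℝ) ^ j * ((K : ℝ) + 1) * 3)) := by
          apply mul_lt_mul_of_pos_right _ hX
          exact h
      _ = 1 := by field_simp
  have hDK := claim2 K
  set E : ℝ := s * (((K : ℝ) + 1) * 3) * D K with hE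
  have hEpos : 0 < E := by rw [hE]; positivity
  obtain ⟨j, hj⟩ := pow_unbounded_of_one_lt (1 / E) (by norm_num : (1 : ℝ) < 4)
  have h1 := hfin j
  have e2 : (2 : ℝ) ^ j * (2 : ℝ) ^ j = (4 : ℝ) ^ j := by rw [← mul_pow]; norm_num
  have e3 : ((2 : ℝ) ^ j * D K) * (s * ((2 : ℝ) ^ j * ((K : ℝ) + 1) * 3)) = (4 : ℝ) ^ j * E := by
    rw [hE, ← e2]; ring
  rw [e3] at h1
  rw [div_lt_iff₀ hEpos] at hj
  linarith
end

section
/- Let the parameters of the bivariate powered exponential model satisfy ρ² ≤ (α11·α22·s11^{α11}·s22^{α22})/(α12²·s12^{2α12}) · inf_{r>0} [ r^{α11+α22−2α12} · exp(2(s12·r)^{α12} − (s11·r)^{α11} − (s22·r)^{α22}) · q^{(1)}_{α11,s11}(r)·q^{(1)}_{α22,s22}(r) / (q^{(1)}_{α12,s12}(r))² ], where the infimum is taken over all r > 0 with q^{(1)}_{α12,s12}(r) ≠ 0. Then the bivariate powered exponential model C is positive definite in ℝ. -/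
open Matrix Set

noncomputable section

/-- A `2×2`-matrix-valued function `C` on `[0,∞)` is positive definite in `ℝⁿ` if for all
finitely many points `x₁,…,x_p ∈ ℝⁿ` and vectors `a₁,…,a_p ∈ ℝ²`,
`∑_{i,j} aᵢᵀ C(‖xᵢ - xⱼ‖) aⱼ ≥ 0`. -/
def PosDefIn (n : ℕ) (C : ℝ → Matrix (Fin 2) (Fin 2) ℝ) : Prop :=
  ∀ (p : ℕ) (x : Fin p → EuclideanSpace ℝ (Fin n)) (a : Fin p → Fin 2 → ℝ),
    0 ≤ ∑ i : Fin p, ∑ j : Fin p, a i ⬝ᵥ (C ‖x i - x j‖).mulVec (a j)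

/-- The auxiliary function `q⁽¹⁾_{α,s}(r) = α (s r)^α - α + 1`. -/
def q1 (α s r : ℝ) : ℝ := α * (s * r) ^ α - α + 1

namespace BPEaux

open Real MeasureTheory Filter

/-- The second derivative of `u ↦ exp (-(s*u)^α)` on `(0,∞)`. -/
def gg (α s u : ℝ) : ℝ := α * s ^ α * u ^ (α - 2) * Real.exp (-(s * u) ^ α) * q1 α s u

lemma q1_nonneg {α s u : ℝ} (hα0 : 0 < α) (hα1 : α ≤ 1) (hsu : 0 ≤ s * u) :
    0 ≤ q1 α s u := by
  have h := Real.rpow_nonneg hsu α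
  unfold q1; nlinarith

lemma gg_nonneg {α s u : ℝ} (hα0 : 0 < α) (hα1 : α ≤ 1) (hs : 0 < s) (hu : 0 < u) :
    0 ≤ gg α s u := by
  have h1 : 0 ≤ q1 α s u := q1_nonneg hα0 hα1 (by positivity)
  unfold gg
  have h2 : (0:ℝ) ≤ s ^ α := Real.rpow_nonneg hs.le α
  have h3 : (0:ℝ) ≤ u ^ (α - 2) := Real.rpow_nonneg hu.le _
  positivity

lemma cont_gg {α s : ℝ} (hs : 0 < s) : ContinuousOn (fun u => gg α s u) (Ioi 0) := by
  have h1 : ContinuousOn (fun u : ℝ => u ^ (α - 2)) (Ioi 0) := fun x hx =>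
    (Real.continuousAt_rpow_const x _ (Or.inl (ne_of_gt hx))).continuousWithinAt
  have h2 : ContinuousOn (fun u : ℝ => (s * u) ^ α) (Ioi 0) := by
    intro x hx
    have hsx : s * x ≠ 0 := ne_of_gt (mul_pos hs hx)
    exact ((Real.continuousAt_rpow_const (s * x) α (Or.inl hsx)).comp
      ((continuous_const.mul continuous_id).continuousAt)).continuousWithinAt
  have hq : ContinuousOn (fun u : ℝ => q1 α s u) (Ioi 0) := by
    unfold q1
    exact ((continuousOn_const.mul h2).sub continuousOn_const).add continuousOn_const
  have hexp : ContinuousOn (fun u : ℝ => Real.exp (-(s * u) ^ α)) (Ioi 0) :=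
    Real.continuous_exp.comp_continuousOn h2.neg
  exact (((continuousOn_const.mul h1).mul hexp).mul hq)

lemma integrableOn_aux {p q b : ℝ} (hp : 0 < p) (hq : -1 < q) (hb : 0 < b) :
    IntegrableOn (fun x : ℝ => x ^ q * Real.exp (-(b * x ^ p))) (Ioi 0) := by
  set c : ℝ := (q + 1) / p - 1 with hc
  have hc1 : -1 < c := by
    have : 0 < (q + 1) / p := div_pos (by linarith) hp
    simp only [hc]; linarith
  have step1 : IntegrableOn (fun y : ℝ => Real.exp (-y) * y ^ c) (Ioi 0) := by
    simpa using Real.GammaIntegral_convergent (show 0 < c + 1 by linarith)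
  have step2 : IntegrableOn (fun x : ℝ => Real.exp (-(b * x)) * (b * x) ^ c) (Ioi 0) := by
    have := (integrableOn_Ioi_comp_mul_left_iff
      (fun y : ℝ => Real.exp (-y) * y ^ c) 0 hb).2 (by simpa using step1)
    simpa using this
  have step3 : IntegrableOn (fun x : ℝ => x ^ c * Real.exp (-(b * x))) (Ioi 0) := by
    have hbc : (0:ℝ) < b ^ c := Real.rpow_pos_of_pos hb c
    have h4 : IntegrableOn (fun x : ℝ => (b ^ c)⁻¹ * (Real.exp (-(b * x)) * (b * x) ^ c))
        (Ioi 0) := step2.const_mul _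
    refine h4.congr_fun ?_ measurableSet_Ioi
    intro x hx
    have hx0 : (0:ℝ) < x := hx
    show (b ^ c)⁻¹ * (Real.exp (-(b * x)) * (b * x) ^ c) = x ^ c * Real.exp (-(b * x))
    rw [Real.mul_rpow hb.le hx0.le]
    field_simp
  have := (integrableOn_Ioi_comp_rpow_iff'
    (fun y : ℝ => y ^ c * Real.exp (-(b * y))) (ne_of_gt hp)).2 step3
  refine this.congr_fun ?_ measurableSet_Ioi
  intro x hx
  have hx0 : (0:ℝ) < x := hx
  have h1 : ((x : ℝ) ^ p) ^ c = x ^ (p * c) := (Real.rpow_mul hx0.le p c).symm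
  show x ^ (p - 1) • (((x:ℝ) ^ p) ^ c * Real.exp (-(b * x ^ p))) = x ^ q * Real.exp (-(b * x ^ p))
  rw [smul_eq_mul, h1, ← mul_assoc, ← Real.rpow_add hx0]
  have h2 : p - 1 + p * c = q := by rw [hc]; field_simp; ring
  rw [h2]

lemma hasDerivAt_exp_part {α s : ℝ} (hα0 : 0 < α) (hs : 0 < s) {u : ℝ} (hu : 0 < u) :
    HasDerivAt (fun v : ℝ => Real.exp (-(s * v) ^ α))
      (-(α * s ^ α * u ^ (α - 1) * Real.exp (-(s * u) ^ α))) u := by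
  have h0 : HasDerivAt (fun v : ℝ => s * v) s u := by
    simpa using (hasDerivAt_id u).const_mul s
  have h1 : HasDerivAt (fun v : ℝ => (s * v) ^ α) (α * (s * u) ^ (α - 1) * s) u := by
    have h := (Real.hasDerivAt_rpow_const
      (x := s * u) (p := α) (Or.inl (ne_of_gt (mul_pos hs hu)))).comp u h0
    exact h
  have h3 := (Real.hasDerivAt_exp (-(s * u) ^ α)).comp u h1.neg
  have hss : s ^ (α - 1) * s = s ^ α := by
    nth_rewrite 2 [← Real.rpow_one s]
    rw [← Real.rpow_add hs]; norm_num
  refine h3.congr_deriv ?_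
  symm
  have hmul : (s * u) ^ (α - 1) = s ^ (α - 1) * u ^ (α - 1) := Real.mul_rpow hs.le hu.le
  rw [hmul]
  linear_combination (α * u ^ (α - 1) * Real.exp (-(s * u) ^ α)) * hss

lemma hasDerivAt_deriv_part {α s : ℝ} (hα0 : 0 < α) (hs : 0 < s) {u : ℝ} (hu : 0 < u) :
    HasDerivAt (fun v : ℝ => -(α * s ^ α * v ^ (α - 1) * Real.exp (-(s * v) ^ α)))
      (gg α s u) u := by
  have hA : HasDerivAt (fun v : ℝ => v ^ (α - 1)) ((α - 1) * u ^ (α - 2)) u := by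
    have h := Real.hasDerivAt_rpow_const (x := u) (p := α - 1) (Or.inl (ne_of_gt hu))
    simpa [show α - 1 - 1 = α - 2 by ring] using h
  have hB := hasDerivAt_exp_part hα0 hs hu
  have h := ((hA.const_mul (α * s ^ α)).mul hB).neg
  refine h.congr_deriv ?_
  symm
  have hE : (s * u) ^ α = s ^ α * u ^ α := Real.mul_rpow hs.le hu.le
  have e1 : u * u ^ (α - 2) = u ^ (α - 1) := by
    rw [show α - 1 = 1 + (α - 2) by ring, Real.rpow_add hu, Real.rpow_one]
  have e5 : u * (u * u ^ (α - 2)) = u ^ α := by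
    rw [e1]
    conv_rhs => rw [show α = 1 + (α - 1) by ring]
    rw [Real.rpow_add hu, Real.rpow_one]
  unfold gg q1
  rw [hE, ← e5, ← e1]
  ring

lemma tendsto_aux2 {α s : ℝ} (hα0 : 0 < α) (hs : 0 < s) :
    Filter.Tendsto (fun v : ℝ => α * s ^ α * v ^ α * Real.exp (-(s * v) ^ α))
      Filter.atTop (nhds 0) := by
  have hb : (0:ℝ) < s ^ α := Real.rpow_pos_of_pos hs α
  have htop : Filter.Tendsto (fun v : ℝ => s ^ α * v ^ α) Filter.atTop Filter.atTop :=
    ((tendsto_rpow_atTop hα0).const_mul_atTop hb)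
  have h := ((Real.tendsto_pow_mul_exp_neg_atTop_nhds_zero 1).comp htop).const_mul α
  rw [mul_zero] at h
  refine h.congr' ?_
  filter_upwards [Filter.eventually_gt_atTop (0:ℝ)] with v hv
  simp only [Function.comp, pow_one]
  rw [Real.mul_rpow hs.le hv.le]
  ring

lemma tendsto_exp_part {α s : ℝ} (hα0 : 0 < α) (hs : 0 < s) :
    Filter.Tendsto (fun v : ℝ => Real.exp (-(s * v) ^ α)) Filter.atTop (nhds 0) := by
  have htop : Filter.Tendsto (fun v : ℝ => (s * v) ^ α) Filter.atTop Filter.atTop := by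
    have h1 : Filter.Tendsto (fun v : ℝ => s * v) Filter.atTop Filter.atTop :=
      Filter.tendsto_id.const_mul_atTop hs
    exact (tendsto_rpow_atTop hα0).comp h1
  exact Real.tendsto_exp_neg_atTop_nhds_zero.comp htop

lemma integrable_term {α s : ℝ} (hα0 : 0 < α) (hα2 : α ≤ 2) (hs : 0 < s) {r : ℝ} (hr : 0 ≤ r) :
    IntegrableOn (fun u => max (u - r) 0 * gg α s u) (Ioi 0) := by
  have hb : (0:ℝ) < s ^ α := Real.rpow_pos_of_pos hs α
  have hI1 : IntegrableOn (fun u : ℝ => u ^ (2*α - 1) * Real.exp (-(s ^ α * u ^ α))) (Ioi 0) :=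
    integrableOn_aux hα0 (by linarith) hb
  have hI2 : IntegrableOn (fun u : ℝ => u ^ (α - 1) * Real.exp (-(s ^ α * u ^ α))) (Ioi 0) :=
    integrableOn_aux hα0 (by linarith) hb
  have hG : IntegrableOn (fun u : ℝ => α * s ^ α *
      (α * s ^ α * (u ^ (2*α - 1) * Real.exp (-(s ^ α * u ^ α))) +
        u ^ (α - 1) * Real.exp (-(s ^ α * u ^ α)))) (Ioi 0) :=
    ((hI1.const_mul (α * s ^ α)).add hI2).const_mul (α * s ^ α)
  refine hG.mono' ?_ ?_
  · exact (((continuous_id.sub continuous_const).max continuous_const).continuousOn.mul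
      (cont_gg hs)).aestronglyMeasurable measurableSet_Ioi
  · rw [MeasureTheory.ae_restrict_iff' measurableSet_Ioi]
    refine Filter.Eventually.of_forall (fun u hu => ?_)
    have hu0 : (0:ℝ) < u := hu
    have hE : (s * u) ^ α = s ^ α * u ^ α := Real.mul_rpow hs.le hu0.le
    have hmax0 : 0 ≤ max (u - r) 0 := le_max_right _ _
    have hmaxu : max (u - r) 0 ≤ u := max_le (by linarith) hu0.le
    have ht : 0 ≤ s ^ α * u ^ α := by positivity
    have hq : |q1 α s u| ≤ α * (s ^ α * u ^ α) + 1 := by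
      unfold q1
      rw [hE, abs_le]
      constructor <;> nlinarith
    have hA : (0:ℝ) ≤ α * s ^ α * u ^ (α - 2) * Real.exp (-(s ^ α * u ^ α)) := by positivity
    have hggabs : |gg α s u| =
        α * s ^ α * u ^ (α - 2) * Real.exp (-(s ^ α * u ^ α)) * |q1 α s u| := by
      unfold gg
      rw [hE, abs_mul, abs_of_nonneg hA]
    rw [Real.norm_eq_abs, abs_mul, abs_of_nonneg hmax0]
    have e1 : u * u ^ (α - 2) = u ^ (α - 1) := by
      rw [show α - 1 = 1 + (α - 2) by ring, Real.rpow_add hu0, Real.rpow_one]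
    have e2 : u * u ^ (α - 2) * u ^ α = u ^ (2*α - 1) := by
      rw [e1, ← Real.rpow_add hu0, show α - 1 + α = 2*α - 1 by ring]
    calc max (u - r) 0 * |gg α s u| ≤ u * |gg α s u| :=
          mul_le_mul_of_nonneg_right hmaxu (abs_nonneg _)
      _ ≤ u * (α * s ^ α * u ^ (α - 2) * Real.exp (-(s ^ α * u ^ α)) *
            (α * (s ^ α * u ^ α) + 1)) := by
          rw [hggabs]
          exact mul_le_mul_of_nonneg_left (mul_le_mul_of_nonneg_left hq hA) hu0.le
      _ = α * s ^ α * (α * s ^ α * (u ^ (2*α - 1) * Real.exp (-(s ^ α * u ^ α))) +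
            u ^ (α - 1) * Real.exp (-(s ^ α * u ^ α))) := by
          rw [show u * (α * s ^ α * u ^ (α - 2) * Real.exp (-(s ^ α * u ^ α)) *
              (α * (s ^ α * u ^ α) + 1)) =
            α * s ^ α * (α * s ^ α * ((u * u ^ (α - 2) * u ^ α) *
              Real.exp (-(s ^ α * u ^ α))) +
              (u * u ^ (α - 2)) * Real.exp (-(s ^ α * u ^ α))) by ring, e2, e1]

lemma repr {α s : ℝ} (hα0 : 0 < α) (hα2 : α ≤ 2) (hs : 0 < s) {r : ℝ} (hr : 0 ≤ r) :
    ∫ u in Ioi (0:ℝ), max (u - r) 0 * gg α s u = Real.exp (-(s * r) ^ α) := by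
  rcases eq_or_lt_of_le hr with hr0 | hr0
  · -- r = 0
    subst hr0
    have hcong : ∫ u in Ioi (0:ℝ), max (u - 0) 0 * gg α s u
        = ∫ u in Ioi (0:ℝ), u * gg α s u := by
      refine setIntegral_congr_fun measurableSet_Ioi (fun u hu => ?_)
      have hu0 : (0:ℝ) < u := hu
      rw [sub_zero, max_eq_left hu0.le]
    rw [hcong]
    set F0 : ℝ → ℝ := fun v => -(α * s ^ α * v ^ α * Real.exp (-(s * v) ^ α))
      - Real.exp (-(s * v) ^ α) with hF0
    have hderiv : ∀ u ∈ Ioi (0:ℝ), HasDerivAt F0 (u * gg α s u) u := by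
      intro u hu
      have hu0 : (0:ℝ) < u := hu
      have hA : HasDerivAt (fun v : ℝ => v ^ α) (α * u ^ (α - 1)) u :=
        Real.hasDerivAt_rpow_const (x := u) (p := α) (Or.inl (ne_of_gt hu0))
      have hB := hasDerivAt_exp_part hα0 hs hu0
      have h := (((hA.const_mul (α * s ^ α)).mul hB).neg).sub hB
      refine h.congr_deriv ?_
      symm
      have hE : (s * u) ^ α = s ^ α * u ^ α := Real.mul_rpow hs.le hu0.le
      have e1 : u * u ^ (α - 2) = u ^ (α - 1) := by
        rw [show α - 1 = 1 + (α - 2) by ring, Real.rpow_add hu0, Real.rpow_one]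
      have e5 : u * (u * u ^ (α - 2)) = u ^ α := by
        rw [e1]
        conv_rhs => rw [show α = 1 + (α - 1) by ring]
        rw [Real.rpow_add hu0, Real.rpow_one]
      unfold gg q1
      rw [hE, ← e5, ← e1]
      ring
    have hcont : ContinuousWithinAt F0 (Ici (0:ℝ)) 0 := by
      have hc1 : Continuous (fun v : ℝ => (s * v) ^ α) := by
        refine continuous_iff_continuousAt.2 (fun x => ?_)
        exact (Real.continuousAt_rpow_const (s * x) α (Or.inr hα0.le)).comp
          ((continuous_const.mul continuous_id).continuousAt)
      have hc2 : Continuous (fun v : ℝ => v ^ α) :=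
        continuous_iff_continuousAt.2
          (fun x => Real.continuousAt_rpow_const x α (Or.inr hα0.le))
      exact (((((continuous_const.mul hc2).mul
        (Real.continuous_exp.comp hc1.neg)).neg).sub
        (Real.continuous_exp.comp hc1.neg)).continuousAt).continuousWithinAt
    have hint : IntegrableOn (fun u : ℝ => u * gg α s u) (Ioi 0) := by
      refine (integrable_term hα0 hα2 hs le_rfl).congr_fun (fun u hu => ?_) measurableSet_Ioi
      have hu0 : (0:ℝ) < u := hu
      beta_reduce
      rw [sub_zero, max_eq_left hu0.le]
    have htend : Filter.Tendsto F0 Filter.atTop (nhds 0) := by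
      have h := ((tendsto_aux2 hα0 hs).neg).sub (tendsto_exp_part hα0 hs)
      simpa using h
    rw [MeasureTheory.integral_Ioi_of_hasDerivAt_of_tendsto hcont hderiv hint htend]
    simp [hF0, Real.zero_rpow (ne_of_gt hα0)]
  · -- r > 0
    have hsplit : Ioi (0:ℝ) = Ioc 0 r ∪ Ioi r := (Set.Ioc_union_Ioi_eq_Ioi hr).symm
    have hint0 := integrable_term hα0 hα2 hs hr (α := α) (s := s)
    rw [hsplit, setIntegral_union (Set.Ioc_disjoint_Ioi le_rfl) measurableSet_Ioi
      (hint0.mono_set (by rw [hsplit]; exact subset_union_left))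
      (hint0.mono_set (by rw [hsplit]; exact subset_union_right))]
    have hzero : ∫ u in Ioc (0:ℝ) r, max (u - r) 0 * gg α s u = 0 := by
      rw [setIntegral_congr_fun measurableSet_Ioc
        (fun u hu => by rw [max_eq_right (by linarith [hu.2] : u - r ≤ 0), zero_mul] :
          EqOn _ (fun _ => (0:ℝ)) _)]
      simp
    rw [hzero, zero_add]
    have hcong : ∫ u in Ioi r, max (u - r) 0 * gg α s u
        = ∫ u in Ioi r, (u - r) * gg α s u := by
      refine setIntegral_congr_fun measurableSet_Ioi (fun u hu => ?_)
      rw [max_eq_left (by linarith [mem_Ioi.mp hu] : (0:ℝ) ≤ u - r)]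
    rw [hcong]
    set F : ℝ → ℝ := fun v => (v - r) * (-(α * s ^ α * v ^ (α - 1) * Real.exp (-(s * v) ^ α)))
      - Real.exp (-(s * v) ^ α) with hF
    have hderiv : ∀ u : ℝ, 0 < u → HasDerivAt F ((u - r) * gg α s u) u := by
      intro u hu0
      have h := (((hasDerivAt_id u).sub_const r).mul
        (hasDerivAt_deriv_part hα0 hs hu0)).sub (hasDerivAt_exp_part hα0 hs hu0)
      refine h.congr_deriv ?_
      symm
      simp only [id_eq]
      ring
    have hcont : ContinuousWithinAt F (Ici r) r :=
      ((hderiv r hr0).continuousAt).continuousWithinAt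
    have hint : IntegrableOn (fun u : ℝ => (u - r) * gg α s u) (Ioi r) := by
      refine ((hint0.mono_set (Set.Ioi_subset_Ioi hr)).congr_fun
        (fun u hu => ?_) measurableSet_Ioi)
      beta_reduce
      rw [max_eq_left (by linarith [mem_Ioi.mp hu] : (0:ℝ) ≤ u - r)]
    have htend : Filter.Tendsto F Filter.atTop (nhds 0) := by
      have h1 : Filter.Tendsto
          (fun v : ℝ => (v - r) * (-(α * s ^ α * v ^ (α - 1) * Real.exp (-(s * v) ^ α))))
          Filter.atTop (nhds 0) := by
        refine squeeze_zero_norm' ?_ (tendsto_aux2 hα0 hs)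
        filter_upwards [Filter.eventually_ge_atTop (max r 1)] with v hv
        have hv0 : (0:ℝ) < v := lt_of_lt_of_le one_pos (le_trans (le_max_right r 1) hv)
        have hvr : r ≤ v := le_trans (le_max_left r 1) hv
        have e1 : v * v ^ (α - 1) = v ^ α := by
          conv_rhs => rw [show α = 1 + (α - 1) by ring]
          rw [Real.rpow_add hv0, Real.rpow_one]
        have hd : (0:ℝ) ≤ α * s ^ α * v ^ (α - 1) * Real.exp (-(s * v) ^ α) := by positivity
        rw [Real.norm_eq_abs, abs_mul, abs_neg, abs_of_nonneg hd,
          abs_of_nonneg (by linarith : (0:ℝ) ≤ v - r)]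
        calc (v - r) * (α * s ^ α * v ^ (α - 1) * Real.exp (-(s * v) ^ α))
            ≤ v * (α * s ^ α * v ^ (α - 1) * Real.exp (-(s * v) ^ α)) := by
              apply mul_le_mul_of_nonneg_right (by linarith) hd
          _ = α * s ^ α * v ^ α * Real.exp (-(s * v) ^ α) := by
              rw [show v * (α * s ^ α * v ^ (α - 1) * Real.exp (-(s * v) ^ α))
                = α * s ^ α * (v * v ^ (α - 1)) * Real.exp (-(s * v) ^ α) by ring, e1]
      have h2 := h1.sub (tendsto_exp_part hα0 hs)
      simp only [sub_zero] at h2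
      exact h2
    rw [MeasureTheory.integral_Ioi_of_hasDerivAt_of_tendsto hcont
      (fun u hu => hderiv u (lt_trans hr0 (mem_Ioi.mp hu))) hint htend]
    simp [hF]

lemma kernel_psd {p : ℕ} (y : Fin p → ℝ) (c : Fin p → ℝ) (u : ℝ) :
    0 ≤ ∑ i : Fin p, ∑ j : Fin p, c i * c j * max (u - |y i - y j|) 0 := by
  rcases le_or_gt u 0 with hu | hu
  · have hz : ∀ i j : Fin p, c i * c j * max (u - |y i - y j|) 0 = 0 := by
      intro i j
      have h1 : u - |y i - y j| ≤ 0 := by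
        have := abs_nonneg (y i - y j); linarith
      rw [max_eq_right h1, mul_zero]
    simp only [hz, Finset.sum_const_zero]
    exact le_refl 0
  · set φ : Fin p → ℝ → ℝ := fun i => (Ioc (y i) (y i + u)).indicator 1 with hφ
    have hmeas : ∀ i : Fin p, MeasurableSet (Ioc (y i) (y i + u)) := fun i => measurableSet_Ioc
    have hprod : ∀ (i j : Fin p) (x : ℝ), φ i x * φ j x =
        (Ioc (y i) (y i + u) ∩ Ioc (y j) (y j + u)).indicator 1 x := by
      intro i j x
      simp only [hφ]
      rw [← Set.inter_indicator_mul]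
      simp [Set.indicator_apply]
    have hint : ∀ i j : Fin p, Integrable (fun x => φ i x * φ j x) := by
      intro i j
      have : Integrable ((Ioc (y i) (y i + u) ∩ Ioc (y j) (y j + u)).indicator
          (1 : ℝ → ℝ)) := by
        rw [integrable_indicator_iff ((hmeas i).inter (hmeas j))]
        exact integrableOn_const ((measure_mono Set.inter_subset_left).trans_lt
          measure_Ioc_lt_top).ne
      exact this.congr (Filter.Eventually.of_forall fun x => (hprod i j x).symm)
    have key : ∀ i j : Fin p, (∫ x : ℝ, φ i x * φ j x) = max (u - |y i - y j|) 0 := by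
      intro i j
      have : (fun x => φ i x * φ j x) =
          (Ioc (y i) (y i + u) ∩ Ioc (y j) (y j + u)).indicator 1 := funext (hprod i j)
      rw [this, MeasureTheory.integral_indicator_one ((hmeas i).inter (hmeas j)),
        Set.Ioc_inter_Ioc, Real.volume_real_Ioc]
      congr 1
      have h1 : (y i + u) ⊓ (y j + u) = y i ⊓ y j + u := min_add_add_right _ _ _
      rw [h1]
      linarith [max_sub_min_eq_abs' (y i) (y j)]
    have step1 : (∑ i : Fin p, ∑ j : Fin p, c i * c j * max (u - |y i - y j|) 0) =
        ∫ x : ℝ, ∑ i : Fin p, ∑ j : Fin p, c i * c j * (φ i x * φ j x) := by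
      rw [MeasureTheory.integral_finset_sum _ (fun i _ =>
        integrable_finset_sum _ (fun j _ => (hint i j).const_mul _))]
      refine Finset.sum_congr rfl fun i _ => ?_
      rw [MeasureTheory.integral_finset_sum _ (fun j _ => (hint i j).const_mul _)]
      refine Finset.sum_congr rfl fun j _ => ?_
      rw [MeasureTheory.integral_const_mul, key i j]
    have step2 : (∫ x : ℝ, ∑ i : Fin p, ∑ j : Fin p, c i * c j * (φ i x * φ j x)) =
        ∫ x : ℝ, (∑ i : Fin p, c i * φ i x) ^ 2 := by
      congr 1
      funext x
      rw [sq, Finset.sum_mul_sum]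
      refine Finset.sum_congr rfl fun i _ => Finset.sum_congr rfl fun j _ => by ring
    rw [step1, step2]
    exact MeasureTheory.integral_nonneg fun x => sq_nonneg _

lemma schur {p : ℕ} (y : Fin p → ℝ) (a : Fin p → Fin 2 → ℝ) (u m11 m12 m22 : ℝ)
    (h11 : 0 ≤ m11) (h22 : 0 ≤ m22) (hdet : m12 ^ 2 ≤ m11 * m22) :
    0 ≤ ∑ i : Fin p, ∑ j : Fin p, max (u - |y i - y j|) 0 *
      (m11 * (a i 0 * a j 0) + m12 * (a i 0 * a j 1 + a i 1 * a j 0) +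
        m22 * (a i 1 * a j 1)) := by
  set K : Fin p → Fin p → ℝ := fun i j => max (u - |y i - y j|) 0 with hK
  set t1 : ℝ := Real.sqrt m11 with ht1d
  set t2 : ℝ := Real.sqrt m22 with ht2d
  have ht1 : t1 ^ 2 = m11 := Real.sq_sqrt h11
  have ht2 : t2 ^ 2 = m22 := Real.sq_sqrt h22
  have ht1n : 0 ≤ t1 := Real.sqrt_nonneg _
  have ht2n : 0 ≤ t2 := Real.sqrt_nonneg _
  set P : ℝ := ∑ i : Fin p, ∑ j : Fin p, a i 0 * a j 0 * K i j with hP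
  set Q : ℝ := ∑ i : Fin p, ∑ j : Fin p, a i 1 * a j 1 * K i j with hQ
  set D : ℝ := ∑ i : Fin p, ∑ j : Fin p, (a i 0 * a j 1 + a i 1 * a j 0) * K i j with hD
  have expand : ∀ b1 b2 : ℝ,
      (∑ i : Fin p, ∑ j : Fin p, (b1 * a i 0 + b2 * a i 1) * (b1 * a j 0 + b2 * a j 1) * K i j)
        = b1 ^ 2 * P + b1 * b2 * D + b2 ^ 2 * Q := by
    intro b1 b2
    simp only [hP, hQ, hD, Finset.mul_sum, ← Finset.sum_add_distrib]
    refine Finset.sum_congr rfl fun i _ => Finset.sum_congr rfl fun j _ => by ring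
  have hplus : 0 ≤ t1 ^ 2 * P + t1 * t2 * D + t2 ^ 2 * Q := by
    rw [← expand t1 t2]
    exact kernel_psd y (fun i => t1 * a i 0 + t2 * a i 1) u
  have hminus : 0 ≤ t1 ^ 2 * P + t1 * -t2 * D + (-t2) ^ 2 * Q := by
    rw [← expand t1 (-t2)]
    exact kernel_psd y (fun i => t1 * a i 0 + (-t2) * a i 1) u
  have hgoal : (∑ i : Fin p, ∑ j : Fin p, K i j *
      (m11 * (a i 0 * a j 0) + m12 * (a i 0 * a j 1 + a i 1 * a j 0) +
        m22 * (a i 1 * a j 1))) = m11 * P + m12 * D + m22 * Q := by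
    simp only [hP, hQ, hD, Finset.mul_sum, ← Finset.sum_add_distrib]
    refine Finset.sum_congr rfl fun i _ => Finset.sum_congr rfl fun j _ => by ring
  rw [hgoal, ← ht1, ← ht2]
  have hw : m12 ^ 2 ≤ (t1 * t2) ^ 2 := by nlinarith
  have hwn : 0 ≤ t1 * t2 := mul_nonneg ht1n ht2n
  have hm1 : m12 ≤ t1 * t2 := by nlinarith
  have hm2 : -(t1 * t2) ≤ m12 := by nlinarith
  rcases le_total 0 D with hDpos | hDneg
  · have h5 : -(t1 * t2) * D ≤ m12 * D := mul_le_mul_of_nonneg_right hm2 hDpos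
    linarith
  · have h5 : t1 * t2 * D ≤ m12 * D := mul_le_mul_of_nonpos_right hm1 hDneg
    linarith

end BPEaux

open MeasureTheory

/-- Sufficient condition for positive definiteness of the bivariate powered exponential
model in `ℝ`. -/
theorem bivariate_powered_exponential_posDef_R1
    (σ1 σ2 s11 s12 s22 α11 α12 α22 ρ : ℝ)
    (hσ1 : 0 < σ1) (hσ2 : 0 < σ2)
    (hs11 : 0 < s11) (hs12 : 0 < s12) (hs22 : 0 < s22)
    (hα11 : α11 ∈ Ioc (0 : ℝ) 1) (hα22 : α22 ∈ Ioc (0 : ℝ) 1)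
    (hα12 : α12 ∈ Ioc (0 : ℝ) 2)
    (hρ : ρ ∈ Icc (-1 : ℝ) 1)
    (hρ2 : ρ ^ 2 ≤ α11 * α22 * s11 ^ α11 * s22 ^ α22 / (α12 ^ 2 * s12 ^ (2 * α12)) *
      sInf ((fun r : ℝ =>
          r ^ (α11 + α22 - 2 * α12) *
            Real.exp (2 * (s12 * r) ^ α12 - (s11 * r) ^ α11 - (s22 * r) ^ α22) *
            (q1 α11 s11 r * q1 α22 s22 r) / (q1 α12 s12 r) ^ 2) ''
        {r : ℝ | 0 < r ∧ q1 α12 s12 r ≠ 0})) :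
    PosDefIn 1 (fun r =>
      !![σ1 ^ 2 * Real.exp (-(s11 * r) ^ α11), ρ * σ1 * σ2 * Real.exp (-(s12 * r) ^ α12);
         ρ * σ1 * σ2 * Real.exp (-(s12 * r) ^ α12), σ2 ^ 2 * Real.exp (-(s22 * r) ^ α22)]) := by
  obtain ⟨ha11, ha11'⟩ := hα11
  obtain ⟨ha22, ha22'⟩ := hα22
  obtain ⟨ha12, ha12'⟩ := hα12
  -- Key pointwise inequality on the second derivatives
  have key : ∀ u : ℝ, 0 < u →
      ρ ^ 2 * BPEaux.gg α12 s12 u ^ 2 ≤ BPEaux.gg α11 s11 u * BPEaux.gg α22 s22 u := by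
    intro u hu
    by_cases hq : q1 α12 s12 u = 0
    · have h1 : BPEaux.gg α12 s12 u = 0 := by
        unfold BPEaux.gg; rw [hq, mul_zero]
      rw [h1]
      have h2 : 0 ≤ BPEaux.gg α11 s11 u := BPEaux.gg_nonneg ha11 ha11' hs11 hu
      have h3 : 0 ≤ BPEaux.gg α22 s22 u := BPEaux.gg_nonneg ha22 ha22' hs22 hu
      nlinarith
    · set S := ((fun r : ℝ =>
          r ^ (α11 + α22 - 2 * α12) *
            Real.exp (2 * (s12 * r) ^ α12 - (s11 * r) ^ α11 - (s22 * r) ^ α22) *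
            (q1 α11 s11 r * q1 α22 s22 r) / (q1 α12 s12 r) ^ 2) ''
        {r : ℝ | 0 < r ∧ q1 α12 s12 r ≠ 0}) with hS
      have hbdd : BddBelow S := by
        refine ⟨0, ?_⟩
        rintro z ⟨r, ⟨hr, -⟩, rfl⟩
        have hq11 : 0 ≤ q1 α11 s11 r := BPEaux.q1_nonneg ha11 ha11' (by positivity)
        have hq22 : 0 ≤ q1 α22 s22 r := BPEaux.q1_nonneg ha22 ha22' (by positivity)
        have h0 : (0:ℝ) ≤ r ^ (α11 + α22 - 2 * α12) := Real.rpow_nonneg hr.le _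
        positivity
      have hmem : (fun r : ℝ =>
          r ^ (α11 + α22 - 2 * α12) *
            Real.exp (2 * (s12 * r) ^ α12 - (s11 * r) ^ α11 - (s22 * r) ^ α22) *
            (q1 α11 s11 r * q1 α22 s22 r) / (q1 α12 s12 r) ^ 2) u ∈ S :=
        ⟨u, ⟨hu, hq⟩, rfl⟩
      have hEle := csInf_le hbdd hmem
      have hKpos : 0 < α11 * α22 * s11 ^ α11 * s22 ^ α22 / (α12 ^ 2 * s12 ^ (2 * α12)) := by
        have h1 : (0:ℝ) < s11 ^ α11 := Real.rpow_pos_of_pos hs11 _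
        have h2 : (0:ℝ) < s22 ^ α22 := Real.rpow_pos_of_pos hs22 _
        have h3 : (0:ℝ) < s12 ^ (2*α12) := Real.rpow_pos_of_pos hs12 _
        positivity
      have hρE : ρ ^ 2 ≤ α11 * α22 * s11 ^ α11 * s22 ^ α22 / (α12 ^ 2 * s12 ^ (2 * α12)) *
          (u ^ (α11 + α22 - 2 * α12) *
            Real.exp (2 * (s12 * u) ^ α12 - (s11 * u) ^ α11 - (s22 * u) ^ α22) *
            (q1 α11 s11 u * q1 α22 s22 u) / (q1 α12 s12 u) ^ 2) :=
        hρ2.trans (mul_le_mul_of_nonneg_left hEle hKpos.le)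
      -- abbreviations
      set K := α11 * α22 * s11 ^ α11 * s22 ^ α22 / (α12 ^ 2 * s12 ^ (2 * α12)) with hK
      set X := Real.exp (2 * (s12 * u) ^ α12 - (s11 * u) ^ α11 - (s22 * u) ^ α22) with hX
      have hq2 : (0:ℝ) < q1 α12 s12 u ^ 2 := by positivity
      have h6 : ρ ^ 2 * q1 α12 s12 u ^ 2 ≤
          K * (u ^ (α11 + α22 - 2 * α12) * X * (q1 α11 s11 u * q1 α22 s22 u)) := by
        have := mul_le_mul_of_nonneg_right hρE hq2.le
        calc ρ ^ 2 * q1 α12 s12 u ^ 2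
            ≤ K * (u ^ (α11 + α22 - 2 * α12) * X *
                (q1 α11 s11 u * q1 α22 s22 u) / q1 α12 s12 u ^ 2) * q1 α12 s12 u ^ 2 := this
          _ = K * (u ^ (α11 + α22 - 2 * α12) * X * (q1 α11 s11 u * q1 α22 s22 u)) := by
              field_simp
      have hstar : K * (u ^ (α11 + α22 - 2 * α12) * X) *
          (α12 * s12 ^ α12 * u ^ (α12 - 2) * Real.exp (-(s12 * u) ^ α12)) ^ 2 =
          (α11 * s11 ^ α11 * u ^ (α11 - 2) * Real.exp (-(s11 * u) ^ α11)) *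
          (α22 * s22 ^ α22 * u ^ (α22 - 2) * Real.exp (-(s22 * u) ^ α22)) := by
        have c1 : s12 ^ α12 * s12 ^ α12 = s12 ^ (2*α12) := by
          rw [← Real.rpow_add hs12]; congr 1; ring
        have c2 : u ^ (α11 + α22 - 2 * α12) * (u ^ (α12-2) * u ^ (α12-2))
            = u ^ (α11-2) * u ^ (α22-2) := by
          rw [← Real.rpow_add hu, ← Real.rpow_add hu, ← Real.rpow_add hu]
          congr 1; ring
        have c3 : X * (Real.exp (-(s12*u)^α12) * Real.exp (-(s12*u)^α12))
            = Real.exp (-(s11*u)^α11) * Real.exp (-(s22*u)^α22) := by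
          rw [hX, ← Real.exp_add, ← Real.exp_add, ← Real.exp_add]
          congr 1; ring
        have c4 : K * (α12 ^ 2 * s12 ^ (2*α12)) = α11 * α22 * s11 ^ α11 * s22 ^ α22 := by
          rw [hK]
          have hd : α12 ^ 2 * s12 ^ (2*α12) ≠ 0 := by
            have := Real.rpow_pos_of_pos hs12 (2*α12); positivity
          field_simp
        calc K * (u ^ (α11 + α22 - 2 * α12) * X) *
              (α12 * s12 ^ α12 * u ^ (α12 - 2) * Real.exp (-(s12 * u) ^ α12)) ^ 2
            = (K * (α12 ^ 2 * (s12 ^ α12 * s12 ^ α12))) *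
              (u ^ (α11 + α22 - 2 * α12) * (u ^ (α12-2) * u ^ (α12-2))) *
              (X * (Real.exp (-(s12*u)^α12) * Real.exp (-(s12*u)^α12))) := by ring
          _ = (α11 * α22 * s11 ^ α11 * s22 ^ α22) * (u ^ (α11-2) * u ^ (α22-2)) *
              (Real.exp (-(s11*u)^α11) * Real.exp (-(s22*u)^α22)) := by
              rw [c1, c2, c3, c4]
          _ = _ := by ring
      have hB2 : (0:ℝ) ≤ (α12 * s12 ^ α12 * u ^ (α12 - 2) * Real.exp (-(s12 * u) ^ α12)) ^ 2 :=
        sq_nonneg _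
      unfold BPEaux.gg
      calc ρ ^ 2 * (α12 * s12 ^ α12 * u ^ (α12 - 2) * Real.exp (-(s12 * u) ^ α12) *
              q1 α12 s12 u) ^ 2
          = (ρ ^ 2 * q1 α12 s12 u ^ 2) *
            (α12 * s12 ^ α12 * u ^ (α12 - 2) * Real.exp (-(s12 * u) ^ α12)) ^ 2 := by ring
        _ ≤ (K * (u ^ (α11 + α22 - 2 * α12) * X * (q1 α11 s11 u * q1 α22 s22 u))) *
            (α12 * s12 ^ α12 * u ^ (α12 - 2) * Real.exp (-(s12 * u) ^ α12)) ^ 2 :=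
            mul_le_mul_of_nonneg_right h6 hB2
        _ = (K * (u ^ (α11 + α22 - 2 * α12) * X) *
            (α12 * s12 ^ α12 * u ^ (α12 - 2) * Real.exp (-(s12 * u) ^ α12)) ^ 2) *
            (q1 α11 s11 u * q1 α22 s22 u) := by ring
        _ = (α11 * s11 ^ α11 * u ^ (α11 - 2) * Real.exp (-(s11 * u) ^ α11)) *
            (α22 * s22 ^ α22 * u ^ (α22 - 2) * Real.exp (-(s22 * u) ^ α22)) *
            (q1 α11 s11 u * q1 α22 s22 u) := by rw [hstar]
        _ = _ := by ring
  -- main argument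
  intro p x a
  have hnorm : ∀ i j : Fin p, ‖x i - x j‖ = |x i 0 - x j 0| := by
    intro i j
    rw [EuclideanSpace.norm_eq]
    simp [Fin.sum_univ_one, Real.norm_eq_abs, Real.sqrt_sq_eq_abs, abs_abs]
  set d : Fin p → Fin p → ℝ := fun i j => |x i 0 - x j 0| with hd
  have hdnn : ∀ i j, 0 ≤ d i j := fun i j => abs_nonneg _
  set φ : Fin p → Fin p → ℝ → ℝ := fun i j u =>
    σ1 ^ 2 * (a i 0 * a j 0) * (max (u - d i j) 0 * BPEaux.gg α11 s11 u) +
    ρ * σ1 * σ2 * (a i 0 * a j 1 + a i 1 * a j 0) * (max (u - d i j) 0 * BPEaux.gg α12 s12 u) +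
    σ2 ^ 2 * (a i 1 * a j 1) * (max (u - d i j) 0 * BPEaux.gg α22 s22 u) with hφ
  have hint11 : ∀ i j : Fin p, IntegrableOn
      (fun u => σ1 ^ 2 * (a i 0 * a j 0) * (max (u - d i j) 0 * BPEaux.gg α11 s11 u))
      (Ioi 0) := fun i j =>
    (BPEaux.integrable_term ha11 (ha11'.trans one_le_two) hs11 (hdnn i j)).const_mul _
  have hint12 : ∀ i j : Fin p, IntegrableOn
      (fun u => ρ * σ1 * σ2 * (a i 0 * a j 1 + a i 1 * a j 0) *
        (max (u - d i j) 0 * BPEaux.gg α12 s12 u)) (Ioi 0) := fun i j =>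
    (BPEaux.integrable_term ha12 ha12' hs12 (hdnn i j)).const_mul _
  have hint22 : ∀ i j : Fin p, IntegrableOn
      (fun u => σ2 ^ 2 * (a i 1 * a j 1) * (max (u - d i j) 0 * BPEaux.gg α22 s22 u))
      (Ioi 0) := fun i j =>
    (BPEaux.integrable_term ha22 (ha22'.trans one_le_two) hs22 (hdnn i j)).const_mul _
  have hintφ : ∀ i j : Fin p, IntegrableOn (φ i j) (Ioi 0) := fun i j =>
    ((hint11 i j).add (hint12 i j)).add (hint22 i j)
  have hrep : ∀ i j : Fin p,
      a i ⬝ᵥ (!![σ1 ^ 2 * Real.exp (-(s11 * ‖x i - x j‖) ^ α11),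
          ρ * σ1 * σ2 * Real.exp (-(s12 * ‖x i - x j‖) ^ α12);
          ρ * σ1 * σ2 * Real.exp (-(s12 * ‖x i - x j‖) ^ α12),
          σ2 ^ 2 * Real.exp (-(s22 * ‖x i - x j‖) ^ α22)]).mulVec (a j)
        = ∫ u in Ioi (0:ℝ), φ i j u := by
    intro i j
    have hdot : a i ⬝ᵥ (!![σ1 ^ 2 * Real.exp (-(s11 * ‖x i - x j‖) ^ α11),
          ρ * σ1 * σ2 * Real.exp (-(s12 * ‖x i - x j‖) ^ α12);
          ρ * σ1 * σ2 * Real.exp (-(s12 * ‖x i - x j‖) ^ α12),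
          σ2 ^ 2 * Real.exp (-(s22 * ‖x i - x j‖) ^ α22)]).mulVec (a j)
        = σ1 ^ 2 * (a i 0 * a j 0) * Real.exp (-(s11 * d i j) ^ α11) +
          ρ * σ1 * σ2 * (a i 0 * a j 1 + a i 1 * a j 0) * Real.exp (-(s12 * d i j) ^ α12) +
          σ2 ^ 2 * (a i 1 * a j 1) * Real.exp (-(s22 * d i j) ^ α22) := by
      rw [show d i j = ‖x i - x j‖ from (hnorm i j).symm]
      simp [dotProduct, Matrix.mulVec, Fin.sum_univ_two]
      try ring
    rw [hdot, ← BPEaux.repr ha11 (ha11'.trans one_le_two) hs11 (hdnn i j),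
      ← BPEaux.repr ha12 ha12' hs12 (hdnn i j),
      ← BPEaux.repr ha22 (ha22'.trans one_le_two) hs22 (hdnn i j),
      ← MeasureTheory.integral_const_mul, ← MeasureTheory.integral_const_mul,
      ← MeasureTheory.integral_const_mul,
      ← MeasureTheory.integral_add (hint11 i j) (hint12 i j)]
    have hAB : IntegrableOn (fun u =>
        σ1 ^ 2 * (a i 0 * a j 0) * (max (u - d i j) 0 * BPEaux.gg α11 s11 u) +
        ρ * σ1 * σ2 * (a i 0 * a j 1 + a i 1 * a j 0) *
          (max (u - d i j) 0 * BPEaux.gg α12 s12 u)) (Ioi 0) :=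
      (hint11 i j).add (hint12 i j)
    rw [← MeasureTheory.integral_add hAB (hint22 i j)]
  calc (0:ℝ) ≤ ∫ u in Ioi (0:ℝ), ∑ i : Fin p, ∑ j : Fin p, φ i j u := by
        refine MeasureTheory.setIntegral_nonneg measurableSet_Ioi (fun u hu => ?_)
        have hu0 : (0:ℝ) < u := hu
        have h11 : 0 ≤ σ1 ^ 2 * BPEaux.gg α11 s11 u :=
          mul_nonneg (sq_nonneg _) (BPEaux.gg_nonneg ha11 ha11' hs11 hu0)
        have h22 : 0 ≤ σ2 ^ 2 * BPEaux.gg α22 s22 u :=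
          mul_nonneg (sq_nonneg _) (BPEaux.gg_nonneg ha22 ha22' hs22 hu0)
        have hdet : (ρ * σ1 * σ2 * BPEaux.gg α12 s12 u) ^ 2 ≤
            (σ1 ^ 2 * BPEaux.gg α11 s11 u) * (σ2 ^ 2 * BPEaux.gg α22 s22 u) := by
          calc (ρ * σ1 * σ2 * BPEaux.gg α12 s12 u) ^ 2
              = σ1 ^ 2 * σ2 ^ 2 * (ρ ^ 2 * BPEaux.gg α12 s12 u ^ 2) := by ring
            _ ≤ σ1 ^ 2 * σ2 ^ 2 * (BPEaux.gg α11 s11 u * BPEaux.gg α22 s22 u) :=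
                mul_le_mul_of_nonneg_left (key u hu0) (by positivity)
            _ = (σ1 ^ 2 * BPEaux.gg α11 s11 u) * (σ2 ^ 2 * BPEaux.gg α22 s22 u) := by ring
        have hs := BPEaux.schur (fun i => x i 0) a u (σ1 ^ 2 * BPEaux.gg α11 s11 u)
          (ρ * σ1 * σ2 * BPEaux.gg α12 s12 u) (σ2 ^ 2 * BPEaux.gg α22 s22 u) h11 h22 hdet
        refine le_trans hs (le_of_eq ?_)
        refine Finset.sum_congr rfl fun i _ => Finset.sum_congr rfl fun j _ => ?_
        simp only [hφ, hd]
        ring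
    _ = ∑ i : Fin p, ∑ j : Fin p, ∫ u in Ioi (0:ℝ), φ i j u := by
        rw [MeasureTheory.integral_finset_sum _ (fun i _ =>
          MeasureTheory.integrable_finset_sum _ (fun j _ => hintφ i j))]
        exact Finset.sum_congr rfl fun i _ =>
          MeasureTheory.integral_finset_sum _ (fun j _ => hintφ i j)
    _ = ∑ i : Fin p, ∑ j : Fin p,
          a i ⬝ᵥ (!![σ1 ^ 2 * Real.exp (-(s11 * ‖x i - x j‖) ^ α11),
            ρ * σ1 * σ2 * Real.exp (-(s12 * ‖x i - x j‖) ^ α12);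
            ρ * σ1 * σ2 * Real.exp (-(s12 * ‖x i - x j‖) ^ α12),
            σ2 ^ 2 * Real.exp (-(s22 * ‖x i - x j‖) ^ α22)]).mulVec (a j) :=
        Finset.sum_congr rfl fun i _ => Finset.sum_congr rfl fun j _ => (hrep i j).symm
end
end

section
/- Let n ≥ 1 be a natural number and consider the bivariate powered exponential model C with parameters σ1, σ2 > 0, s11, s12, s22 > 0, α11, α22 ∈ (0,1], α12 ∈ (0,2], ρ ∈ [−1,1]. If α12 < (α11 + α22)/2 and C is positive definite in ℝⁿ, then ρ = 0. -/
open Matrix Set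

set_option maxHeartbeats 1000000

noncomputable section

lemma aux_exp_bounds (t : ℝ) (ht : 0 ≤ t) :
    t * Real.exp (-t) ≤ 1 - Real.exp (-t) ∧ 1 - Real.exp (-t) ≤ t := by
  have h1 := Real.add_one_le_exp (-t)
  have h2 := Real.add_one_le_exp t
  have h3 := Real.exp_pos (-t)
  have hprod : Real.exp (-t) * Real.exp t = 1 := by
    rw [← Real.exp_add]; simp
  constructor
  · nlinarith [h2, hprod, Real.exp_pos t]
  · linarith

/-- If `α12 < (α11 + α22)/2` then the bivariate powered exponential model is a valid
covariance model in `ℝⁿ` only for `ρ = 0`. -/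
theorem bivariate_powered_exponential_necessary
    (n : ℕ) (hn : 1 ≤ n)
    (σ1 σ2 s11 s12 s22 α11 α12 α22 ρ : ℝ)
    (hσ1 : 0 < σ1) (hσ2 : 0 < σ2)
    (hs11 : 0 < s11) (hs12 : 0 < s12) (hs22 : 0 < s22)
    (hα11 : α11 ∈ Ioc (0 : ℝ) 1) (hα22 : α22 ∈ Ioc (0 : ℝ) 1)
    (hα12 : α12 ∈ Ioc (0 : ℝ) 2)
    (hρ : ρ ∈ Icc (-1 : ℝ) 1)
    (hlt : α12 < (α11 + α22) / 2)
    (hpd : PosDefIn n (fun r =>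
      !![σ1 ^ 2 * Real.exp (-(s11 * r) ^ α11), ρ * σ1 * σ2 * Real.exp (-(s12 * r) ^ α12);
         ρ * σ1 * σ2 * Real.exp (-(s12 * r) ^ α12), σ2 ^ 2 * Real.exp (-(s22 * r) ^ α22)])) :
    ρ = 0 := by
  set ε : ℝ := α11 + α22 - 2 * α12 with hεdef
  have hε : 0 < ε := by simp only [hεdef]; linarith
  -- step 1 : two-point quadratic inequality
  have key : ∀ r : ℝ, 0 ≤ r → ∀ u : ℝ,
      0 ≤ (σ1 ^ 2 * (1 - Real.exp (-(s11 * r) ^ α11))) * (u * u)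
        + (2 * (ρ * σ1 * σ2 * (1 - Real.exp (-(s12 * r) ^ α12)))) * u
        + (σ2 ^ 2 * (1 - Real.exp (-(s22 * r) ^ α22))) := by
    intro r hr u
    set v : EuclideanSpace ℝ (Fin n) := r • EuclideanSpace.single (⟨0, hn⟩ : Fin n) 1 with hv
    have hnv : ‖v‖ = r := by
      rw [hv, norm_smul, EuclideanSpace.norm_single]
      simp [abs_of_nonneg hr]
    have h := hpd 2 ![0, v] ![![u, 1], ![-u, -1]]
    simp only [Fin.sum_univ_two] at h
    have h01 : ‖(![0, v] : Fin 2 → EuclideanSpace ℝ (Fin n)) 0 - ![0, v] 1‖ = r := by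
      simp [norm_neg, hnv]
    have h10 : ‖(![0, v] : Fin 2 → EuclideanSpace ℝ (Fin n)) 1 - ![0, v] 0‖ = r := by
      simp [hnv]
    have h00 : ‖(![0, v] : Fin 2 → EuclideanSpace ℝ (Fin n)) 0 - ![0, v] 0‖ = 0 := by simp
    have h11 : ‖(![0, v] : Fin 2 → EuclideanSpace ℝ (Fin n)) 1 - ![0, v] 1‖ = 0 := by simp
    rw [h01, h10, h00, h11] at h
    have hz11 : (s11 * (0:ℝ)) ^ α11 = 0 := by
      rw [mul_zero, Real.zero_rpow hα11.1.ne']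
    have hz12 : (s12 * (0:ℝ)) ^ α12 = 0 := by
      rw [mul_zero, Real.zero_rpow hα12.1.ne']
    have hz22 : (s22 * (0:ℝ)) ^ α22 = 0 := by
      rw [mul_zero, Real.zero_rpow hα22.1.ne']
    simp only [dotProduct, Matrix.mulVec, Fin.sum_univ_two, Matrix.cons_val_zero,
      Matrix.cons_val_one, Matrix.head_cons, Matrix.cons_val', Matrix.of_apply,
      Matrix.empty_val', Matrix.cons_val_fin_one, Matrix.head_fin_const,
      hz11, hz12, hz22, neg_zero, Real.exp_zero] at h
    ring_nf at h ⊢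
    linarith [h]
  -- eventually inequality
  have hev : ∀ᶠ r in nhdsWithin (0:ℝ) (Ioi 0),
      ρ ^ 2 * (s12 ^ α12) ^ 2 ≤ 9 * s11 ^ α11 * s22 ^ α22 * r ^ ε := by
    have hmem : Ioo (0:ℝ) (1 / s12) ∈ nhdsWithin (0:ℝ) (Ioi 0) :=
      Ioo_mem_nhdsGT_of_mem (Set.left_mem_Ico.mpr (by positivity))
    filter_upwards [hmem] with r hrI
    obtain ⟨hrpos, hrlt⟩ := hrI
    have hrnn : (0:ℝ) ≤ r := hrpos.le
    -- discriminant
    have hd := discrim_le_zero (key r hrnn)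
    rw [discrim] at hd
    set t11 := (s11 * r) ^ α11 with ht11
    set t12 := (s12 * r) ^ α12 with ht12
    set t22 := (s22 * r) ^ α22 with ht22
    have ht11nn : 0 ≤ t11 := Real.rpow_nonneg (by positivity) _
    have ht12nn : 0 ≤ t12 := Real.rpow_nonneg (by positivity) _
    have ht22nn : 0 ≤ t22 := Real.rpow_nonneg (by positivity) _
    have hb11 := aux_exp_bounds t11 ht11nn
    have hb12 := aux_exp_bounds t12 ht12nn
    have hb22 := aux_exp_bounds t22 ht22nn
    -- divide the discriminant inequality by σ1²σ2²
    have hq : ρ ^ 2 * (1 - Real.exp (-t12)) ^ 2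
        ≤ (1 - Real.exp (-t11)) * (1 - Real.exp (-t22)) := by
      nlinarith [hd, mul_pos (pow_pos hσ1 2) (pow_pos hσ2 2), pow_pos hσ1 2, pow_pos hσ2 2]
    -- exp(-t12) ≥ 1/3
    have ht12le1 : t12 ≤ 1 := by
      rw [ht12]
      apply Real.rpow_le_one (by positivity) _ hα12.1.le
      rw [mul_comm, ← le_div_iff₀ hs12]
      linarith
    have hexp13 : (1:ℝ)/3 ≤ Real.exp (-t12) := by
      have h1 : Real.exp (-1) ≤ Real.exp (-t12) := Real.exp_le_exp.mpr (by linarith)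
      have h2 : Real.exp 1 < 3 := lt_trans Real.exp_one_lt_d9 (by norm_num)
      have h3 : Real.exp (-1) * Real.exp 1 = 1 := by rw [← Real.exp_add]; simp
      nlinarith [Real.exp_pos (-1), Real.exp_pos 1]
    -- 1 - e12 ≥ t12/3
    have hlow : t12 / 3 ≤ 1 - Real.exp (-t12) := by
      have h4 := mul_le_mul_of_nonneg_left hexp13 ht12nn
      have h5 := hb12.1
      rw [mul_one_div] at h4
      linarith
    have h1me11 : 0 ≤ 1 - Real.exp (-t11) := by
      have := mul_nonneg ht11nn (Real.exp_pos (-t11)).le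
      linarith [hb11.1]
    have h1me22 : 0 ≤ 1 - Real.exp (-t22) := by
      have := mul_nonneg ht22nn (Real.exp_pos (-t22)).le
      linarith [hb22.1]
    -- main inequality: ρ² t12² ≤ 9 t11 t22
    have main : ρ ^ 2 * t12 ^ 2 ≤ 9 * (t11 * t22) := by
      have ha : (t12 / 3) ^ 2 ≤ (1 - Real.exp (-t12)) ^ 2 :=
        pow_le_pow_left₀ (by positivity) hlow 2
      have hb : ρ ^ 2 * (t12 / 3) ^ 2 ≤ ρ ^ 2 * (1 - Real.exp (-t12)) ^ 2 :=
        mul_le_mul_of_nonneg_left ha (sq_nonneg ρ)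
      have hc : (1 - Real.exp (-t11)) * (1 - Real.exp (-t22)) ≤ t11 * t22 :=
        mul_le_mul hb11.2 hb22.2 h1me22 ht11nn
      linarith [hb, hq, hc]
    -- rpow algebra
    have e1 : t12 = s12 ^ α12 * r ^ α12 := by rw [ht12, Real.mul_rpow hs12.le hrnn]
    have e2 : t11 = s11 ^ α11 * r ^ α11 := by rw [ht11, Real.mul_rpow hs11.le hrnn]
    have e3 : t22 = s22 ^ α22 * r ^ α22 := by rw [ht22, Real.mul_rpow hs22.le hrnn]
    have e4 : r ^ α11 * r ^ α22 = r ^ ε * (r ^ α12 * r ^ α12) := by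
      rw [← Real.rpow_add hrpos, ← Real.rpow_add hrpos, ← Real.rpow_add hrpos]
      congr 1
      simp only [hεdef]; ring
    have hp2 : (0:ℝ) < (r ^ α12) ^ 2 := by positivity
    have hA : ρ ^ 2 * (s12 ^ α12) ^ 2 * (r ^ α12) ^ 2
        ≤ (9 * s11 ^ α11 * s22 ^ α22 * r ^ ε) * (r ^ α12) ^ 2 := by
      calc ρ ^ 2 * (s12 ^ α12) ^ 2 * (r ^ α12) ^ 2 = ρ ^ 2 * t12 ^ 2 := by rw [e1]; ring
        _ ≤ 9 * (t11 * t22) := main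
        _ = 9 * s11 ^ α11 * s22 ^ α22 * (r ^ α11 * r ^ α22) := by rw [e2, e3]; ring
        _ = (9 * s11 ^ α11 * s22 ^ α22 * r ^ ε) * (r ^ α12) ^ 2 := by rw [e4]; ring
    exact le_of_mul_le_mul_right hA hp2
  -- limit
  have htend : Filter.Tendsto (fun r : ℝ => 9 * s11 ^ α11 * s22 ^ α22 * r ^ ε)
      (nhdsWithin (0:ℝ) (Ioi 0)) (nhds 0) := by
    have h0 : Filter.Tendsto (fun r : ℝ => r ^ ε) (nhdsWithin (0:ℝ) (Ioi 0)) (nhds 0) := by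
      have hc := (Real.continuousAt_rpow_const 0 ε (Or.inr hε.le)).continuousWithinAt
        (s := Ioi (0:ℝ))
      simpa [ContinuousWithinAt, Real.zero_rpow hε.ne'] using hc
    have := h0.const_mul (9 * s11 ^ α11 * s22 ^ α22)
    simpa [mul_comm] using this
  have hfin : ρ ^ 2 * (s12 ^ α12) ^ 2 ≤ 0 := ge_of_tendsto htend hev
  have hs12p : (0:ℝ) < s12 ^ α12 := Real.rpow_pos_of_pos hs12 _
  have hρ2 : ρ ^ 2 = 0 := by nlinarith [sq_nonneg ρ, hfin, pow_pos hs12p 2]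
  exact (pow_eq_zero_iff two_ne_zero).mp hρ2
end
end

section
/- Let n ≥ 1 be a natural number and consider the bivariate generalized Cauchy model C with parameters σ1, σ2 > 0, s11, s12, s22 > 0, α11, α22 ∈ (0,1], α12 ∈ (0,2], β11, β12, β22 > 0, ρ ∈ [−1,1]. If α12 < (α11 + α22)/2 and C is positive definite in ℝⁿ, then ρ = 0. -/
open Matrix Set

noncomputable section
set_option maxHeartbeats 1000000

lemma claimA {γ x : ℝ} (hγ : 0 < γ) (hx : 0 ≤ x) :
    1 - (1 + x) ^ (-γ) ≤ γ * x := by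
  have h1x : (0:ℝ) < 1 + x := by linarith
  rcases le_or_gt 1 γ with hγ1 | hγ1
  · have hs : (-1:ℝ) ≤ -x/(1+x) := by
      rw [neg_div, neg_le_neg_iff]
      exact (div_le_one h1x).2 (by linarith)
    have hb := one_add_mul_self_le_rpow_one_add hs hγ1
    have he : (1 + -x/(1+x)) = (1+x)⁻¹ := by field_simp; ring
    rw [he] at hb
    have : ((1+x)⁻¹) ^ γ = (1+x) ^ (-γ) := by
      rw [← Real.rpow_neg_one, ← Real.rpow_mul h1x.le]; norm_num
    rw [this] at hb
    have hdiv : γ * (x/(1+x)) ≤ γ * x := by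
      apply mul_le_mul_of_nonneg_left _ hγ.le
      rw [div_le_iff₀ h1x]; nlinarith
    have : 1 + γ * (-x/(1+x)) = 1 - γ * (x/(1+x)) := by ring_nf
    nlinarith [hb]
  · have hb := rpow_one_add_le_one_add_mul_self (by linarith : (-1:ℝ) ≤ x) hγ.le hγ1.le
    have hpos : (0:ℝ) < (1+x) ^ γ := Real.rpow_pos_of_pos h1x γ
    have hneg : (1+x) ^ (-γ) = ((1+x) ^ γ)⁻¹ := Real.rpow_neg h1x.le γ
    have h1 : (0:ℝ) < 1 + γ * x := by nlinarith
    have h2 : ((1+x) ^ γ)⁻¹ ≥ (1 + γ*x)⁻¹ := by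
      apply inv_anti₀ hpos hb
    have h3 : (1 + γ*x)⁻¹ ≥ 1 - γ*x := by
      have hinv : (1 + γ*x) * (1 + γ*x)⁻¹ = 1 := mul_inv_cancel₀ h1.ne'
      nlinarith [sq_nonneg (γ*x), h1, hinv, inv_pos.2 h1]
    rw [hneg]; linarith

lemma claimB {γ x : ℝ} (hγ : 0 < γ) (hx : 0 ≤ x) (hx1 : x ≤ 1) :
    (2 ^ (min γ 1) - 1) / 2 ^ γ * x ≤ 1 - (1 + x) ^ (-γ) := by
  set γ₀ := min γ 1 with hγ₀def
  have hγ₀pos : 0 < γ₀ := lt_min hγ one_pos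
  have hγ₀le : γ₀ ≤ γ := min_le_left _ _
  have h1x : (0:ℝ) < 1 + x := by linarith
  have step1 : 1 + (2 ^ γ₀ - 1) * x ≤ (1 + x) ^ γ₀ := by
    rcases le_or_gt 1 γ with h1 | h1
    · have : γ₀ = 1 := min_eq_right h1
      rw [this]; rw [Real.rpow_one, Real.rpow_one]; ring_nf; rfl
    · have hγ₀eq : γ₀ = γ := min_eq_left h1.le
      have hcc := (Real.strictConcaveOn_rpow hγ₀pos (hγ₀eq ▸ h1)).concaveOn
      have := hcc.2 (by norm_num : (1:ℝ) ∈ Ici (0:ℝ)) (by norm_num : (2:ℝ) ∈ Ici (0:ℝ))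
        (by linarith : 0 ≤ 1 - x) hx (by ring)
      simp only [smul_eq_mul] at this
      have he : (1 - x) * 1 + x * 2 = 1 + x := by ring
      rw [he, Real.one_rpow] at this
      linarith [this]
  have step2 : (1 + x) ^ γ₀ ≤ (1 + x) ^ γ :=
    Real.rpow_le_rpow_of_exponent_le (by linarith) hγ₀le
  have step3 : (1 + x) ^ γ ≤ 2 ^ γ :=
    Real.rpow_le_rpow h1x.le (by linarith) hγ.le
  have hD : (0:ℝ) < (1 + x) ^ γ := Real.rpow_pos_of_pos h1x γ
  have h2γ : (0:ℝ) < 2 ^ γ := Real.rpow_pos_of_pos two_pos γ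
  have hc0 : (0:ℝ) ≤ (2 ^ γ₀ - 1) := by
    have : (1:ℝ) ≤ 2 ^ γ₀ := Real.one_le_rpow one_le_two hγ₀pos.le
    linarith
  set D := (1 + x) ^ γ with hDdef
  have key : (2 ^ γ₀ - 1) / 2 ^ γ * x * D ≤ D - 1 := by
    have h1' : (2 ^ γ₀ - 1) / 2 ^ γ * x * D ≤ (2 ^ γ₀ - 1) / 2 ^ γ * x * 2 ^ γ := by
      apply mul_le_mul_of_nonneg_left step3 (by positivity)
    have h2' : (2 ^ γ₀ - 1) / 2 ^ γ * x * 2 ^ γ = (2 ^ γ₀ - 1) * x := by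
      field_simp
    linarith [step1, step2, h1', h2'.le]
  rw [Real.rpow_neg h1x.le]
  have hfin := mul_le_mul_of_nonneg_right key (inv_pos.2 hD).le
  have hcan : D * D⁻¹ = 1 := mul_inv_cancel₀ hD.ne'
  nlinarith [hfin, hcan, inv_pos.2 hD]

lemma aux_quad (n : ℕ) (hn : 1 ≤ n) (C : ℝ → Matrix (Fin 2) (Fin 2) ℝ)
    (hsym : ∀ r, (C r) 0 1 = (C r) 1 0)
    (hpd : PosDefIn n C)
    (r : ℝ) (hr : 0 ≤ r) (u : ℝ) :
    0 ≤ ((C 0) 0 0 - (C r) 0 0) * u^2 + 2*((C 0) 0 1 - (C r) 0 1)*u + ((C 0) 1 1 - (C r) 1 1) := by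
  have h := hpd 2 ![0, EuclideanSpace.single ⟨0, hn⟩ r] ![![u,1], ![-u,-1]]
  have e1 : ‖(0 : EuclideanSpace ℝ (Fin n)) - EuclideanSpace.single (⟨0, hn⟩ : Fin n) r‖ = r := by
    simp [EuclideanSpace.norm_single, abs_of_nonneg hr]
  have e2 : ‖EuclideanSpace.single (⟨0, hn⟩ : Fin n) r - (0 : EuclideanSpace ℝ (Fin n))‖ = r := by
    simp [EuclideanSpace.norm_single, abs_of_nonneg hr]
  simp only [Fin.sum_univ_two, Matrix.cons_val_zero, Matrix.cons_val_one, Matrix.head_cons,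
    sub_self, norm_zero, dotProduct, Matrix.mulVec, Fin.sum_univ_two] at h
  rw [e1, e2] at h
  rw [hsym 0, hsym r] at h ⊢
  ring_nf at h ⊢
  linarith

/-- If `α12 < (α11 + α22)/2` then the bivariate generalized Cauchy model is a valid
covariance model in `ℝⁿ` only for `ρ = 0`. -/
theorem bivariate_generalized_cauchy_necessary_alpha
    (n : ℕ) (hn : 1 ≤ n)
    (σ1 σ2 s11 s12 s22 α11 α12 α22 β11 β12 β22 ρ : ℝ)
    (hσ1 : 0 < σ1) (hσ2 : 0 < σ2)
    (hs11 : 0 < s11) (hs12 : 0 < s12) (hs22 : 0 < s22)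
    (hα11 : α11 ∈ Ioc (0 : ℝ) 1) (hα22 : α22 ∈ Ioc (0 : ℝ) 1)
    (hα12 : α12 ∈ Ioc (0 : ℝ) 2)
    (hβ11 : 0 < β11) (hβ12 : 0 < β12) (hβ22 : 0 < β22)
    (hρ : ρ ∈ Icc (-1 : ℝ) 1)
    (hlt : α12 < (α11 + α22) / 2)
    (hpd : PosDefIn n (fun r =>
      !![σ1 ^ 2 * (1 + (s11 * r) ^ α11) ^ (-(β11 / α11)),
         ρ * σ1 * σ2 * (1 + (s12 * r) ^ α12) ^ (-(β12 / α12));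
         ρ * σ1 * σ2 * (1 + (s12 * r) ^ α12) ^ (-(β12 / α12)),
         σ2 ^ 2 * (1 + (s22 * r) ^ α22) ^ (-(β22 / α22))])) :
    ρ = 0 := by
  obtain ⟨hα11p, hα11le⟩ := hα11
  obtain ⟨hα22p, hα22le⟩ := hα22
  obtain ⟨hα12p, hα12le⟩ := hα12
  set γ11 := β11 / α11 with hγ11def
  set γ22 := β22 / α22 with hγ22def
  set γ12 := β12 / α12 with hγ12def
  have hγ11 : 0 < γ11 := div_pos hβ11 hα11p
  have hγ22 : 0 < γ22 := div_pos hβ22 hα22p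
  have hγ12 : 0 < γ12 := div_pos hβ12 hα12p
  set f11 : ℝ → ℝ := fun r => (1 + (s11 * r) ^ α11) ^ (-γ11) with hf11def
  set f22 : ℝ → ℝ := fun r => (1 + (s22 * r) ^ α22) ^ (-γ22) with hf22def
  set f12 : ℝ → ℝ := fun r => (1 + (s12 * r) ^ α12) ^ (-γ12) with hf12def
  -- values at 0
  have h0 : ∀ s α γ : ℝ, 0 < α → (1 + (s * (0:ℝ)) ^ α) ^ (-γ) = 1 := by
    intro s α γ hα
    rw [mul_zero, Real.zero_rpow hα.ne', add_zero, Real.one_rpow]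
  -- quadratic form inequality
  have quad : ∀ r : ℝ, 0 ≤ r → ∀ u : ℝ,
      0 ≤ σ1^2 * (1 - f11 r) * u^2 + 2 * (ρ*σ1*σ2*(1 - f12 r)) * u + σ2^2 * (1 - f22 r) := by
    intro r hr u
    have h := aux_quad n hn _ (fun r => by simp) hpd r hr u
    simp only [Matrix.cons_val', Matrix.cons_val_zero, Matrix.cons_val_one, Matrix.head_cons,
      Matrix.empty_val', Matrix.cons_val_fin_one, Matrix.head_fin_const, Matrix.of_apply] at h
    rw [h0 s11 α11 γ11 hα11p, h0 s22 α22 γ22 hα22p, h0 s12 α12 γ12 hα12p] at h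
    have e : σ1 ^ 2 * 1 - σ1 ^ 2 * f11 r = σ1^2 * (1 - f11 r) := by ring
    nlinarith [h]
  -- discriminant inequality
  have key : ∀ r : ℝ, 0 ≤ r →
      ρ^2 * (1 - f12 r)^2 ≤ (1 - f11 r) * (1 - f22 r) := by
    intro r hr
    have hd := discrim_le_zero (a := σ1^2 * (1 - f11 r)) (b := 2 * (ρ*σ1*σ2*(1 - f12 r)))
      (c := σ2^2 * (1 - f22 r)) (fun u => by nlinarith [quad r hr u])
    rw [discrim] at hd
    nlinarith [hd, mul_pos (pow_pos hσ1 2) (pow_pos hσ2 2), sq_nonneg (σ1*σ2)]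
  -- constants
  set c12 := ((2:ℝ) ^ (min γ12 1) - 1) / 2 ^ γ12 with hc12def
  have hc12 : 0 < c12 := by
    apply div_pos _ (Real.rpow_pos_of_pos two_pos γ12)
    have : (1:ℝ) < 2 ^ (min γ12 1) :=
      Real.one_lt_rpow one_lt_two (lt_min hγ12 one_pos)
    linarith
  set ε := α11 + α22 - 2*α12 with hεdef
  have hε : 0 < ε := by simp only [hεdef]; linarith
  set K := γ11 * γ22 * s11 ^ α11 * s22 ^ α22 / (c12^2 * s12 ^ (2*α12)) with hKdef
  have hs12r : 0 < s12 ^ (2*α12) := Real.rpow_pos_of_pos hs12 _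
  have hK : 0 < K := by
    apply div_pos
    · have := Real.rpow_pos_of_pos hs11 α11
      have := Real.rpow_pos_of_pos hs22 α22
      positivity
    · positivity
  -- main estimate: for 0 < r with s12 * r ≤ 1, ρ^2 ≤ K * r ^ ε
  have est : ∀ r : ℝ, 0 < r → s12 * r ≤ 1 → ρ^2 ≤ K * r ^ ε := by
    intro r hr hsr
    have hx11 : (0:ℝ) ≤ (s11*r) ^ α11 := Real.rpow_nonneg (by positivity) _
    have hx22 : (0:ℝ) ≤ (s22*r) ^ α22 := Real.rpow_nonneg (by positivity) _
    have hx12 : (0:ℝ) ≤ (s12*r) ^ α12 := Real.rpow_nonneg (by positivity) _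
    have hx12le : (s12*r) ^ α12 ≤ 1 :=
      Real.rpow_le_one (by positivity) hsr hα12p.le
    have b11 : 1 - f11 r ≤ γ11 * (s11*r) ^ α11 := claimA hγ11 hx11
    have b22 : 1 - f22 r ≤ γ22 * (s22*r) ^ α22 := claimA hγ22 hx22
    have b12 : c12 * (s12*r) ^ α12 ≤ 1 - f12 r := claimB hγ12 hx12 hx12le
    have nn11 : 0 ≤ 1 - f11 r := by
      have : f11 r ≤ 1 := Real.rpow_le_one_of_one_le_of_nonpos (by linarith [hx11]) (by linarith)
      linarith
    have nn22 : 0 ≤ 1 - f22 r := by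
      have : f22 r ≤ 1 := Real.rpow_le_one_of_one_le_of_nonpos (by linarith [hx22]) (by linarith)
      linarith
    have sq12 : (c12 * (s12*r) ^ α12)^2 ≤ (1 - f12 r)^2 :=
      pow_le_pow_left₀ (by positivity) b12 2
    have prod : (1 - f11 r) * (1 - f22 r) ≤ (γ11 * (s11*r) ^ α11) * (γ22 * (s22*r) ^ α22) :=
      mul_le_mul b11 b22 nn22 (by positivity)
    have chain : ρ^2 * (c12 * (s12*r) ^ α12)^2 ≤ (γ11 * (s11*r) ^ α11) * (γ22 * (s22*r) ^ α22) := by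
      have h1 := key r hr.le
      nlinarith [sq_nonneg ρ, sq12]
    -- rpow algebra
    rw [Real.mul_rpow hs11.le hr.le, Real.mul_rpow hs22.le hr.le,
      Real.mul_rpow hs12.le hr.le] at chain
    have hrsplit : r ^ α11 * r ^ α22 = (r ^ α12)^2 * r ^ ε := by
      rw [sq, ← Real.rpow_add hr, ← Real.rpow_add hr, ← Real.rpow_add hr]
      congr 1; simp only [hεdef]; ring
    have hs12sq : (s12 ^ α12)^2 = s12 ^ (2*α12) := by
      rw [sq, ← Real.rpow_add hs12]; congr 1; ring
    have hrpos : (0:ℝ) < (r ^ α12)^2 := by positivity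
    have expand : ρ^2 * (c12^2 * s12 ^ (2*α12)) * (r ^ α12)^2
        ≤ (γ11 * γ22 * s11 ^ α11 * s22 ^ α22 * r ^ ε) * (r ^ α12)^2 := by
      calc ρ^2 * (c12^2 * s12 ^ (2*α12)) * (r ^ α12)^2
          = ρ^2 * (c12 * (s12 ^ α12 * r ^ α12))^2 := by rw [← hs12sq]; ring
        _ ≤ γ11 * (s11 ^ α11 * r ^ α11) * (γ22 * (s22 ^ α22 * r ^ α22)) := chain
        _ = (γ11 * γ22 * s11 ^ α11 * s22 ^ α22 * r ^ ε) * (r ^ α12)^2 := by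
            rw [show γ11 * (s11 ^ α11 * r ^ α11) * (γ22 * (s22 ^ α22 * r ^ α22))
              = γ11 * γ22 * s11 ^ α11 * s22 ^ α22 * (r ^ α11 * r ^ α22) by ring, hrsplit]; ring
    have hdiv := le_of_mul_le_mul_right expand hrpos
    rw [hKdef]
    rw [div_mul_eq_mul_div, le_div_iff₀ (by positivity)]
    calc ρ^2 * (c12^2 * s12 ^ (2*α12)) ≤ γ11 * γ22 * s11 ^ α11 * s22 ^ α22 * r ^ ε := hdiv
      _ = γ11 * γ22 * s11 ^ α11 * s22 ^ α22 * r ^ ε := rfl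
  -- conclude
  by_contra hρ0
  have hρ2 : 0 < ρ^2 := by positivity
  set r := min (1/s12) ((ρ^2/(2*K)) ^ (1/ε)) with hrdef
  have hr2pos : (0:ℝ) < (ρ^2/(2*K)) ^ (1/ε) := Real.rpow_pos_of_pos (by positivity) _
  have hrpos : 0 < r := lt_min (by positivity) hr2pos
  have hsr : s12 * r ≤ 1 := by
    have : r ≤ 1/s12 := min_le_left _ _
    rw [mul_comm, ← le_div_iff₀ hs12]
    exact this
  have hre : r ^ ε ≤ ρ^2/(2*K) := by
    have h1 : r ^ ε ≤ ((ρ^2/(2*K)) ^ (1/ε)) ^ ε :=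
      Real.rpow_le_rpow hrpos.le (min_le_right _ _) hε.le
    rwa [← Real.rpow_mul (by positivity), one_div, inv_mul_cancel₀ hε.ne', Real.rpow_one] at h1
  have hfinal := est r hrpos hsr
  have : K * r ^ ε ≤ K * (ρ^2/(2*K)) := mul_le_mul_of_nonneg_left hre hK.le
  have hKK : K * (ρ^2/(2*K)) = ρ^2/2 := by field_simp
  rw [hKK] at this
  linarith
end
end

section
/- Let n ≥ 1 be a natural number and consider the bivariate generalized Cauchy model C with parameters σ1, σ2 > 0, s11, s12, s22 > 0, α11, α22 ∈ (0,1], α12 ∈ (0,2], β11, β12, β22 > 0, ρ ∈ [−1,1]. If β12 < (β11 + β22)/2, β11 < n, β12 < n, β22 < n, and C is positive definite in ℝⁿ, then ρ = 0. -/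
open Matrix Set

noncomputable section

namespace BGC
open Finset Filter


/-- generalized Cauchy correlation -/
def gc (s α β r : ℝ) : ℝ := (1 + (s * r) ^ α) ^ (-(β / α))

variable {s α β : ℝ}

lemma base_pos (hs : 0 ≤ s) {r : ℝ} (hr : 0 ≤ r) : (0:ℝ) < 1 + (s * r) ^ α := by
  nlinarith [Real.rpow_nonneg (mul_nonneg hs hr) α]

lemma gc_pos (hs : 0 ≤ s) {r : ℝ} (hr : 0 ≤ r) : 0 < gc s α β r :=
  Real.rpow_pos_of_pos (base_pos hs hr) _

lemma gc_le_one (hs : 0 ≤ s) (hαβ : 0 ≤ β / α) {r : ℝ} (hr : 0 ≤ r) : gc s α β r ≤ 1 :=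
  Real.rpow_le_one_of_one_le_of_nonpos
    (by nlinarith [Real.rpow_nonneg (mul_nonneg hs hr) α]) (by linarith)

lemma gc_anti (hs : 0 ≤ s) (hα : 0 < α) (hβ : 0 ≤ β) {r₁ r₂ : ℝ} (h0 : 0 ≤ r₁) (h : r₁ ≤ r₂) :
    gc s α β r₂ ≤ gc s α β r₁ := by
  apply Real.rpow_le_rpow_of_nonpos (base_pos hs h0)
  · have : (s*r₁) ^ α ≤ (s*r₂) ^ α :=
      Real.rpow_le_rpow (mul_nonneg hs h0) (by nlinarith) hα.le
    linarith
  · have : 0 ≤ β / α := div_nonneg hβ hα.le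
    linarith

lemma gc_le (hs : 0 < s) (hα : 0 < α) (hβ : 0 < β) {r : ℝ} (hr : 0 < r) :
    gc s α β r ≤ (s * r) ^ (-β) := by
  have hsr : 0 < s * r := mul_pos hs hr
  have h1 : ((s*r) ^ α) ^ (-(β/α)) = (s*r) ^ (-β) := by
    rw [← Real.rpow_mul hsr.le]
    congr 1
    field_simp
  calc gc s α β r ≤ ((s*r) ^ α) ^ (-(β/α)) := by
        apply Real.rpow_le_rpow_of_nonpos (Real.rpow_pos_of_pos hsr α) (by linarith)
        have : 0 ≤ β / α := le_of_lt (div_pos hβ hα)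
        linarith
    _ = _ := h1

lemma le_gc (hs : 0 < s) (hα : 0 < α) (hβ : 0 < β) {r : ℝ} (hr : 0 ≤ r) (h1 : 1 ≤ s * r) :
    2 ^ (-(β/α)) * (s * r) ^ (-β) ≤ gc s α β r := by
  have hsr : 0 < s * r := by linarith
  have hx : 1 ≤ (s*r) ^ α := Real.one_le_rpow h1 hα.le
  have h2 : (2 * (s*r) ^ α) ^ (-(β/α)) = 2 ^ (-(β/α)) * (s * r) ^ (-β) := by
    rw [Real.mul_rpow (by norm_num) (Real.rpow_nonneg hsr.le α), ← Real.rpow_mul hsr.le]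
    congr 2
    field_simp
  rw [← h2]
  apply Real.rpow_le_rpow_of_nonpos (base_pos hs.le hr) (by linarith)
  have : 0 ≤ β / α := le_of_lt (div_pos hβ hα)
  linarith

lemma bernoulli_aux {p y : ℝ} (hp0 : 0 ≤ p) (hp1 : p ≤ 1) (hy : 0 ≤ y) :
    y ^ p ≤ p * y + (1 - p) := by
  have h := Real.geom_mean_le_arith_mean2_weighted (w₁ := p) (w₂ := 1 - p) (p₁ := y)
    (p₂ := 1) hp0 (by linarith) hy zero_le_one (by ring)
  simpa using h

lemma sum_rpow_neg_le {θ : ℝ} (hθ0 : 0 < θ) (hθ1 : θ < 1) (m : ℕ) :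
    ∑ u ∈ Finset.range m, ((u : ℝ) + 1) ^ (-θ) ≤ (m : ℝ) ^ (1 - θ) / (1 - θ) := by
  induction m with
  | zero => simp [Real.zero_rpow (by linarith : (1:ℝ)-θ ≠ 0)]
  | succ m ih =>
    rw [Finset.sum_range_succ]
    set p := 1 - θ with hp
    set a : ℝ := (m:ℝ) + 1 with ha
    have ha1 : (1:ℝ) ≤ a := by
      have := Nat.cast_nonneg (α := ℝ) m; linarith
    have ha0 : (0:ℝ) < a := by linarith
    have key : (1 - θ) * a ^ (-θ) ≤ a ^ p - ((m:ℝ)) ^ p := by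
      have hy : (0:ℝ) ≤ (a - 1)/a := by
        apply div_nonneg <;> linarith
      have hb := bernoulli_aux (by linarith : (0:ℝ) ≤ p) (by linarith : p ≤ 1) hy
      have hval : (a - 1) / a * a = (m:ℝ) := by rw [ha]; field_simp; ring
      have hsplit : ((m:ℝ)) ^ p = ((a-1)/a) ^ p * a ^ p := by
        rw [← Real.mul_rpow hy ha0.le, hval]
      have hpa : a ^ (-θ) = a ^ p / a := by
        rw [hp]
        rw [show (1 : ℝ) - θ = -θ + 1 by ring, Real.rpow_add ha0, Real.rpow_one]
        field_simp
      have hap : 0 < a ^ p := Real.rpow_pos_of_pos ha0 p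
      have hmul : ((a-1)/a) ^ p * a ^ p ≤ (p * ((a-1)/a) + (1 - p)) * a ^ p := by
        nlinarith
      rw [hsplit, hpa]
      have : (p * ((a-1)/a) + (1 - p)) * a ^ p = a ^ p - p * (a ^ p / a) := by
        field_simp
        ring
      rw [this] at hmul
      have hpθ : p = 1 - θ := hp
      nlinarith
    have hcast : ((m:ℝ) + 1) = a := rfl
    have hcast2 : ((m+1 : ℕ) : ℝ) = a := by push_cast [ha]; ring
    rw [hcast2]
    have : a ^ p / (1-θ) - (m:ℝ) ^ p / (1-θ) ≥ a ^ (-θ) := by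
      rw [div_sub_div_same]
      rw [ge_iff_le, le_div_iff₀ (by linarith : (0:ℝ) < 1 - θ)]
      linarith [key]
    push_cast
    linarith [ih]



lemma oneD_sum_le {θ : ℝ} (hθ0 : 0 < θ) (hθ1 : θ < 1) (m k : ℕ) (hm : 1 ≤ m) (hk : k < m)
    (hrec : ∑ u ∈ Finset.range m, ((u : ℝ) + 1) ^ (-θ) ≤ (m : ℝ) ^ (1 - θ) / (1 - θ)) :
    ∑ t ∈ Finset.range m, (max |(t:ℝ) - (k:ℝ)| 1) ^ (-θ) ≤ (2 + 2/(1-θ)) * (m:ℝ) ^ (1-θ) := by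
  set h : ℕ → ℝ := fun u => (max (u:ℝ) 1) ^ (-θ) with hh
  have hnn : ∀ u : ℕ, 0 ≤ h u := fun u => Real.rpow_nonneg (le_trans zero_le_one (le_max_right _ _)) _
  have hB : ∑ u ∈ Finset.range (m+1), h u ≤ 1 + (m:ℝ) ^ (1-θ) / (1-θ) := by
    rw [Finset.sum_range_succ']
    have h0 : h 0 = 1 := by simp [hh]
    have hsucc : ∀ u : ℕ, h (u+1) = ((u:ℝ)+1) ^ (-θ) := by
      intro u
      simp only [hh]
      congr 1
      rw [max_eq_left]
      · push_cast; ring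
      · push_cast; linarith [Nat.cast_nonneg (α := ℝ) u]
    simp only [hsucc, h0]
    linarith [hrec]
  -- split into t ≤ k and t > k
  have hsplit := Finset.sum_filter_add_sum_filter_not (Finset.range m) (fun t => t ≤ k)
      (fun t => (max |(t:ℝ) - (k:ℝ)| 1) ^ (-θ))
  have hpart : ∀ (s : Finset ℕ) (g : ℕ → ℕ), (Set.InjOn g s) → (∀ t ∈ s, g t < m + 1) →
      (∀ t ∈ s, (max |(t:ℝ) - (k:ℝ)| 1) ^ (-θ) = h (g t)) →
      ∑ t ∈ s, (max |(t:ℝ) - (k:ℝ)| 1) ^ (-θ) ≤ ∑ u ∈ Finset.range (m+1), h u := by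
    intro s g hinj hlt heq
    rw [Finset.sum_congr rfl heq]
    rw [← Finset.sum_image (f := h) (g := g) (by intro x hx y hy hxy; exact hinj hx hy hxy)]
    apply Finset.sum_le_sum_of_subset_of_nonneg
    · intro u hu
      rw [Finset.mem_image] at hu
      obtain ⟨t, ht, rfl⟩ := hu
      exact Finset.mem_range.mpr (hlt t ht)
    · intro u _ _; exact hnn u
  have h1 : ∑ t ∈ (Finset.range m).filter (fun t => t ≤ k), (max |(t:ℝ) - (k:ℝ)| 1) ^ (-θ)
      ≤ ∑ u ∈ Finset.range (m+1), h u := by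
    apply hpart _ (fun t => k - t)
    · intro x hx y hy hxy
      simp only [Finset.mem_coe, Finset.mem_filter] at hx hy
      dsimp only at hxy
      omega
    · intro t ht; simp only [Finset.mem_filter] at ht; omega
    · intro t ht
      simp only [Finset.mem_filter, Finset.mem_range] at ht
      have htk : (t:ℝ) ≤ (k:ℝ) := by exact_mod_cast ht.2
      simp only [hh]
      congr 2
      rw [Nat.cast_sub ht.2, abs_sub_comm, abs_of_nonneg (by linarith : (0:ℝ) ≤ (k:ℝ) - (t:ℝ))]
  have h2 : ∑ t ∈ (Finset.range m).filter (fun t => ¬ t ≤ k), (max |(t:ℝ) - (k:ℝ)| 1) ^ (-θ)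
      ≤ ∑ u ∈ Finset.range (m+1), h u := by
    apply hpart _ (fun t => t - k)
    · intro x hx y hy hxy
      simp only [Finset.mem_coe, Finset.mem_filter] at hx hy
      dsimp only at hxy
      omega
    · intro t ht; simp only [Finset.mem_filter, Finset.mem_range] at ht; omega
    · intro t ht
      simp only [Finset.mem_filter, Finset.mem_range, not_le] at ht
      have htk : (k:ℝ) ≤ (t:ℝ) := by exact_mod_cast ht.2.le
      simp only [hh]
      congr 2
      rw [Nat.cast_sub ht.2.le, abs_of_nonneg (by linarith : (0:ℝ) ≤ (t:ℝ) - (k:ℝ))]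
  have hm1 : (1:ℝ) ≤ (m:ℝ) ^ (1-θ) := by
    apply Real.one_le_rpow (by exact_mod_cast hm) (by linarith)
  have hθp : (0:ℝ) < 1 - θ := by linarith
  calc ∑ t ∈ Finset.range m, (max |(t:ℝ) - (k:ℝ)| 1) ^ (-θ)
      ≤ 2 * (1 + (m:ℝ) ^ (1-θ) / (1-θ)) := by
        rw [← hsplit]; linarith [h1, h2, hB]
    _ ≤ (2 + 2/(1-θ)) * (m:ℝ) ^ (1-θ) := by
        have e : (2 + 2/(1-θ)) * (m:ℝ)^(1-θ)
            = 2*(m:ℝ)^(1-θ) + 2*((m:ℝ)^(1-θ)/(1-θ)) := by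
          field_simp
        rw [e]
        linarith
  


def gridPt (n m : ℕ) (k : Fin n → Fin m) : EuclideanSpace ℝ (Fin n) :=
  (WithLp.equiv 2 (Fin n → ℝ)).symm (fun d => ((k d : ℕ) : ℝ))

variable {n m : ℕ}

lemma gridPt_apply (k : Fin n → Fin m) (d : Fin n) : gridPt n m k d = ((k d : ℕ) : ℝ) := rfl

lemma gridPt_sub_apply (k l : Fin n → Fin m) (d : Fin n) :
    (gridPt n m k - gridPt n m l) d = ((k d : ℕ) : ℝ) - ((l d : ℕ) : ℝ) := rfl

lemma dist_le (k l : Fin n → Fin m) : ‖gridPt n m k - gridPt n m l‖ ≤ Real.sqrt n * m := by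
  rw [EuclideanSpace.norm_eq]
  have hb : ∀ d, ‖(gridPt n m k - gridPt n m l) d‖ ^ 2 ≤ (m:ℝ)^2 := by
    intro d
    rw [gridPt_sub_apply]
    have h1 : ((k d : ℕ) : ℝ) < m := by exact_mod_cast (k d).2
    have h2 : ((l d : ℕ) : ℝ) < m := by exact_mod_cast (l d).2
    have h3 : (0:ℝ) ≤ ((k d : ℕ) : ℝ) := Nat.cast_nonneg _
    have h4 : (0:ℝ) ≤ ((l d : ℕ) : ℝ) := Nat.cast_nonneg _
    rw [Real.norm_eq_abs, sq_abs]
    nlinarith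
  calc Real.sqrt (∑ d, ‖(gridPt n m k - gridPt n m l) d‖ ^ 2)
      ≤ Real.sqrt (∑ _d : Fin n, (m:ℝ)^2) := by
        apply Real.sqrt_le_sqrt
        exact Finset.sum_le_sum (fun d _ => hb d)
    _ = Real.sqrt n * m := by
        rw [Finset.sum_const, Finset.card_univ, Fintype.card_fin, nsmul_eq_mul,
          Real.sqrt_mul (Nat.cast_nonneg n), Real.sqrt_sq (Nat.cast_nonneg m)]

lemma coord_le_dist (k l : Fin n → Fin m) (d : Fin n) :
    |((k d : ℕ) : ℝ) - ((l d : ℕ) : ℝ)| ≤ ‖gridPt n m k - gridPt n m l‖ := by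
  rw [EuclideanSpace.norm_eq]
  have : |((k d : ℕ) : ℝ) - ((l d : ℕ) : ℝ)| = Real.sqrt (‖(gridPt n m k - gridPt n m l) d‖^2) := by
    rw [Real.sqrt_sq_eq_abs, Real.norm_eq_abs, abs_abs, gridPt_sub_apply]
  rw [this]
  apply Real.sqrt_le_sqrt
  apply Finset.single_le_sum (f := fun d => ‖(gridPt n m k - gridPt n m l) d‖^2)
    (fun i _ => sq_nonneg _) (Finset.mem_univ d)

lemma one_le_dist {k l : Fin n → Fin m} (hkl : k ≠ l) :
    1 ≤ ‖gridPt n m k - gridPt n m l‖ := by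
  obtain ⟨d, hd⟩ : ∃ d, k d ≠ l d := by
    by_contra h
    push_neg at h
    exact hkl (funext h)
  refine le_trans ?_ (coord_le_dist k l d)
  have hne : ((k d : ℕ) : ℤ) ≠ ((l d : ℕ) : ℤ) := by
    intro h
    exact hd (Fin.val_injective (by exact_mod_cast h))
  have h1 : 1 ≤ |((k d : ℕ) : ℤ) - ((l d : ℕ) : ℤ)| := by
    rcases lt_or_gt_of_ne hne with h | h
    · rw [abs_of_neg (by omega : ((k d : ℕ) : ℤ) - ((l d : ℕ) : ℤ) < 0)]; omega
    · rw [abs_of_pos (by omega : 0 < ((k d : ℕ) : ℤ) - ((l d : ℕ) : ℤ))]; omega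
  have : (1:ℝ) ≤ |(((k d : ℕ) : ℤ) : ℝ) - (((l d : ℕ) : ℤ) : ℝ)| := by
    rw [← Int.cast_sub, ← Int.cast_abs]
    exact_mod_cast h1
  exact_mod_cast this


-- grid sums

lemma grid_sum_lower {n m : ℕ} {s α β : ℝ} (hs : 0 < s) (hα : 0 < α) (hβ : 0 < β)
    (hbig : 1 ≤ s * (Real.sqrt n * m)) :
    ((m:ℝ)^(n:ℕ))^2 * (2 ^ (-(β/α)) * (s * (Real.sqrt n * m)) ^ (-β)) ≤
      ∑ k : Fin n → Fin m, ∑ l : Fin n → Fin m, gc s α β ‖gridPt n m k - gridPt n m l‖ := by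
  have hr0 : (0:ℝ) ≤ Real.sqrt n * m := by positivity
  have hterm : ∀ k l : Fin n → Fin m,
      2 ^ (-(β/α)) * (s * (Real.sqrt n * m)) ^ (-β) ≤ gc s α β ‖gridPt n m k - gridPt n m l‖ := by
    intro k l
    calc 2 ^ (-(β/α)) * (s * (Real.sqrt n * m)) ^ (-β)
        ≤ gc s α β (Real.sqrt n * m) := le_gc hs hα hβ hr0 hbig
      _ ≤ gc s α β ‖gridPt n m k - gridPt n m l‖ := by
          apply gc_anti hs.le hα hβ.le (norm_nonneg _) (dist_le k l)
  calc ((m:ℝ)^(n:ℕ))^2 * (2 ^ (-(β/α)) * (s * (Real.sqrt n * m)) ^ (-β))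
      = ∑ _k : Fin n → Fin m, ∑ _l : Fin n → Fin m,
          2 ^ (-(β/α)) * (s * (Real.sqrt n * m)) ^ (-β) := by
        rw [Finset.sum_const, Finset.sum_const, Finset.card_univ, Fintype.card_fun,
          Fintype.card_fin, Fintype.card_fin, nsmul_eq_mul, nsmul_eq_mul]
        push_cast
        ring
    _ ≤ _ := Finset.sum_le_sum (fun k _ => Finset.sum_le_sum (fun l _ => hterm k l))

lemma grid_sum_upper {n m : ℕ} {s α β : ℝ} (hn : 1 ≤ n) (hm : 1 ≤ m)
    (hs : 0 < s) (hα : 0 < α) (hβ : 0 < β) (hβn : β < n) :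
    ∑ k : Fin n → Fin m, ∑ l : Fin n → Fin m, gc s α β ‖gridPt n m k - gridPt n m l‖ ≤
      ((m:ℝ)^(n:ℕ))^2 * ((1 + s^(-β) * (2 + 2/(1-β/n))^(n:ℕ)) * (m:ℝ)^(-β)) := by
  have hn0 : (0:ℝ) < n := by exact_mod_cast hn
  have hm0 : (0:ℝ) < m := by exact_mod_cast hm
  set θ : ℝ := β / n with hθ
  have hθ0 : 0 < θ := div_pos hβ hn0
  have hθ1 : θ < 1 := (div_lt_one hn0).mpr hβn
  set E : ℝ := 2 + 2/(1-θ) with hE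
  have h1θ : 0 < 1 - θ := by linarith
  have hE0 : 0 < E := by
    rw [hE]
    positivity
  -- inner bound for fixed k
  have inner : ∀ k : Fin n → Fin m,
      ∑ l : Fin n → Fin m, gc s α β ‖gridPt n m k - gridPt n m l‖
        ≤ 1 + s^(-β) * (E * (m:ℝ)^(1-θ))^(n:ℕ) := by
    intro k
    have hsplit := Finset.sum_erase_add Finset.univ
      (fun l => gc s α β ‖gridPt n m k - gridPt n m l‖) (Finset.mem_univ k)
    have hdiag : gc s α β ‖gridPt n m k - gridPt n m k‖ ≤ 1 := by
      apply gc_le_one hs.le (le_of_lt (div_pos hβ hα)) (norm_nonneg _)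
    -- off-diagonal bound
    have hoff : ∑ l ∈ Finset.univ.erase k, gc s α β ‖gridPt n m k - gridPt n m l‖
        ≤ s^(-β) * (E * (m:ℝ)^(1-θ))^(n:ℕ) := by
      have hterm : ∀ l ∈ Finset.univ.erase k,
          gc s α β ‖gridPt n m k - gridPt n m l‖
            ≤ s^(-β) * ∏ d, (max |((k d : ℕ):ℝ) - ((l d : ℕ):ℝ)| 1) ^ (-θ) := by
        intro l hl
        have hkl : l ≠ k := Finset.ne_of_mem_erase hl
        set r : ℝ := ‖gridPt n m k - gridPt n m l‖ with hrdef
        have hr1 : 1 ≤ r := one_le_dist (fun h => hkl h.symm)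
        have hr0 : 0 < r := by linarith
        -- product of maxes ≤ r^n
        have hfac : ∀ d : Fin n, max |((k d : ℕ):ℝ) - ((l d : ℕ):ℝ)| 1 ≤ r :=
          fun d => max_le (coord_le_dist k l d) hr1
        have hfacpos : ∀ d : Fin n, (0:ℝ) < max |((k d : ℕ):ℝ) - ((l d : ℕ):ℝ)| 1 :=
          fun d => lt_of_lt_of_le one_pos (le_max_right _ _)
        have hprod : ∏ d, max |((k d : ℕ):ℝ) - ((l d : ℕ):ℝ)| 1 ≤ r ^ (n:ℕ) := by
          calc ∏ d, max |((k d : ℕ):ℝ) - ((l d : ℕ):ℝ)| 1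
              ≤ ∏ _d : Fin n, r := Finset.prod_le_prod (fun d _ => (hfacpos d).le)
                (fun d _ => hfac d)
            _ = r ^ (n:ℕ) := by rw [Finset.prod_const, Finset.card_univ, Fintype.card_fin]
        have hprodpos : 0 < ∏ d, max |((k d : ℕ):ℝ) - ((l d : ℕ):ℝ)| 1 :=
          Finset.prod_pos (fun d _ => hfacpos d)
        have hrn : r ^ (-β) ≤ (∏ d, max |((k d : ℕ):ℝ) - ((l d : ℕ):ℝ)| 1) ^ (-θ) := by
          have h1 : r ^ (-β) = (r ^ (n:ℕ)) ^ (-θ) := by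
            rw [← Real.rpow_natCast r n, ← Real.rpow_mul hr0.le]
            congr 1
            rw [hθ]
            field_simp
          rw [h1]
          exact Real.rpow_le_rpow_of_nonpos hprodpos hprod (by linarith)
        have hsplitprod : (∏ d, max |((k d : ℕ):ℝ) - ((l d : ℕ):ℝ)| 1) ^ (-θ)
            = ∏ d, (max |((k d : ℕ):ℝ) - ((l d : ℕ):ℝ)| 1) ^ (-θ) :=
          (Real.finset_prod_rpow _ _ (fun d _ => (hfacpos d).le) _).symm
        calc gc s α β r ≤ (s*r) ^ (-β) := gc_le hs hα hβ hr0
          _ = s^(-β) * r^(-β) := Real.mul_rpow hs.le hr0.le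
          _ ≤ s^(-β) * ∏ d, (max |((k d : ℕ):ℝ) - ((l d : ℕ):ℝ)| 1) ^ (-θ) := by
              rw [← hsplitprod]
              exact mul_le_mul_of_nonneg_left hrn (Real.rpow_nonneg hs.le _)
      calc ∑ l ∈ Finset.univ.erase k, gc s α β ‖gridPt n m k - gridPt n m l‖
          ≤ ∑ l ∈ Finset.univ.erase k,
              s^(-β) * ∏ d, (max |((k d : ℕ):ℝ) - ((l d : ℕ):ℝ)| 1) ^ (-θ) :=
            Finset.sum_le_sum hterm
        _ ≤ ∑ l : Fin n → Fin m,
              s^(-β) * ∏ d, (max |((k d : ℕ):ℝ) - ((l d : ℕ):ℝ)| 1) ^ (-θ) := by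
            apply Finset.sum_le_sum_of_subset_of_nonneg (Finset.subset_univ _)
            intro l _ _
            apply mul_nonneg (Real.rpow_nonneg hs.le _)
            exact Finset.prod_nonneg (fun d _ => Real.rpow_nonneg
              (le_trans zero_le_one (le_max_right _ _)) _)
        _ = s^(-β) * ∑ l : Fin n → Fin m,
              ∏ d, (max |((k d : ℕ):ℝ) - ((l d : ℕ):ℝ)| 1) ^ (-θ) := by
            rw [Finset.mul_sum]
        _ ≤ s^(-β) * (E * (m:ℝ)^(1-θ))^(n:ℕ) := by
            apply mul_le_mul_of_nonneg_left _ (Real.rpow_nonneg hs.le _)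
            -- Fubini: sum of products = product of sums
            have hfub : ∑ l : Fin n → Fin m,
                ∏ d, (max |((k d : ℕ):ℝ) - ((l d : ℕ):ℝ)| 1) ^ (-θ)
                = ∏ d, ∑ t : Fin m, (max |((t : ℕ):ℝ) - ((k d : ℕ):ℝ)| 1) ^ (-θ) := by
              rw [Finset.prod_univ_sum]
              rw [Fintype.piFinset_univ]
              apply Finset.sum_congr rfl
              intro l _
              apply Finset.prod_congr rfl
              intro d _
              rw [abs_sub_comm]
            rw [hfub]
            calc ∏ d, ∑ t : Fin m, (max |((t : ℕ):ℝ) - ((k d : ℕ):ℝ)| 1) ^ (-θ)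
                ≤ ∏ _d : Fin n, E * (m:ℝ)^(1-θ) := by
                  apply Finset.prod_le_prod
                  · intro d _
                    apply Finset.sum_nonneg
                    intro t _
                    exact Real.rpow_nonneg (le_trans zero_le_one (le_max_right _ _)) _
                  · intro d _
                    have h1 : ∑ t : Fin m, (max |((t : ℕ):ℝ) - ((k d : ℕ):ℝ)| 1) ^ (-θ)
                        = ∑ t ∈ Finset.range m, (max |(t:ℝ) - ((k d : ℕ):ℝ)| 1) ^ (-θ) :=
                      Fin.sum_univ_eq_sum_range
                        (fun t : ℕ => (max |(t:ℝ) - ((k d : ℕ):ℝ)| 1) ^ (-θ)) m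
                    rw [h1]
                    exact oneD_sum_le hθ0 hθ1 m (k d) hm (k d).2
                      (sum_rpow_neg_le hθ0 hθ1 m)
              _ = (E * (m:ℝ)^(1-θ))^(n:ℕ) := by
                  rw [Finset.prod_const, Finset.card_univ, Fintype.card_fin]
    linarith [hsplit, hdiag, hoff]
  -- assemble
  set N : ℝ := (m:ℝ)^(n:ℕ) with hN
  have hN0 : 0 < N := by positivity
  have hpow : ((m:ℝ)^(1-θ))^(n:ℕ) = N * (m:ℝ)^(-β) := by
    rw [← Real.rpow_natCast ((m:ℝ)^(1-θ)) n, ← Real.rpow_mul hm0.le, hN,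
      ← Real.rpow_natCast (m:ℝ) n, ← Real.rpow_add hm0]
    congr 1
    rw [hθ]
    field_simp
    ring
  have hone : 1 ≤ N * (m:ℝ)^(-β) := by
    rw [hN, ← Real.rpow_natCast (m:ℝ) n, ← Real.rpow_add hm0]
    apply Real.one_le_rpow (by exact_mod_cast hm)
    linarith
  have hsβ : (0:ℝ) ≤ s ^ (-β) := Real.rpow_nonneg hs.le _
  have hEn : (0:ℝ) ≤ E ^ (n:ℕ) := pow_nonneg hE0.le _
  calc ∑ k : Fin n → Fin m, ∑ l : Fin n → Fin m, gc s α β ‖gridPt n m k - gridPt n m l‖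
      ≤ ∑ _k : Fin n → Fin m, (1 + s^(-β) * (E * (m:ℝ)^(1-θ))^(n:ℕ)) :=
        Finset.sum_le_sum (fun k _ => inner k)
    _ = N * (1 + s^(-β) * (E * (m:ℝ)^(1-θ))^(n:ℕ)) := by
        rw [Finset.sum_const, Finset.card_univ, Fintype.card_fun, Fintype.card_fin,
          Fintype.card_fin, nsmul_eq_mul, hN]
        push_cast
        ring
    _ ≤ N^2 * ((1 + s^(-β) * E^(n:ℕ)) * (m:ℝ)^(-β)) := by
        rw [mul_pow, hpow]
        nlinarith [mul_nonneg hsβ hEn]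


lemma quad_entry (M : Matrix (Fin 2) (Fin 2) ℝ) (t : ℝ) :
    (![1, t]) ⬝ᵥ M.mulVec ![1, t] = M 0 0 + t * M 0 1 + t * M 1 0 + t^2 * M 1 1 := by
  simp [dotProduct, Matrix.mulVec, Fin.sum_univ_two]
  ring

example (a b c d t : ℝ) : (![1, t]) ⬝ᵥ (!![a, b; c, d]).mulVec ![1, t]
    = a + t*b + t*c + t^2*d := by
  rw [quad_entry]
  simp

lemma sum_split {γ : Type*} [Fintype γ] (f g h : γ → γ → ℝ) (c1 c2 c3 t : ℝ) :
    ∑ k : γ, ∑ l : γ, (c1 * f k l + t * (c2 * g k l) + t * (c2 * g k l) + t^2 * (c3 * h k l))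
      = c1 * (∑ k : γ, ∑ l : γ, f k l) + 2*t*c2 * (∑ k : γ, ∑ l : γ, g k l)
        + t^2 * (c3 * (∑ k : γ, ∑ l : γ, h k l)) := by
  simp only [Finset.sum_add_distrib, ← Finset.mul_sum]
  ring


lemma hq_aux {n : ℕ} (m : ℕ) (C : ℝ → Matrix (Fin 2) (Fin 2) ℝ) (t : ℝ)
    (hpd : PosDefIn n C) :
    0 ≤ ∑ k : Fin n → Fin m, ∑ l : Fin n → Fin m,
      (![1,t]) ⬝ᵥ (C ‖gridPt n m k - gridPt n m l‖).mulVec ![1,t] := by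
  have h := hpd (m^n) (fun i => gridPt n m (finFunctionFinEquiv.symm i)) (fun _ => ![1, t])
  refine le_trans h (le_of_eq ?_)
  exact Fintype.sum_equiv finFunctionFinEquiv.symm _ _
    (fun i => Fintype.sum_equiv finFunctionFinEquiv.symm _ _ (fun j => rfl))


end BGC

set_option maxHeartbeats 1000000 in
open BGC Finset Filter in
/-- If `β12 < (β11 + β22)/2` and `βᵢⱼ < n` then the bivariate generalized Cauchy model is a valid
covariance model in `ℝⁿ` only for `ρ = 0`. -/
theorem bivariate_generalized_cauchy_necessary_beta
    (n : ℕ) (hn : 1 ≤ n)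
    (σ1 σ2 s11 s12 s22 α11 α12 α22 β11 β12 β22 ρ : ℝ)
    (hσ1 : 0 < σ1) (hσ2 : 0 < σ2)
    (hs11 : 0 < s11) (hs12 : 0 < s12) (hs22 : 0 < s22)
    (hα11 : α11 ∈ Ioc (0 : ℝ) 1) (hα22 : α22 ∈ Ioc (0 : ℝ) 1)
    (hα12 : α12 ∈ Ioc (0 : ℝ) 2)
    (hβ11 : 0 < β11) (hβ12 : 0 < β12) (hβ22 : 0 < β22)
    (hρ : ρ ∈ Icc (-1 : ℝ) 1)
    (hlt : β12 < (β11 + β22) / 2)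
    (hβ11n : β11 < (n : ℝ)) (hβ12n : β12 < (n : ℝ)) (hβ22n : β22 < (n : ℝ))
    (hpd : PosDefIn n (fun r =>
      !![σ1 ^ 2 * (1 + (s11 * r) ^ α11) ^ (-(β11 / α11)),
         ρ * σ1 * σ2 * (1 + (s12 * r) ^ α12) ^ (-(β12 / α12));
         ρ * σ1 * σ2 * (1 + (s12 * r) ^ α12) ^ (-(β12 / α12)),
         σ2 ^ 2 * (1 + (s22 * r) ^ α22) ^ (-(β22 / α22))])) :
    ρ = 0 := by
  obtain ⟨hα11p, -⟩ := hα11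
  obtain ⟨hα22p, -⟩ := hα22
  obtain ⟨hα12p, -⟩ := hα12
  have hn0 : (0:ℝ) < n := by exact_mod_cast hn
  set δ : ℝ := β11 + β22 - 2*β12 with hδdef
  have hδ : 0 < δ := by rw [hδdef]; linarith
  set K : ℝ := 2 ^ (-(β12/α12)) * (s12 * Real.sqrt n) ^ (-β12) with hKdef
  have hsq : 0 < s12 * Real.sqrt n := mul_pos hs12 (Real.sqrt_pos.mpr hn0)
  have hK0 : 0 < K := mul_pos (Real.rpow_pos_of_pos two_pos _) (Real.rpow_pos_of_pos hsq _)
  set D1 : ℝ := 1 + s11 ^ (-β11) * (2 + 2/(1-β11/(n:ℝ))) ^ (n:ℕ) with hD1def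
  set D2 : ℝ := 1 + s22 ^ (-β22) * (2 + 2/(1-β22/(n:ℝ))) ^ (n:ℕ) with hD2def
  set Cst : ℝ := (D1 * D2) / K^2 with hCstdef
  have h1θ1 : (0:ℝ) < 1 - β11/(n:ℝ) := by
    have := (div_lt_one hn0).mpr hβ11n; linarith
  have h1θ2 : (0:ℝ) < 1 - β22/(n:ℝ) := by
    have := (div_lt_one hn0).mpr hβ22n; linarith
  have hD1pos : 0 < D1 := by
    rw [hD1def]
    have h1 : (0:ℝ) < 2 + 2/(1-β11/(n:ℝ)) := by
      have := div_pos two_pos h1θ1; linarith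
    have h2 : (0:ℝ) ≤ s11 ^ (-β11) := Real.rpow_nonneg hs11.le _
    nlinarith [pow_pos h1 (n:ℕ)]
  have hD2pos : 0 < D2 := by
    rw [hD2def]
    have h1 : (0:ℝ) < 2 + 2/(1-β22/(n:ℝ)) := by
      have := div_pos two_pos h1θ2; linarith
    have h2 : (0:ℝ) ≤ s22 ^ (-β22) := Real.rpow_nonneg hs22.le _
    nlinarith [pow_pos h1 (n:ℕ)]
  -- key finite-m inequality
  have key : ∀ m : ℕ, 1 ≤ m → 1 ≤ s12 * (Real.sqrt n * m) → ρ^2 ≤ Cst * (m:ℝ) ^ (-δ) := by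
    intro m hm hbig
    have hm0 : (0:ℝ) < m := by exact_mod_cast hm
    set N : ℝ := (m:ℝ)^(n:ℕ) with hNdef
    have hN0 : 0 < N := by positivity
    set S11 : ℝ := ∑ k : Fin n → Fin m, ∑ l : Fin n → Fin m,
      gc s11 α11 β11 ‖gridPt n m k - gridPt n m l‖ with hS11def
    set S12 : ℝ := ∑ k : Fin n → Fin m, ∑ l : Fin n → Fin m,
      gc s12 α12 β12 ‖gridPt n m k - gridPt n m l‖ with hS12def
    set S22 : ℝ := ∑ k : Fin n → Fin m, ∑ l : Fin n → Fin m,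
      gc s22 α22 β22 ‖gridPt n m k - gridPt n m l‖ with hS22def
    -- quadratic form is nonneg for all t
    have hq : ∀ t : ℝ, 0 ≤ (σ2^2*S22) * (t*t) + (2*(ρ*σ1*σ2)*S12) * t + σ1^2*S11 := by
      intro t
      have h0 := hq_aux m (fun r =>
        !![σ1 ^ 2 * (1 + (s11 * r) ^ α11) ^ (-(β11 / α11)),
           ρ * σ1 * σ2 * (1 + (s12 * r) ^ α12) ^ (-(β12 / α12));
           ρ * σ1 * σ2 * (1 + (s12 * r) ^ α12) ^ (-(β12 / α12)),
           σ2 ^ 2 * (1 + (s22 * r) ^ α22) ^ (-(β22 / α22))]) t hpd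
      have hterm : ∀ k l : Fin n → Fin m,
          (![1,t]) ⬝ᵥ (((fun r =>
            !![σ1 ^ 2 * (1 + (s11 * r) ^ α11) ^ (-(β11 / α11)),
               ρ * σ1 * σ2 * (1 + (s12 * r) ^ α12) ^ (-(β12 / α12));
               ρ * σ1 * σ2 * (1 + (s12 * r) ^ α12) ^ (-(β12 / α12)),
               σ2 ^ 2 * (1 + (s22 * r) ^ α22) ^ (-(β22 / α22))]) : ℝ → Matrix (Fin 2) (Fin 2) ℝ)
              ‖gridPt n m k - gridPt n m l‖).mulVec ![1,t]
          = σ1^2 * gc s11 α11 β11 ‖gridPt n m k - gridPt n m l‖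
            + t * ((ρ*σ1*σ2) * gc s12 α12 β12 ‖gridPt n m k - gridPt n m l‖)
            + t * ((ρ*σ1*σ2) * gc s12 α12 β12 ‖gridPt n m k - gridPt n m l‖)
            + t^2 * (σ2^2 * gc s22 α22 β22 ‖gridPt n m k - gridPt n m l‖) := by
        intro k l
        rw [quad_entry]
        simp [gc]
      rw [Finset.sum_congr rfl (fun k _ => Finset.sum_congr rfl (fun l _ => hterm k l)),
        sum_split] at h0
      rw [← hS11def, ← hS12def, ← hS22def] at h0
      nlinarith [h0]
    have hdisc := discrim_le_zero hq
    rw [discrim] at hdisc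
    have hfac : ρ^2 * S12^2 ≤ S11 * S22 := by
      have h4 : (0:ℝ) < σ1^2*σ2^2 := by positivity
      have h5 : σ1^2*σ2^2*(ρ^2*S12^2) ≤ σ1^2*σ2^2*(S11*S22) := by nlinarith [hdisc]
      exact le_of_mul_le_mul_left h5 h4
    -- bounds
    have hlow := grid_sum_lower (n := n) (m := m) hs12 hα12p hβ12 hbig
    rw [← hS12def, ← hNdef] at hlow
    have hsplit12 : (s12*(Real.sqrt n*(m:ℝ))) ^ (-β12)
        = (s12*Real.sqrt n) ^ (-β12) * (m:ℝ) ^ (-β12) := by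
      rw [show s12*(Real.sqrt n*(m:ℝ)) = (s12*Real.sqrt n)*(m:ℝ) by ring,
        Real.mul_rpow hsq.le hm0.le]
    have hL : N^2 * (K * (m:ℝ)^(-β12)) ≤ S12 := by
      rw [hKdef]
      calc N^2 * (2 ^ (-(β12/α12)) * (s12 * Real.sqrt n) ^ (-β12) * (m:ℝ)^(-β12))
          = N^2 * (2 ^ (-(β12/α12)) * (s12*(Real.sqrt n*(m:ℝ))) ^ (-β12)) := by
            rw [hsplit12]; ring
        _ ≤ S12 := hlow
    have hup1 := grid_sum_upper (n := n) (m := m) hn hm hs11 hα11p hβ11 hβ11n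
    rw [← hS11def, ← hNdef, ← hD1def] at hup1
    have hup2 := grid_sum_upper (n := n) (m := m) hn hm hs22 hα22p hβ22 hβ22n
    rw [← hS22def, ← hNdef, ← hD2def] at hup2
    have hLpos : 0 < N^2 * (K * (m:ℝ)^(-β12)) := by positivity
    have hS22nn : 0 ≤ S22 := by
      rw [hS22def]
      exact Finset.sum_nonneg fun k _ => Finset.sum_nonneg fun l _ =>
        (gc_pos hs22.le (norm_nonneg _)).le
    have hchain : ρ^2 * (N^2 * (K * (m:ℝ)^(-β12)))^2
        ≤ (N^2*(D1*(m:ℝ)^(-β11))) * (N^2*(D2*(m:ℝ)^(-β22))) := by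
      calc ρ^2 * (N^2 * (K * (m:ℝ)^(-β12)))^2
          ≤ ρ^2 * S12^2 := by
            apply mul_le_mul_of_nonneg_left _ (sq_nonneg ρ)
            exact pow_le_pow_left₀ hLpos.le hL 2
        _ ≤ S11 * S22 := hfac
        _ ≤ (N^2*(D1*(m:ℝ)^(-β11))) * (N^2*(D2*(m:ℝ)^(-β22))) := by
            apply mul_le_mul hup1 hup2 hS22nn
            exact mul_nonneg (by positivity)
              (mul_nonneg hD1pos.le (Real.rpow_nonneg hm0.le _))
    -- final algebra
    have hmm : ∀ a b : ℝ, (m:ℝ)^a * (m:ℝ)^b = (m:ℝ)^(a+b) :=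
      fun a b => (Real.rpow_add hm0 a b).symm
    have hRHS : (N^2*(D1*(m:ℝ)^(-β11))) * (N^2*(D2*(m:ℝ)^(-β22)))
        = D1*D2*(m:ℝ)^(-δ) * (N^2*(m:ℝ)^(-β12))^2 := by
      have h1 : (m:ℝ)^(-β11) * (m:ℝ)^(-β22)
          = (m:ℝ)^(-δ) * ((m:ℝ)^(-β12) * (m:ℝ)^(-β12)) := by
        rw [hmm, hmm, hmm]
        congr 1
        rw [hδdef]; ring
      linear_combination (N^2*N^2*D1*D2) * h1
    rw [hCstdef, div_mul_eq_mul_div, le_div_iff₀ (pow_pos hK0 2)]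
    have hF0 : (0:ℝ) < (N^2*(m:ℝ)^(-β12))^2 := by positivity
    apply le_of_mul_le_mul_right _ hF0
    calc ρ^2*K^2 * (N^2*(m:ℝ)^(-β12))^2
        = ρ^2 * (N^2 * (K * (m:ℝ)^(-β12)))^2 := by ring
      _ ≤ (N^2*(D1*(m:ℝ)^(-β11))) * (N^2*(D2*(m:ℝ)^(-β22))) := hchain
      _ = D1*D2*(m:ℝ)^(-δ) * (N^2*(m:ℝ)^(-β12))^2 := hRHS
  -- pass to the limit
  have hlim : Tendsto (fun m : ℕ => Cst * (m:ℝ) ^ (-δ)) atTop (nhds 0) := by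
    have h1 : Tendsto (fun x : ℝ => x ^ (-δ)) atTop (nhds 0) := tendsto_rpow_neg_atTop hδ
    have h2 : Tendsto (fun m : ℕ => ((m:ℝ))) atTop atTop := tendsto_natCast_atTop_atTop
    have := (h1.comp h2).const_mul Cst
    simpa using this
  have hev : ∀ᶠ m : ℕ in atTop, ρ^2 ≤ Cst * (m:ℝ) ^ (-δ) := by
    filter_upwards [eventually_ge_atTop 1, eventually_ge_atTop (⌈(s12*Real.sqrt n)⁻¹⌉₊ + 1)]
      with m h1 h2
    apply key m h1
    have hc : ((s12*Real.sqrt n)⁻¹ : ℝ) ≤ (m:ℝ) := by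
      calc ((s12*Real.sqrt n)⁻¹ : ℝ) ≤ (⌈(s12*Real.sqrt n)⁻¹⌉₊ : ℝ) := Nat.le_ceil _
        _ ≤ (m:ℝ) := by exact_mod_cast le_trans (Nat.le_succ _) h2
    rw [show s12*(Real.sqrt n*(m:ℝ)) = (s12*Real.sqrt n)*(m:ℝ) by ring]
    calc (1:ℝ) = (s12*Real.sqrt n) * (s12*Real.sqrt n)⁻¹ := by
          rw [mul_inv_cancel₀ hsq.ne']
      _ ≤ (s12*Real.sqrt n)*(m:ℝ) := by
          apply mul_le_mul_of_nonneg_left hc hsq.le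
  have hρ2 : ρ^2 ≤ 0 := ge_of_tendsto hlim hev
  have : ρ^2 = 0 := le_antisymm hρ2 (sq_nonneg ρ)
  exact pow_eq_zero_iff two_ne_zero |>.mp this
end
end

section
/- Let n ≥ 1 be a natural number and consider the bivariate generalized Cauchy model C with parameters σ1, σ2 > 0, s11, s12, s22 > 0, α11, α22 ∈ (0,1], α12 ∈ (0,2], β11, β12, β22 > 0, ρ ∈ [−1,1]. Suppose there are indices i ≠ j in {1,2} with 2·β12 < β_{ii} + n, β_{ii} < n and β_{jj} > n. If C is positive definite in ℝⁿ, then ρ = 0. -/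
open Matrix Set

noncomputable section

set_option linter.unusedSectionVars false
set_option linter.unusedVariables false
set_option maxHeartbeats 1600000

def gridPt (n N : ℕ) (v : Fin n → Fin N) : EuclideanSpace ℝ (Fin n) := WithLp.toLp 2 (fun k => (v k : ℝ))

lemma sumOne_lt_one {γ : ℝ} (hγ0 : 0 < γ) (hγ1 : γ < 1) (N : ℕ) :
    ∑ m ∈ Finset.range N, ((m : ℝ) + 1) ^ (-γ) ≤ (N : ℝ) ^ (1 - γ) / (1 - γ) := by
  induction N with
  | zero =>
    simp only [Finset.range_zero, Finset.sum_empty, Nat.cast_zero]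
    exact div_nonneg (Real.rpow_nonneg le_rfl _) (by linarith)
  | succ N ih =>
    rw [Finset.sum_range_succ]
    have hN1 : (0:ℝ) < (N:ℝ) + 1 := by positivity
    have key : (1 - γ) * ((N:ℝ) + 1) ^ (-γ) ≤ ((N:ℝ)+1) ^ (1-γ) - (N:ℝ) ^ (1-γ) := by
      have hs : (-1 : ℝ) ≤ -1 / ((N:ℝ)+1) := by
        rw [neg_div]
        simp only [neg_le_neg_iff]
        rw [div_le_one hN1]; linarith [Nat.cast_nonneg (α := ℝ) N]
      have hb := rpow_one_add_le_one_add_mul_self hs (by linarith : (0:ℝ) ≤ 1 - γ) (by linarith : (1:ℝ) - γ ≤ 1)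
      have h1 : (1 : ℝ) + -1/((N:ℝ)+1) = (N:ℝ)/((N:ℝ)+1) := by field_simp; ring
      rw [h1] at hb
      have h2 : ((N:ℝ)/((N:ℝ)+1)) ^ (1-γ) = (N:ℝ)^(1-γ) / ((N:ℝ)+1)^(1-γ) :=
        Real.div_rpow (Nat.cast_nonneg N) hN1.le (1-γ)
      rw [h2] at hb
      have hp : (0:ℝ) < ((N:ℝ)+1)^(1-γ) := Real.rpow_pos_of_pos hN1 _
      have hb' : (N:ℝ)^(1-γ) ≤ (1 + (1-γ) * (-1/((N:ℝ)+1))) * ((N:ℝ)+1)^(1-γ) := by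
        rw [← div_le_iff₀ hp]; exact hb
      have hexp : ((N:ℝ)+1)^(-γ) = ((N:ℝ)+1)^(1-γ) / ((N:ℝ)+1)^(1:ℝ) := by
        rw [← Real.rpow_sub hN1]; norm_num
      rw [Real.rpow_one] at hexp
      have e3 : (1 + (1-γ) * (-1/((N:ℝ)+1))) * ((N:ℝ)+1)^(1-γ)
          = ((N:ℝ)+1)^(1-γ) - (1-γ)*(((N:ℝ)+1)^(1-γ)/((N:ℝ)+1)) := by ring
      have e2 : (1-γ) * ((N:ℝ)+1)^(-γ) = (1-γ) * (((N:ℝ)+1)^(1-γ) / ((N:ℝ)+1)) := by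
        rw [hexp]
      linarith
    have h4 : (0:ℝ) < 1 - γ := by linarith
    have this1 : ((N:ℝ)+1)^(-γ) ≤ (((N:ℝ)+1)^(1-γ) - (N:ℝ)^(1-γ)) / (1-γ) := by
      rw [le_div_iff₀ h4]; linarith
    have h3 : (N:ℝ)^(1-γ)/(1-γ) + (((N:ℝ)+1)^(1-γ) - (N:ℝ)^(1-γ))/(1-γ)
        = ((N:ℝ)+1)^(1-γ)/(1-γ) := by ring
    push_cast
    linarith

lemma sumOne_gt_one {γ : ℝ} (hγ : 1 < γ) :
    ∃ T : ℝ, 0 ≤ T ∧ ∀ N : ℕ, ∑ m ∈ Finset.range N, ((m : ℝ) + 1) ^ (-γ) ≤ T := by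
  have h : Summable (fun n : ℕ => (n : ℝ) ^ (-γ)) :=
    Real.summable_nat_rpow.mpr (by linarith)
  have h2 : Summable (fun m : ℕ => ((m+1:ℕ) : ℝ) ^ (-γ)) := h.comp_injective Nat.succ_injective
  have hsum : Summable (fun m : ℕ => ((m : ℝ) + 1) ^ (-γ)) :=
    h2.congr (fun m => by push_cast; ring_nf)
  refine ⟨∑' m : ℕ, ((m : ℝ) + 1) ^ (-γ), tsum_nonneg (fun m => by positivity), fun N => ?_⟩
  exact Summable.sum_le_tsum _ (fun i _ => by positivity) hsum

section G
variable {s α β : ℝ} (hs : 0 < s) (hα : 0 < α) (hβ : 0 < β)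
include hs hα hβ

lemma g_pos {r : ℝ} (hr : 0 ≤ r) : 0 < (1 + (s*r)^α)^(-(β/α)) := by
  have : (0:ℝ) ≤ (s*r)^α := Real.rpow_nonneg (by positivity) _
  exact Real.rpow_pos_of_pos (by linarith) _

lemma g_le_one {r : ℝ} (hr : 0 ≤ r) : (1 + (s*r)^α)^(-(β/α)) ≤ 1 := by
  have : (0:ℝ) ≤ (s*r)^α := Real.rpow_nonneg (by positivity) _
  exact Real.rpow_le_one_of_one_le_of_nonpos (by linarith)
    (by rw [neg_nonpos]; positivity)

lemma g_anti {r R : ℝ} (hr : 0 ≤ r) (hrR : r ≤ R) :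
    (1 + (s*R)^α)^(-(β/α)) ≤ (1 + (s*r)^α)^(-(β/α)) := by
  have h0 : (0:ℝ) ≤ (s*r)^α := Real.rpow_nonneg (by positivity) _
  have hbase : (1 + (s*r)^α) ≤ (1 + (s*R)^α) := by
    have := Real.rpow_le_rpow (by positivity : (0:ℝ) ≤ s*r)
      (by nlinarith : s*r ≤ s*R) hα.le
    linarith
  exact Real.rpow_le_rpow_of_nonpos (by linarith) hbase (by rw [neg_nonpos]; positivity)

lemma g_upper {m r : ℝ} (hm : 1 ≤ m) (hmr : m ≤ r) :
    (1 + (s*r)^α)^(-(β/α)) ≤ s^(-β) * m^(-β) := by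
  have hm0 : (0:ℝ) < m := by linarith
  have h1 : (1 + (s*r)^α)^(-(β/α)) ≤ (1 + (s*m)^α)^(-(β/α)) :=
    g_anti hs hα hβ hm0.le hmr
  have hsm : (0:ℝ) < s*m := by positivity
  have hsma : (0:ℝ) < (s*m)^α := Real.rpow_pos_of_pos hsm _
  have h2 : (1 + (s*m)^α)^(-(β/α)) ≤ ((s*m)^α)^(-(β/α)) :=
    Real.rpow_le_rpow_of_nonpos hsma (by linarith) (by rw [neg_nonpos]; positivity)
  have h3 : ((s*m)^α)^(-(β/α)) = (s*m)^(-β) := by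
    rw [← Real.rpow_mul hsm.le]
    congr 1
    field_simp
  have h4 : (s*m)^(-β) = s^(-β) * m^(-β) := Real.mul_rpow hs.le hm0.le
  linarith [h3 ▸ h2, h4]

lemma g_lower {M r : ℝ} (hM : 1 ≤ M) (hr : 0 ≤ r) (hrM : r ≤ M) :
    (1 + s^α)^(-(β/α)) * M^(-β) ≤ (1 + (s*r)^α)^(-(β/α)) := by
  have hM0 : (0:ℝ) < M := by linarith
  have h1 : (1 + (s*M)^α)^(-(β/α)) ≤ (1 + (s*r)^α)^(-(β/α)) :=
    g_anti hs hα hβ hr hrM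
  have hMa : (1:ℝ) ≤ M^α := Real.one_le_rpow hM hα.le
  have hbase : 1 + (s*M)^α ≤ (1 + s^α) * M^α := by
    have : (s*M)^α = s^α * M^α := Real.mul_rpow hs.le hM0.le
    nlinarith [Real.rpow_pos_of_pos hs α]
  have h2 : ((1 + s^α) * M^α)^(-(β/α)) ≤ (1 + (s*M)^α)^(-(β/α)) := by
    have : (0:ℝ) ≤ (s*M)^α := Real.rpow_nonneg (by positivity) _
    exact Real.rpow_le_rpow_of_nonpos (by linarith) hbase (by rw [neg_nonpos]; positivity)
  have h3 : ((1 + s^α) * M^α)^(-(β/α)) = (1 + s^α)^(-(β/α)) * M^(-β) := by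
    have hsa : (0:ℝ) < s^α := Real.rpow_pos_of_pos hs _
    rw [Real.mul_rpow (by linarith) (Real.rpow_nonneg hM0.le _)]
    congr 1
    rw [← Real.rpow_mul hM0.le]
    congr 1
    field_simp
  linarith [h3 ▸ h2]
end G

lemma natdist_cast (a b : ℕ) : ((Nat.dist a b : ℕ) : ℝ) = |(a:ℝ) - b| := by
  rcases le_total a b with h | h
  · rw [Nat.dist_eq_sub_of_le h, abs_sub_comm, abs_of_nonneg (by push_cast [h]; linarith [(Nat.cast_le (α := ℝ)).2 h])]
    push_cast [h]; ring
  · rw [Nat.dist_eq_sub_of_le_right h, abs_of_nonneg (by linarith [(Nat.cast_le (α := ℝ)).2 h])]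
    push_cast [h]; ring

lemma gridPt_sub_apply (n N : ℕ) (v w : Fin n → Fin N) (k : Fin n) :
    (gridPt n N v - gridPt n N w) k = (v k : ℝ) - (w k : ℝ) := rfl

lemma grid_norm_le (n N : ℕ) (hN : 1 ≤ N) (v w : Fin n → Fin N) :
    ‖gridPt n N v - gridPt n N w‖ ≤ Real.sqrt n * N := by
  rw [EuclideanSpace.norm_eq]
  have h1 : ∑ k : Fin n, ‖(gridPt n N v - gridPt n N w) k‖ ^ 2 ≤ ∑ _k : Fin n, (N:ℝ)^2 := by
    apply Finset.sum_le_sum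
    intro k _
    rw [gridPt_sub_apply, Real.norm_eq_abs, sq_abs]
    have h1 : ((v k : ℕ) : ℝ) < N := by exact_mod_cast (v k).isLt
    have h2 : ((w k : ℕ) : ℝ) < N := by exact_mod_cast (w k).isLt
    have h3 : (0:ℝ) ≤ (v k : ℕ) := Nat.cast_nonneg _
    have h4 : (0:ℝ) ≤ (w k : ℕ) := Nat.cast_nonneg _
    nlinarith
  calc Real.sqrt (∑ k : Fin n, ‖(gridPt n N v - gridPt n N w) k‖ ^ 2)
      ≤ Real.sqrt (∑ _k : Fin n, (N:ℝ)^2) := Real.sqrt_le_sqrt h1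
    _ = Real.sqrt ((n : ℝ) * (N:ℝ)^2) := by rw [Finset.sum_const, Finset.card_univ]; simp [nsmul_eq_mul]
    _ = Real.sqrt n * N := by
        rw [Real.sqrt_mul (Nat.cast_nonneg n), Real.sqrt_sq (Nat.cast_nonneg N)]

lemma grid_coord_le (n N : ℕ) (v w : Fin n → Fin N) (k : Fin n) :
    ((Nat.dist (v k) (w k) : ℕ) : ℝ) ≤ ‖gridPt n N v - gridPt n N w‖ := by
  rw [natdist_cast, EuclideanSpace.norm_eq]
  have h1 : |(v k : ℝ) - (w k : ℝ)| = Real.sqrt (‖(gridPt n N v - gridPt n N w) k‖^2) := by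
    rw [Real.norm_eq_abs, sq_abs, Real.sqrt_sq_eq_abs, gridPt_sub_apply]
  rw [h1]
  apply Real.sqrt_le_sqrt
  exact Finset.single_le_sum (f := fun i => ‖(gridPt n N v - gridPt n N w) i‖^2)
    (fun i _ => by positivity) (Finset.mem_univ k)

lemma grid_one_le (n N : ℕ) (v w : Fin n → Fin N) (hvw : v ≠ w) :
    1 ≤ ‖gridPt n N v - gridPt n N w‖ := by
  obtain ⟨k, hk⟩ := Function.ne_iff.1 hvw
  have h1 : 1 ≤ ((Nat.dist (v k) (w k) : ℕ) : ℝ) := by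
    have : 0 < Nat.dist (v k) (w k) :=
      Nat.dist_pos_of_ne (fun h => hk (Fin.ext h))
    exact_mod_cast this
  linarith [grid_coord_le n N v w k]

-- 1-D counting
lemma oneDim_sum_le {γ : ℝ} (hγ : 0 < γ) (N : ℕ) (a : Fin N) :
    ∑ j : Fin N, (((Nat.dist (a:ℕ) (j:ℕ)) : ℝ) + 1)^(-γ)
      ≤ 2 * ∑ m ∈ Finset.range N, ((m:ℝ)+1)^(-γ) := by
  classical
  set f : ℕ → ℝ := fun m => ((m:ℝ)+1)^(-γ) with hf
  have hf0 : ∀ m, 0 ≤ f m := fun m => by positivity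
  have key : ∀ (s : Finset (Fin N)) (e : Fin N → ℕ), (∀ j ∈ s, ∀ j' ∈ s, e j = e j' → j = j') →
      (∀ j ∈ s, e j < N) → ∑ j ∈ s, f (e j) ≤ ∑ m ∈ Finset.range N, f m := by
    intro s e hinj him
    rw [← Finset.sum_image hinj]
    apply Finset.sum_le_sum_of_subset_of_nonneg
    · intro m hm
      rw [Finset.mem_image] at hm
      obtain ⟨j, hj, rfl⟩ := hm
      exact Finset.mem_range.2 (him j hj)
    · intro m _ _; exact hf0 m
  have hsplit := Finset.sum_filter_add_sum_filter_not Finset.univ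
    (fun j : Fin N => (j:ℕ) ≤ (a:ℕ)) (fun j => f (Nat.dist (a:ℕ) (j:ℕ)))
  have h1 : ∑ j ∈ Finset.univ.filter (fun j : Fin N => (j:ℕ) ≤ (a:ℕ)),
      f (Nat.dist (a:ℕ) (j:ℕ)) ≤ ∑ m ∈ Finset.range N, f m := by
    have : ∀ j ∈ Finset.univ.filter (fun j : Fin N => (j:ℕ) ≤ (a:ℕ)),
        f (Nat.dist (a:ℕ) (j:ℕ)) = f ((a:ℕ) - (j:ℕ)) := by
      intro j hj
      rw [Finset.mem_filter] at hj
      congr 1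
      rw [Nat.dist_comm, Nat.dist_eq_sub_of_le hj.2]
    rw [Finset.sum_congr rfl this]
    apply key
    · intro j hj j' hj' h
      rw [Finset.mem_filter] at hj hj'
      have := a.isLt
      exact Fin.ext (by omega)
    · intro j hj
      have := a.isLt
      omega
  have h2 : ∑ j ∈ Finset.univ.filter (fun j : Fin N => ¬((j:ℕ) ≤ (a:ℕ))),
      f (Nat.dist (a:ℕ) (j:ℕ)) ≤ ∑ m ∈ Finset.range N, f m := by
    have : ∀ j ∈ Finset.univ.filter (fun j : Fin N => ¬((j:ℕ) ≤ (a:ℕ))),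
        f (Nat.dist (a:ℕ) (j:ℕ)) = f ((j:ℕ) - (a:ℕ)) := by
      intro j hj
      rw [Finset.mem_filter] at hj
      congr 1
      rw [Nat.dist_eq_sub_of_le (by omega : (a:ℕ) ≤ (j:ℕ))]
    rw [Finset.sum_congr rfl this]
    apply key
    · intro j hj j' hj' h
      rw [Finset.mem_filter] at hj hj'
      have := j.isLt; have := j'.isLt
      exact Fin.ext (by omega)
    · intro j hj
      exact lt_of_le_of_lt (Nat.sub_le _ _) j.isLt
  calc ∑ j : Fin N, f (Nat.dist (a:ℕ) (j:ℕ)) 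
      = _ + _ := hsplit.symm
    _ ≤ 2 * ∑ m ∈ Finset.range N, f m := by linarith

lemma offdiag_le (hn : 1 ≤ n) (hs : 0 < s) (hα : 0 < α) (hβ : 0 < β)
    (v w : Fin n → Fin N) (hvw : v ≠ w) :
    (1 + (s * ‖gridPt n N v - gridPt n N w‖)^α)^(-(β/α))
      ≤ s^(-β) * 2^β * ∏ k : Fin n, (((Nat.dist (v k) (w k)) : ℝ) + 1)^(-(β/(n:ℝ))) := by
  set d := ‖gridPt n N v - gridPt n N w‖ with hd
  have hd1 : 1 ≤ d := grid_one_le n N v w hvw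
  have hd0 : 0 < d := by linarith
  have h1 : (1 + (s*d)^α)^(-(β/α)) ≤ s^(-β) * d^(-β) := g_upper hs hα hβ hd1 le_rfl
  -- prod bound
  set γ := β/(n:ℝ) with hγ
  have hn0 : (0:ℝ) < n := by exact_mod_cast hn
  have hγ0 : 0 < γ := by positivity
  have hP : ∏ k : Fin n, (((Nat.dist (v k) (w k)) : ℝ) + 1) ≤ (2*d)^(n:ℕ) := by
    have hc : ∏ _k : Fin n, (2*d) = (2*d)^(n:ℕ) := by
      simp [Finset.prod_const]
    rw [← hc]
    apply Finset.prod_le_prod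
    · intro k _; positivity
    · intro k _
      have := grid_coord_le n N v w k
      rw [← hd] at this
      linarith
  have hPpos : 0 < ∏ k : Fin n, (((Nat.dist (v k) (w k)) : ℝ) + 1) :=
    Finset.prod_pos (fun k _ => by positivity)
  have h2 : ∏ k : Fin n, (((Nat.dist (v k) (w k)) : ℝ) + 1)^(-γ)
      = (∏ k : Fin n, (((Nat.dist (v k) (w k)) : ℝ) + 1))^(-γ) :=
    Real.finset_prod_rpow _ _ (fun k _ => by positivity) _
  have h3 : ((2*d)^(n:ℕ) : ℝ)^(-γ) ≤ (∏ k : Fin n, (((Nat.dist (v k) (w k)) : ℝ) + 1))^(-γ) :=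
    Real.rpow_le_rpow_of_nonpos hPpos hP (by linarith)
  have h4 : ((2*d)^(n:ℕ) : ℝ)^(-γ) = 2^(-β) * d^(-β) := by
    rw [← Real.rpow_natCast (2*d) n, ← Real.rpow_mul (by positivity)]
    have : (n:ℝ) * (-γ) = -β := by
      rw [hγ]; field_simp
    rw [this, Real.mul_rpow (by norm_num) hd0.le]
  have h5 : d^(-β) ≤ 2^β * (∏ k : Fin n, (((Nat.dist (v k) (w k)) : ℝ) + 1))^(-γ) := by
    have h6 : 2^(-β) * d^(-β) ≤ (∏ k : Fin n, (((Nat.dist (v k) (w k)) : ℝ) + 1))^(-γ) := by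
      rw [← h4]; exact h3
    have h7 : (0:ℝ) < 2^β := Real.rpow_pos_of_pos (by norm_num) _
    have h8 : (2:ℝ)^β * 2^(-β) = 1 := by
      rw [← Real.rpow_add (by norm_num)]; simp
    calc d^(-β) = 2^β * (2^(-β) * d^(-β)) := by rw [← mul_assoc, h8, one_mul]
      _ ≤ 2^β * (∏ k : Fin n, (((Nat.dist (v k) (w k)) : ℝ) + 1))^(-γ) :=
          mul_le_mul_of_nonneg_left h6 h7.le
  have hs0 : (0:ℝ) < s^(-β) := Real.rpow_pos_of_pos hs _
  calc (1 + (s*d)^α)^(-(β/α)) ≤ s^(-β) * d^(-β) := h1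
    _ ≤ s^(-β) * (2^β * (∏ k : Fin n, (((Nat.dist (v k) (w k)) : ℝ) + 1))^(-γ)) := by
        exact mul_le_mul_of_nonneg_left h5 hs0.le
    _ = s^(-β) * 2^β * ∏ k : Fin n, (((Nat.dist (v k) (w k)) : ℝ) + 1)^(-γ) := by
        rw [h2]; ring

section S
variable {n N : ℕ} {s α β B : ℝ}

lemma card_grid : (Fintype.card (Fin n → Fin N) : ℝ) = (N:ℝ)^(n:ℕ) := by
  simp [Fintype.card_fun]

lemma Sg_upper (hn : 1 ≤ n) (hs : 0 < s) (hα : 0 < α) (hβ : 0 < β)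
    (hB : ∑ m ∈ Finset.range N, ((m:ℝ)+1)^(-(β/(n:ℝ))) ≤ B) :
    ∑ v : Fin n → Fin N, ∑ w : Fin n → Fin N,
        (1 + (s * ‖gridPt n N v - gridPt n N w‖)^α)^(-(β/α))
      ≤ (N:ℝ)^(n:ℕ) * (1 + s^(-β) * 2^β * (2*B)^(n:ℕ)) := by
  classical
  set γ := β/(n:ℝ) with hγ
  have hn0 : (0:ℝ) < n := by exact_mod_cast hn
  have hγ0 : 0 < γ := by positivity
  have hB0 : 0 ≤ B := le_trans (Finset.sum_nonneg (fun m _ => by positivity)) hB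
  have row : ∀ v : Fin n → Fin N,
      ∑ w : Fin n → Fin N, (1 + (s * ‖gridPt n N v - gridPt n N w‖)^α)^(-(β/α))
        ≤ 1 + s^(-β) * 2^β * (2*B)^(n:ℕ) := by
    intro v
    rw [← Finset.add_sum_erase _ _ (Finset.mem_univ v)]
    have hdiag : (1 + (s * ‖gridPt n N v - gridPt n N v‖)^α)^(-(β/α)) ≤ 1 :=
      g_le_one hs hα hβ (norm_nonneg _)
    have hoff : ∑ w ∈ Finset.univ.erase v,
        (1 + (s * ‖gridPt n N v - gridPt n N w‖)^α)^(-(β/α))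
          ≤ s^(-β) * 2^β * (2*B)^(n:ℕ) := by
      have step1 : ∑ w ∈ Finset.univ.erase v,
          (1 + (s * ‖gridPt n N v - gridPt n N w‖)^α)^(-(β/α))
          ≤ ∑ w ∈ Finset.univ.erase v,
              s^(-β) * 2^β * ∏ k : Fin n, (((Nat.dist (v k) (w k)) : ℝ) + 1)^(-γ) := by
        apply Finset.sum_le_sum
        intro w hw
        exact offdiag_le hn hs hα hβ v w (fun h => (Finset.mem_erase.1 hw).1 h.symm)
      have step2 : ∑ w ∈ Finset.univ.erase v,
            s^(-β) * 2^β * ∏ k : Fin n, (((Nat.dist (v k) (w k)) : ℝ) + 1)^(-γ)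
          ≤ ∑ w : Fin n → Fin N,
            s^(-β) * 2^β * ∏ k : Fin n, (((Nat.dist (v k) (w k)) : ℝ) + 1)^(-γ) := by
        apply Finset.sum_le_sum_of_subset_of_nonneg (Finset.subset_univ _)
        intro w _ _
        have h1 : (0:ℝ) < s^(-β) := Real.rpow_pos_of_pos hs _
        have h2 : (0:ℝ) < 2^β := Real.rpow_pos_of_pos (by norm_num) _
        have h3 : (0:ℝ) ≤ ∏ k : Fin n, (((Nat.dist (v k) (w k)) : ℝ) + 1)^(-γ) :=
          Finset.prod_nonneg (fun k _ => by positivity)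
        positivity
      have step3 : ∑ w : Fin n → Fin N,
            ∏ k : Fin n, (((Nat.dist (v k) (w k)) : ℝ) + 1)^(-γ)
          ≤ (2*B)^(n:ℕ) := by
        have hid : ∑ w : Fin n → Fin N,
              ∏ k : Fin n, (((Nat.dist (v k) (w k)) : ℝ) + 1)^(-γ)
            = ∏ k : Fin n, ∑ j : Fin N, (((Nat.dist (v k) (j:ℕ)) : ℝ) + 1)^(-γ) := by
          rw [Finset.prod_univ_sum]
          rw [Fintype.piFinset_univ]  -- hope
        rw [hid]
        have : ∏ k : Fin n, ∑ j : Fin N, (((Nat.dist (v k) (j:ℕ)) : ℝ) + 1)^(-γ)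
            ≤ ∏ _k : Fin n, (2 * ∑ m ∈ Finset.range N, ((m:ℝ)+1)^(-γ)) := by
          apply Finset.prod_le_prod
          · intro k _; apply Finset.sum_nonneg; intro j _; positivity
          · intro k _; exact oneDim_sum_le hγ0 N (v k)
        refine le_trans this ?_
        rw [Finset.prod_const, Finset.card_univ, Fintype.card_fin]
        apply pow_le_pow_left₀ (by positivity)
        · have hs1 : ∑ m ∈ Finset.range N, ((m:ℝ)+1)^(-γ) ≤ B := hB
          linarith
      calc ∑ w ∈ Finset.univ.erase v,
            (1 + (s * ‖gridPt n N v - gridPt n N w‖)^α)^(-(β/α))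
          ≤ ∑ w : Fin n → Fin N,
            s^(-β) * 2^β * ∏ k : Fin n, (((Nat.dist (v k) (w k)) : ℝ) + 1)^(-γ) :=
            le_trans step1 step2
        _ = s^(-β) * 2^β * ∑ w : Fin n → Fin N,
            ∏ k : Fin n, (((Nat.dist (v k) (w k)) : ℝ) + 1)^(-γ) := by
            rw [Finset.mul_sum]
        _ ≤ s^(-β) * 2^β * (2*B)^(n:ℕ) := by
            have h1 : (0:ℝ) < s^(-β) := Real.rpow_pos_of_pos hs _
            have h2 : (0:ℝ) < 2^β := Real.rpow_pos_of_pos (by norm_num) _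
            exact mul_le_mul_of_nonneg_left step3 (by positivity)
    linarith
  calc ∑ v : Fin n → Fin N, ∑ w : Fin n → Fin N,
        (1 + (s * ‖gridPt n N v - gridPt n N w‖)^α)^(-(β/α))
      ≤ ∑ _v : Fin n → Fin N, (1 + s^(-β) * 2^β * (2*B)^(n:ℕ)) :=
        Finset.sum_le_sum (fun v _ => row v)
    _ = (N:ℝ)^(n:ℕ) * (1 + s^(-β) * 2^β * (2*B)^(n:ℕ)) := by
        rw [Finset.sum_const, Finset.card_univ, nsmul_eq_mul, card_grid]

lemma Sg_lower (hn : 1 ≤ n) (hN : 1 ≤ N) (hs : 0 < s) (hα : 0 < α) (hβ : 0 < β) :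
    ((N:ℝ)^(n:ℕ))^2 * ((1 + s^α)^(-(β/α)) * (Real.sqrt n * N)^(-β))
      ≤ ∑ v : Fin n → Fin N, ∑ w : Fin n → Fin N,
          (1 + (s * ‖gridPt n N v - gridPt n N w‖)^α)^(-(β/α)) := by
  have hn0 : (0:ℝ) < n := by exact_mod_cast hn
  have hN0 : (0:ℝ) < N := by exact_mod_cast hN
  have hM1 : 1 ≤ Real.sqrt n * N := by
    have h1 : (1:ℝ) ≤ Real.sqrt n := by
      rw [show (1:ℝ) = Real.sqrt 1 by simp]
      exact Real.sqrt_le_sqrt (by exact_mod_cast hn)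
    have h2 : (1:ℝ) ≤ (N:ℝ) := by exact_mod_cast hN
    nlinarith
  have term : ∀ v w : Fin n → Fin N,
      (1 + s^α)^(-(β/α)) * (Real.sqrt n * N)^(-β)
        ≤ (1 + (s * ‖gridPt n N v - gridPt n N w‖)^α)^(-(β/α)) := fun v w =>
    g_lower hs hα hβ hM1 (norm_nonneg _) (grid_norm_le n N hN v w)
  calc ((N:ℝ)^(n:ℕ))^2 * ((1 + s^α)^(-(β/α)) * (Real.sqrt n * N)^(-β))
      = ∑ _v : Fin n → Fin N, ∑ _w : Fin n → Fin N,
          ((1 + s^α)^(-(β/α)) * (Real.sqrt n * N)^(-β)) := by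
        rw [Finset.sum_const, Finset.sum_const, Finset.card_univ, nsmul_eq_mul, nsmul_eq_mul,
          ← mul_assoc, card_grid]
        ring
    _ ≤ _ := Finset.sum_le_sum (fun v _ => Finset.sum_le_sum (fun w _ => term v w))
end S

lemma quad_eval (A B D t : ℝ) :
    (![t,1] : Fin 2 → ℝ) ⬝ᵥ (!![A,B;B,D]).mulVec ![t,1] = t^2*A + 2*t*B + D := by
  simp [Matrix.mulVec, dotProduct, Fin.sum_univ_two]
  ring

lemma swap_eval (A B D : ℝ) (u v : Fin 2 → ℝ) :
    u ⬝ᵥ (!![D,B;B,A]).mulVec v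
      = (![u 1, u 0] : Fin 2 → ℝ) ⬝ᵥ (!![A,B;B,D]).mulVec ![v 1, v 0] := by
  simp [Matrix.mulVec, dotProduct, Fin.sum_univ_two]
  ring

lemma disc_ineq {A B D ρ σ1 σ2 : ℝ} (hσ1 : 0 < σ1) (hσ2 : 0 < σ2)
    (h : ∀ t : ℝ, 0 ≤ t^2*(σ1^2*A) + 2*t*(ρ*σ1*σ2*B) + σ2^2*D) :
    ρ^2*B^2 ≤ A*D := by
  have hd := discrim_le_zero (a := σ1^2*A) (b := 2*(ρ*σ1*σ2*B)) (c := σ2^2*D)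
    (fun x => by have := h x; nlinarith)
  rw [discrim] at hd
  have hK : (0:ℝ) < σ1^2*σ2^2 := by positivity
  nlinarith

lemma rho_zero {ρ C ε : ℝ} (hε : 0 < ε)
    (h : ∀ N : ℕ, 1 ≤ N → ρ^2 ≤ C * (N:ℝ)^(-ε)) : ρ = 0 := by
  by_contra hρ
  have hρ2 : 0 < ρ^2 := by positivity
  have ht : Filter.Tendsto (fun N : ℕ => C * (N:ℝ)^(-ε)) Filter.atTop (nhds 0) := by
    have h1 : Filter.Tendsto (fun x : ℝ => x^(-ε)) Filter.atTop (nhds 0) :=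
      tendsto_rpow_neg_atTop hε
    have h2 := (h1.comp (tendsto_natCast_atTop_atTop (R := ℝ))).const_mul C
    simpa using h2
  have := (ht.eventually_lt_const hρ2).and (Filter.eventually_atTop.2 ⟨1, fun N hN => hN⟩)
  obtain ⟨N, h1, h2⟩ := this.exists
  exact absurd (h N h2) (not_le.2 h1)

lemma key (n : ℕ) (hn : 1 ≤ n)
    (σ1 σ2 s11 s12 s22 α11 α12 α22 β11 β12 β22 ρ : ℝ)
    (hσ1 : 0 < σ1) (hσ2 : 0 < σ2)
    (hs11 : 0 < s11) (hs12 : 0 < s12) (hs22 : 0 < s22)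
    (hα11 : 0 < α11) (hα22 : 0 < α22) (hα12 : 0 < α12)
    (hβ11 : 0 < β11) (hβ12 : 0 < β12) (hβ22 : 0 < β22)
    (hm1 : 2 * β12 < β11 + (n : ℝ)) (hm2 : β11 < (n : ℝ)) (hm3 : (n : ℝ) < β22)
    (hpd : PosDefIn n (fun r =>
      !![σ1 ^ 2 * (1 + (s11 * r) ^ α11) ^ (-(β11 / α11)),
         ρ * σ1 * σ2 * (1 + (s12 * r) ^ α12) ^ (-(β12 / α12));
         ρ * σ1 * σ2 * (1 + (s12 * r) ^ α12) ^ (-(β12 / α12)),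
         σ2 ^ 2 * (1 + (s22 * r) ^ α22) ^ (-(β22 / α22))])) :
    ρ = 0 := by
  classical
  have hn0 : (0:ℝ) < n := by exact_mod_cast hn
  -- the three double sums over the grid
  set S11 : ℕ → ℝ := fun N => ∑ v : Fin n → Fin N, ∑ w : Fin n → Fin N,
    (1 + (s11 * ‖gridPt n N v - gridPt n N w‖)^α11)^(-(β11/α11)) with hS11
  set S12 : ℕ → ℝ := fun N => ∑ v : Fin n → Fin N, ∑ w : Fin n → Fin N,
    (1 + (s12 * ‖gridPt n N v - gridPt n N w‖)^α12)^(-(β12/α12)) with hS12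
  set S22 : ℕ → ℝ := fun N => ∑ v : Fin n → Fin N, ∑ w : Fin n → Fin N,
    (1 + (s22 * ‖gridPt n N v - gridPt n N w‖)^α22)^(-(β22/α22)) with hS22
  -- Step 1 : quadratic form inequality
  have step1 : ∀ N : ℕ, ∀ t : ℝ,
      0 ≤ t^2*(σ1^2*S11 N) + 2*t*(ρ*σ1*σ2*S12 N) + σ2^2*S22 N := by
    intro N t
    set ι := (Fin n → Fin N)
    set e := Fintype.equivFin ι with he
    have h := hpd (Fintype.card ι) (fun i => gridPt n N (e.symm i)) (fun _ => ![t,1])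
    have hre : ∑ i : Fin (Fintype.card ι), ∑ j : Fin (Fintype.card ι),
        (![t,1] : Fin 2 → ℝ) ⬝ᵥ ((fun r =>
          !![σ1 ^ 2 * (1 + (s11 * r) ^ α11) ^ (-(β11 / α11)),
             ρ * σ1 * σ2 * (1 + (s12 * r) ^ α12) ^ (-(β12 / α12));
             ρ * σ1 * σ2 * (1 + (s12 * r) ^ α12) ^ (-(β12 / α12)),
             σ2 ^ 2 * (1 + (s22 * r) ^ α22) ^ (-(β22 / α22))])
          ‖gridPt n N (e.symm i) - gridPt n N (e.symm j)‖).mulVec ![t,1]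
        = ∑ v : ι, ∑ w : ι,
        (![t,1] : Fin 2 → ℝ) ⬝ᵥ ((fun r =>
          !![σ1 ^ 2 * (1 + (s11 * r) ^ α11) ^ (-(β11 / α11)),
             ρ * σ1 * σ2 * (1 + (s12 * r) ^ α12) ^ (-(β12 / α12));
             ρ * σ1 * σ2 * (1 + (s12 * r) ^ α12) ^ (-(β12 / α12)),
             σ2 ^ 2 * (1 + (s22 * r) ^ α22) ^ (-(β22 / α22))])
          ‖gridPt n N v - gridPt n N w‖).mulVec ![t,1] := by
      rw [← Equiv.sum_comp e.symm]
      apply Finset.sum_congr rfl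
      intro i _
      rw [← Equiv.sum_comp e.symm]
    rw [hre] at h
    refine le_trans h (le_of_eq ?_)
    have expand : ∀ v w : ι,
        (![t,1] : Fin 2 → ℝ) ⬝ᵥ ((fun r =>
          !![σ1 ^ 2 * (1 + (s11 * r) ^ α11) ^ (-(β11 / α11)),
             ρ * σ1 * σ2 * (1 + (s12 * r) ^ α12) ^ (-(β12 / α12));
             ρ * σ1 * σ2 * (1 + (s12 * r) ^ α12) ^ (-(β12 / α12)),
             σ2 ^ 2 * (1 + (s22 * r) ^ α22) ^ (-(β22 / α22))])
          ‖gridPt n N v - gridPt n N w‖).mulVec ![t,1]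
        = t^2*(σ1 ^ 2 * (1 + (s11 * ‖gridPt n N v - gridPt n N w‖) ^ α11) ^ (-(β11 / α11)))
          + 2*t*(ρ * σ1 * σ2 * (1 + (s12 * ‖gridPt n N v - gridPt n N w‖) ^ α12) ^ (-(β12 / α12)))
          + σ2 ^ 2 * (1 + (s22 * ‖gridPt n N v - gridPt n N w‖) ^ α22) ^ (-(β22 / α22)) := by
      intro v w
      exact quad_eval _ _ _ t
    rw [Finset.sum_congr rfl (fun v _ => Finset.sum_congr rfl (fun w _ => expand v w))]
    simp only [Finset.sum_add_distrib, ← Finset.mul_sum, hS11, hS12, hS22]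
    rfl
  -- Step 2 : Cauchy-Schwarz via discriminant
  have step2 : ∀ N : ℕ, ρ^2 * (S12 N)^2 ≤ S11 N * S22 N := fun N =>
    disc_ineq hσ1 hσ2 (step1 N)
  -- Step 3 : bounds
  set γ1 := β11/(n:ℝ) with hγ1
  set γ2 := β22/(n:ℝ) with hγ2
  have hγ1a : 0 < γ1 := by positivity
  have hγ1b : γ1 < 1 := by rw [hγ1, div_lt_one hn0]; exact hm2
  have hγ2a : 1 < γ2 := by rw [hγ2, lt_div_iff₀ hn0]; linarith
  obtain ⟨T, hT0, hT⟩ := sumOne_gt_one hγ2a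
  set c1 : ℝ := (1 + s12^α12)^(-(β12/α12)) * (Real.sqrt n)^(-β12) with hc1
  have hsq : (0:ℝ) < Real.sqrt n := Real.sqrt_pos.2 hn0
  have hc1p : 0 < c1 := by
    apply mul_pos (Real.rpow_pos_of_pos _ _) (Real.rpow_pos_of_pos hsq _)
    have : (0:ℝ) ≤ s12^α12 := Real.rpow_nonneg hs12.le _
    linarith
  set K1 : ℝ := s11^(-β11) * 2^β11 * (2/(1-γ1))^(n:ℕ) with hK1
  have h1γ : 0 < 1 - γ1 := by linarith
  have hK1p : 0 < K1 := by
    exact mul_pos (mul_pos (Real.rpow_pos_of_pos hs11 _) (Real.rpow_pos_of_pos (by norm_num) _))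
      (pow_pos (div_pos (by norm_num) h1γ) n)
  set K2 : ℝ := 1 + s22^(-β22) * 2^β22 * (2*T)^(n:ℕ) with hK2
  have hK2p : 0 < K2 := by
    have h1 : (0:ℝ) ≤ s22^(-β22) := Real.rpow_nonneg hs22.le _
    have h2 : (0:ℝ) ≤ 2^β22 := Real.rpow_nonneg (by norm_num) _
    have h3 : (0:ℝ) ≤ (2*T)^(n:ℕ) := by positivity
    positivity
  set C : ℝ := (1+K1)*K2 / c1^2 with hC
  -- final bound
  have main : ∀ N : ℕ, 1 ≤ N → ρ^2 ≤ C * (N:ℝ)^(-(β11 + n - 2*β12)) := by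
    intro N hN
    have hN0 : (0:ℝ) < N := by exact_mod_cast hN
    have hN1 : (1:ℝ) ≤ N := by exact_mod_cast hN
    have hPQ : ((N:ℝ)^(n:ℕ)) = (N:ℝ)^((n:ℝ)) := (Real.rpow_natCast _ n).symm
    -- lower bound for S12
    have low12 : (N:ℝ)^(2*(n:ℝ) - β12) * c1 ≤ S12 N := by
      have h := Sg_lower (s := s12) (α := α12) (β := β12) hn hN hs12 hα12 hβ12
      refine le_trans (le_of_eq ?_) h
      have e : (N:ℝ)^(2*(n:ℝ)-β12) = ((N:ℝ)^((n:ℝ)))^2 * (N:ℝ)^(-β12) := by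
        rw [sq, ← Real.rpow_add hN0, ← Real.rpow_add hN0]
        congr 1
        ring
      rw [e, hc1, Real.mul_rpow hsq.le hN0.le, ← hPQ]
      ring
    -- upper bound for S11
    have up11 : S11 N ≤ (1+K1) * (N:ℝ)^(2*(n:ℝ) - β11) := by
      have hB := sumOne_lt_one hγ1a hγ1b N
      have h := Sg_upper (s := s11) (α := α11) (β := β11) (B := (N:ℝ)^(1-γ1)/(1-γ1))
        hn hs11 hα11 hβ11 (by rw [← hγ1]; exact hB)
      have hpow : (2 * ((N:ℝ)^(1-γ1)/(1-γ1)))^(n:ℕ)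
          = (2/(1-γ1))^(n:ℕ) * (N:ℝ)^((n:ℝ) - β11) := by
        rw [show (2 * ((N:ℝ)^(1-γ1)/(1-γ1))) = (2/(1-γ1)) * (N:ℝ)^(1-γ1) by ring]
        rw [mul_pow]
        congr 1
        rw [← Real.rpow_natCast ((N:ℝ)^(1-γ1)) n, ← Real.rpow_mul hN0.le]
        congr 1
        rw [hγ1]
        field_simp
      rw [hpow, hPQ] at h
      have hone : (1:ℝ) ≤ (N:ℝ)^((n:ℝ) - β11) :=
        Real.one_le_rpow hN1 (by linarith)
      have hmono : (N:ℝ)^((n:ℝ)) * 1 ≤ (N:ℝ)^((n:ℝ)) * (N:ℝ)^((n:ℝ) - β11) :=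
        mul_le_mul_of_nonneg_left hone (Real.rpow_nonneg hN0.le _)
      calc S11 N ≤ (N:ℝ)^((n:ℝ)) * (1 + s11^(-β11) * 2^β11 * ((2/(1-γ1))^(n:ℕ) * (N:ℝ)^((n:ℝ) - β11))) := h
        _ = (N:ℝ)^((n:ℝ)) * 1 + (N:ℝ)^((n:ℝ)) * (K1 * (N:ℝ)^((n:ℝ) - β11)) := by
            rw [hK1]; ring
        _ ≤ (N:ℝ)^((n:ℝ)) * (N:ℝ)^((n:ℝ) - β11) + (N:ℝ)^((n:ℝ)) * (K1 * (N:ℝ)^((n:ℝ) - β11)) := by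
            linarith
        _ = (1+K1) * ((N:ℝ)^((n:ℝ)) * (N:ℝ)^((n:ℝ) - β11)) := by ring
        _ = (1+K1) * (N:ℝ)^(2*(n:ℝ) - β11) := by
            rw [← Real.rpow_add hN0]
            congr 2
            ring
    -- upper bound for S22
    have up22 : S22 N ≤ K2 * (N:ℝ)^((n:ℝ)) := by
      have h := Sg_upper (s := s22) (α := α22) (β := β22) (B := T)
        hn hs22 hα22 hβ22 (by rw [← hγ2]; exact hT N)
      refine le_trans h (le_of_eq ?_)
      rw [hPQ, hK2]; ring
    have hS22nn : 0 ≤ S22 N := by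
      apply Finset.sum_nonneg; intro v _; apply Finset.sum_nonneg; intro w _
      positivity
    have hLpos : 0 < (N:ℝ)^(2*(n:ℝ) - β12) * c1 :=
      mul_pos (Real.rpow_pos_of_pos hN0 _) hc1p
    have comb : ρ^2 * c1^2 * (N:ℝ)^(4*(n:ℝ) - 2*β12) ≤ (1+K1)*K2 * (N:ℝ)^(3*(n:ℝ) - β11) := by
      have h1 : ρ^2 * ((N:ℝ)^(2*(n:ℝ) - β12) * c1)^2 ≤ ρ^2 * (S12 N)^2 :=
        mul_le_mul_of_nonneg_left (pow_le_pow_left₀ hLpos.le low12 2) (sq_nonneg ρ)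
      have h3 : S11 N * S22 N ≤ ((1+K1) * (N:ℝ)^(2*(n:ℝ) - β11)) * (K2 * (N:ℝ)^((n:ℝ))) :=
        mul_le_mul up11 up22 hS22nn (by positivity)
      have e1 : ρ^2 * ((N:ℝ)^(2*(n:ℝ) - β12) * c1)^2 = ρ^2 * c1^2 * ((N:ℝ)^(2*(n:ℝ) - β12) * (N:ℝ)^(2*(n:ℝ) - β12)) := by ring
      have e2 : (N:ℝ)^(2*(n:ℝ) - β12) * (N:ℝ)^(2*(n:ℝ) - β12) = (N:ℝ)^(4*(n:ℝ) - 2*β12) := by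
        rw [← Real.rpow_add hN0]; congr 1; ring
      have e3 : ((1+K1) * (N:ℝ)^(2*(n:ℝ) - β11)) * (K2 * (N:ℝ)^((n:ℝ)))
          = (1+K1)*K2 * ((N:ℝ)^(2*(n:ℝ) - β11) * (N:ℝ)^((n:ℝ))) := by ring
      have e4 : (N:ℝ)^(2*(n:ℝ) - β11) * (N:ℝ)^((n:ℝ)) = (N:ℝ)^(3*(n:ℝ) - β11) := by
        rw [← Real.rpow_add hN0]; congr 1; ring
      calc ρ^2 * c1^2 * (N:ℝ)^(4*(n:ℝ) - 2*β12)
          = ρ^2 * ((N:ℝ)^(2*(n:ℝ) - β12) * c1)^2 := by rw [e1, e2]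
        _ ≤ ρ^2 * (S12 N)^2 := h1
        _ ≤ S11 N * S22 N := step2 N
        _ ≤ ((1+K1) * (N:ℝ)^(2*(n:ℝ) - β11)) * (K2 * (N:ℝ)^((n:ℝ))) := h3
        _ = (1+K1)*K2 * (N:ℝ)^(3*(n:ℝ) - β11) := by rw [e3, e4]
    -- divide
    have e5 : (N:ℝ)^(3*(n:ℝ) - β11) = (N:ℝ)^(4*(n:ℝ) - 2*β12) * (N:ℝ)^(-(β11 + n - 2*β12)) := by
      rw [← Real.rpow_add hN0]; congr 1; ring
    rw [e5] at comb
    have hX : (0:ℝ) < (N:ℝ)^(4*(n:ℝ) - 2*β12) := Real.rpow_pos_of_pos hN0 _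
    have comb2 : ρ^2 * c1^2 ≤ (1+K1)*K2 * (N:ℝ)^(-(β11 + n - 2*β12)) := by
      have := (mul_le_mul_iff_of_pos_right hX).2 (le_refl (ρ^2 * c1^2))
      rw [← mul_le_mul_iff_of_pos_right hX]
      calc ρ^2 * c1^2 * (N:ℝ)^(4*(n:ℝ) - 2*β12)
          ≤ (1+K1)*K2 * ((N:ℝ)^(4*(n:ℝ) - 2*β12) * (N:ℝ)^(-(β11 + n - 2*β12))) := comb
        _ = (1+K1)*K2 * (N:ℝ)^(-(β11 + n - 2*β12)) * (N:ℝ)^(4*(n:ℝ) - 2*β12) := by ring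
    have hc12 : (0:ℝ) < c1^2 := by positivity
    rw [hC]
    rw [div_mul_eq_mul_div, le_div_iff₀ hc12]
    calc ρ^2 * c1^2 ≤ (1+K1)*K2 * (N:ℝ)^(-(β11 + n - 2*β12)) := comb2
      _ = (1+K1)*K2 * (N:ℝ)^(-(β11 + ↑n - 2*β12)) := by norm_num
  exact rho_zero (by linarith : (0:ℝ) < β11 + n - 2*β12) main

/-- If for some indices `i ≠ j` one has `2β12 < βᵢᵢ + n`, `βᵢᵢ < n` and `βⱼⱼ > n`, then the bivariate generalized Cauchy model is a valid
covariance model in `ℝⁿ` only for `ρ = 0`. -/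
theorem bivariate_generalized_cauchy_necessary_mixed
    (n : ℕ) (hn : 1 ≤ n)
    (σ1 σ2 s11 s12 s22 α11 α12 α22 β11 β12 β22 ρ : ℝ)
    (hσ1 : 0 < σ1) (hσ2 : 0 < σ2)
    (hs11 : 0 < s11) (hs12 : 0 < s12) (hs22 : 0 < s22)
    (hα11 : α11 ∈ Ioc (0 : ℝ) 1) (hα22 : α22 ∈ Ioc (0 : ℝ) 1)
    (hα12 : α12 ∈ Ioc (0 : ℝ) 2)
    (hβ11 : 0 < β11) (hβ12 : 0 < β12) (hβ22 : 0 < β22)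
    (hρ : ρ ∈ Icc (-1 : ℝ) 1)
    (hmix : (2 * β12 < β11 + (n : ℝ) ∧ β11 < (n : ℝ) ∧ (n : ℝ) < β22) ∨
            (2 * β12 < β22 + (n : ℝ) ∧ β22 < (n : ℝ) ∧ (n : ℝ) < β11))
    (hpd : PosDefIn n (fun r =>
      !![σ1 ^ 2 * (1 + (s11 * r) ^ α11) ^ (-(β11 / α11)),
         ρ * σ1 * σ2 * (1 + (s12 * r) ^ α12) ^ (-(β12 / α12));
         ρ * σ1 * σ2 * (1 + (s12 * r) ^ α12) ^ (-(β12 / α12)),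
         σ2 ^ 2 * (1 + (s22 * r) ^ α22) ^ (-(β22 / α22))])) :
    ρ = 0 := by
  rcases hmix with ⟨hm1, hm2, hm3⟩ | ⟨hm1, hm2, hm3⟩
  · exact key n hn σ1 σ2 s11 s12 s22 α11 α12 α22 β11 β12 β22 ρ hσ1 hσ2 hs11 hs12 hs22
      hα11.1 hα22.1 hα12.1 hβ11 hβ12 hβ22 hm1 hm2 hm3 hpd
  · apply key n hn σ2 σ1 s22 s12 s11 α22 α12 α11 β22 β12 β11 ρ hσ2 hσ1 hs22 hs12 hs11
      hα22.1 hα11.1 hα12.1 hβ22 hβ12 hβ11 hm1 hm2 hm3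
    intro p x a
    have h := hpd p x (fun i => ![a i 1, a i 0])
    refine le_trans h (le_of_eq ?_)
    apply Finset.sum_congr rfl
    intro i _
    apply Finset.sum_congr rfl
    intro j _
    simp [Matrix.mulVec, dotProduct, Fin.sum_univ_two]
    ring
end
end

section
/- Let σ1, σ2 > 0, ρ ∈ [−1,1], and let ψ11, ψ22, ψ12 : [0,∞) → ℝ be continuous functions with ψ_{ij}(0) = 1 that are twice continuously differentiable on (0,∞) and satisfy: (i) ψ11''(r) ≥ 0 and ψ22''(r) ≥ 0 for all r > 0; (ii) ψ_{ij}(r) → 0 and r·ψ_{ij}'(r) → 0 as r → ∞ for all i,j ∈ {1,2}; (iii) the functions r ↦ r·ψ_{ij}''(r) are (absolutely) integrable on (0,∞) for all i,j ∈ {1,2}; (iv) ρ²·(ψ12''(r))² ≤ ψ11''(r)·ψ22''(r) for all r > 0. Then the matrix-valued function C : [0,∞) → ℝ^{2×2} with C11(r) = σ1²·ψ11(r), C22(r) = σ2²·ψ22(r), C12(r) = C21(r) = ρσ1σ2·ψ12(r) is positive definite in ℝ. -/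
open Matrix Set Filter MeasureTheory

noncomputable section

lemma quad_nonneg (A B C x y : ℝ) (hA : 0 ≤ A) (hC : 0 ≤ C) (hB : B^2 ≤ A*C) :
    0 ≤ A*x^2 + 2*B*x*y + C*y^2 := by
  rcases eq_or_lt_of_le hA with h | h
  · have hB0 : B = 0 := by nlinarith [sq_nonneg B]
    rw [← h, hB0]; nlinarith [mul_nonneg hC (sq_nonneg y)]
  · nlinarith [sq_nonneg (A*x + B*y), mul_nonneg hA hC, sq_nonneg y]

lemma kern_eq (a b t : ℝ) :
    (volume (Ioo a (a+t) ∩ Ioo b (b+t))).toReal = max (t - |a-b|) 0 := by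
  have key : (a+t) ⊓ (b+t) - a ⊔ b = t - |a-b| := by
    rcases le_total a b with h | h
    · rw [abs_of_nonpos (by linarith), sup_eq_right.2 h, inf_eq_left.2 (by linarith)]; ring
    · rw [abs_of_nonneg (by linarith), sup_eq_left.2 h, inf_eq_right.2 (by linarith)]; ring
  rw [Ioo_inter_Ioo, Real.volume_Ioo, key]
  rcases le_total (t - |a-b|) 0 with h | h
  · rw [ENNReal.ofReal_eq_zero.2 h, ENNReal.toReal_zero, max_eq_right h]
  · rw [ENNReal.toReal_ofReal h, max_eq_left h]

lemma sumD (p : ℕ) (y b c : Fin p → ℝ) (t A B C : ℝ)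
    (hA : 0 ≤ A) (hC : 0 ≤ C) (hB : B^2 ≤ A*C) :
    0 ≤ ∑ i : Fin p, ∑ j : Fin p,
      (A * (b i * b j) + B * (b i * c j + c i * b j) + C * (c i * c j))
        * max (t - |y i - y j|) 0 := by
  set S : Fin p → Set ℝ := fun i => Ioo (y i) (y i + t) with hS
  set χ : Fin p → ℝ → ℝ := fun i u => (S i).indicator (fun _ => (1:ℝ)) u with hχ
  have hmeas : ∀ i, MeasurableSet (S i) := fun i => measurableSet_Ioo
  have hprod : ∀ i j, (fun u => χ i u * χ j u) = (S i ∩ S j).indicator (fun _ => (1:ℝ)) := by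
    intro i j
    funext u
    simp only [hχ, Set.indicator]
    by_cases h1 : u ∈ S i <;> by_cases h2 : u ∈ S j <;> simp [h1, h2, Set.mem_inter_iff]
  have hintint : ∀ i j, Integrable ((S i ∩ S j).indicator (fun _ => (1:ℝ))) volume := by
    intro i j
    rw [integrable_indicator_iff ((hmeas i).inter (hmeas j))]
    refine integrableOn_const (ne_of_lt ?_) (by simp)
    apply lt_of_le_of_lt (measure_mono Set.inter_subset_left)
    rw [show S i = Ioo (y i) (y i + t) from rfl, Real.volume_Ioo]
    exact ENNReal.ofReal_lt_top
  have hterm : ∀ i j : Fin p, Integrable (fun u =>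
      (A * (b i * b j) + B * (b i * c j + c i * b j) + C * (c i * c j)) * (χ i u * χ j u)) volume := by
    intro i j
    rw [show (fun u => (A * (b i * b j) + B * (b i * c j + c i * b j) + C * (c i * c j)) * (χ i u * χ j u))
        = fun u => (A * (b i * b j) + B * (b i * c j + c i * b j) + C * (c i * c j)) *
          ((S i ∩ S j).indicator (fun _ => (1:ℝ)) u) from by rw [← hprod i j]]
    exact (hintint i j).const_mul _
  have hpt : ∀ u : ℝ, 0 ≤ ∑ i : Fin p, ∑ j : Fin p,
      (A * (b i * b j) + B * (b i * c j + c i * b j) + C * (c i * c j)) * (χ i u * χ j u) := by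
    intro u
    have e1 : ∀ (d e : Fin p → ℝ) (k : ℝ),
        (∑ i : Fin p, ∑ j : Fin p, k * ((d i * χ i u) * (e j * χ j u)))
          = k * ((∑ i, d i * χ i u) * (∑ i, e i * χ i u)) := by
      intro d e k
      rw [Finset.sum_mul_sum]
      simp only [Finset.mul_sum]
    have split : (∑ i : Fin p, ∑ j : Fin p,
        (A * (b i * b j) + B * (b i * c j + c i * b j) + C * (c i * c j)) * (χ i u * χ j u))
        = (∑ i : Fin p, ∑ j : Fin p, A * ((b i * χ i u) * (b j * χ j u)))
          + ((∑ i : Fin p, ∑ j : Fin p, B * ((b i * χ i u) * (c j * χ j u)))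
          + ((∑ i : Fin p, ∑ j : Fin p, B * ((c i * χ i u) * (b j * χ j u)))
          + (∑ i : Fin p, ∑ j : Fin p, C * ((c i * χ i u) * (c j * χ j u))))) := by
      simp only [← Finset.sum_add_distrib]
      apply Finset.sum_congr rfl
      intro i _
      apply Finset.sum_congr rfl
      intro j _
      ring
    rw [split, e1, e1, e1, e1]
    have := quad_nonneg A B C (∑ i, b i * χ i u) (∑ i, c i * χ i u) hA hC hB
    nlinarith [this]
  have hsum : (∑ i : Fin p, ∑ j : Fin p,
      (A * (b i * b j) + B * (b i * c j + c i * b j) + C * (c i * c j))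
        * max (t - |y i - y j|) 0)
      = ∫ u, ∑ i : Fin p, ∑ j : Fin p,
        (A * (b i * b j) + B * (b i * c j + c i * b j) + C * (c i * c j)) * (χ i u * χ j u) := by
    rw [integral_finset_sum _ (fun i _ => integrable_finset_sum _ (fun j _ => hterm i j))]
    apply Finset.sum_congr rfl
    intro i _
    rw [integral_finset_sum _ (fun j _ => hterm i j)]
    apply Finset.sum_congr rfl
    intro j _
    have h2 : ∫ u, (A * (b i * b j) + B * (b i * c j + c i * b j) + C * (c i * c j)) * (χ i u * χ j u)
        = (A * (b i * b j) + B * (b i * c j + c i * b j) + C * (c i * c j)) *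
          ∫ u, (S i ∩ S j).indicator (fun _ => (1:ℝ)) u := by
      rw [← integral_const_mul]
      congr 1
      funext u
      rw [show χ i u * χ j u = (S i ∩ S j).indicator (fun _ => (1:ℝ)) u from congrFun (hprod i j) u]
    rw [h2, integral_indicator_const (1:ℝ) ((hmeas i).inter (hmeas j)), smul_eq_mul, mul_one,
      measureReal_def, kern_eq]
  rw [hsum]
  exact integral_nonneg hpt

lemma trunc_integrable (ψ : ℝ → ℝ)
    (hint : IntegrableOn (fun r => r * deriv (deriv ψ) r) (Ioi 0)) (r : ℝ) (hr : 0 ≤ r) :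
    IntegrableOn (fun t => deriv (deriv ψ) t * max (t - r) 0) (Ioi 0) := by
  apply Integrable.mono' hint.abs
  · exact ((measurable_deriv _).mul
      ((continuous_id.sub continuous_const).max continuous_const).measurable).aestronglyMeasurable
  · filter_upwards [ae_restrict_mem measurableSet_Ioi] with t ht
    have ht0 : (0:ℝ) < t := ht
    have hmax : max (t - r) 0 ≤ t := max_le (by linarith) ht0.le
    have hmax0 : 0 ≤ max (t - r) 0 := le_max_right _ _
    rw [Real.norm_eq_abs, abs_mul, abs_of_nonneg hmax0, abs_mul, abs_of_nonneg ht0.le,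
      mul_comm t]
    exact mul_le_mul_of_nonneg_left hmax (abs_nonneg _)

lemma repA (ψ : ℝ → ℝ) (hcont : ContinuousOn ψ (Ici 0)) (hC2 : ContDiffOn ℝ 2 ψ (Ioi 0))
    (hlim : Tendsto ψ atTop (nhds 0))
    (hlim' : Tendsto (fun r => r * deriv ψ r) atTop (nhds 0))
    (hint : IntegrableOn (fun r => r * deriv (deriv ψ) r) (Ioi 0)) :
    ∀ r : ℝ, 0 ≤ r → ψ r = ∫ t in Ioi (0:ℝ), deriv (deriv ψ) t * max (t - r) 0 := by
  have hd1 : ∀ x ∈ Ioi (0:ℝ), HasDerivAt ψ (deriv ψ x) x := fun x hx =>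
    ((hC2.differentiableOn two_ne_zero).differentiableAt (isOpen_Ioi.mem_nhds hx)).hasDerivAt
  have hC1' : ContDiffOn ℝ 1 (deriv ψ) (Ioi 0) :=
    hC2.deriv_of_isOpen isOpen_Ioi (by norm_num)
  have hd2 : ∀ x ∈ Ioi (0:ℝ), HasDerivAt (deriv ψ) (deriv (deriv ψ) x) x := fun x hx =>
    ((hC1'.differentiableOn one_ne_zero).differentiableAt (isOpen_Ioi.mem_nhds hx)).hasDerivAt
  have hcd : ContinuousOn (deriv ψ) (Ioi 0) := hC1'.continuousOn
  have hψ' : Tendsto (deriv ψ) atTop (nhds 0) := by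
    have h1 : Tendsto (fun r => (r * deriv ψ r) * r⁻¹) atTop (nhds (0 * 0)) :=
      hlim'.mul tendsto_inv_atTop_zero
    rw [zero_mul] at h1
    apply h1.congr'
    filter_upwards [eventually_gt_atTop (0:ℝ)] with r hr
    field_simp
  have key : ∀ r : ℝ, 0 < r → ψ r = ∫ t in Ioi (0:ℝ), deriv (deriv ψ) t * max (t - r) 0 := by
    intro r hr
    set f : ℝ → ℝ := fun t => (t - r) * deriv ψ t - ψ t with hf
    have hfd : ∀ x ∈ Ioi r, HasDerivAt f ((x - r) * deriv (deriv ψ) x) x := by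
      intro x hx
      have hx0 : x ∈ Ioi (0:ℝ) := lt_trans hr hx
      have h := (((hasDerivAt_id x).sub_const r).mul (hd2 x hx0)).sub (hd1 x hx0)
      refine h.congr_deriv ?_
      simp only [id_eq]
      ring
    have hcontf : ContinuousWithinAt f (Ici r) r := by
      have h1 : ContinuousAt f r := by
        have := (hd1 r hr).continuousAt
        have h2 : ContinuousAt (deriv ψ) r :=
          hcd.continuousAt (isOpen_Ioi.mem_nhds hr)
        exact (((continuousAt_id.sub continuousAt_const).mul h2).sub this)
      exact h1.continuousWithinAt
    have hfint : IntegrableOn (fun x => (x - r) * deriv (deriv ψ) x) (Ioi r) := by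
      apply Integrable.mono' ((hint.mono_set (Ioi_subset_Ioi hr.le)).abs)
      · exact ((continuous_id.sub continuous_const).measurable.mul
          (measurable_deriv _)).aestronglyMeasurable
      · filter_upwards [ae_restrict_mem measurableSet_Ioi] with x hx
        have hx0 : r < x := hx
        rw [Real.norm_eq_abs, abs_mul, abs_mul, abs_of_nonneg (by linarith : (0:ℝ) ≤ x - r),
          abs_of_nonneg (by linarith : (0:ℝ) ≤ x)]
        exact mul_le_mul_of_nonneg_right (by linarith) (abs_nonneg _)
    have hlimf : Tendsto f atTop (nhds 0) := by
      have h1 : Tendsto (fun t => t * deriv ψ t - r * deriv ψ t - ψ t) atTop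
          (nhds (0 - r * 0 - 0)) := (hlim'.sub ((hψ'.const_mul r))).sub hlim
      norm_num at h1
      apply h1.congr
      intro t
      simp only [hf]
      ring
    have hFTC := integral_Ioi_of_hasDerivAt_of_tendsto hcontf hfd hfint hlimf
    have hfr : f r = -ψ r := by simp [hf]
    rw [hfr, zero_sub, neg_neg] at hFTC
    have hsplit : Ioi (0:ℝ) = Ioc 0 r ∪ Ioi r := (Ioc_union_Ioi_eq_Ioi hr.le).symm
    have hIoc : IntegrableOn (fun t => deriv (deriv ψ) t * max (t - r) 0) (Ioc 0 r) :=
      (trunc_integrable ψ hint r hr.le).mono_set Ioc_subset_Ioi_self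
    have hIoi : IntegrableOn (fun t => deriv (deriv ψ) t * max (t - r) 0) (Ioi r) :=
      (trunc_integrable ψ hint r hr.le).mono_set (Ioi_subset_Ioi hr.le)
    rw [hsplit, setIntegral_union (Ioc_disjoint_Ioi le_rfl) measurableSet_Ioi hIoc hIoi]
    have hz : ∫ t in Ioc (0:ℝ) r, deriv (deriv ψ) t * max (t - r) 0 = 0 := by
      rw [setIntegral_congr_fun measurableSet_Ioc
        (fun t ht => by
          have : t - r ≤ 0 := by linarith [ht.2]
          simp [max_eq_right this] : EqOn _ (fun _ => (0:ℝ)) _)]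
      simp
    have he : ∫ t in Ioi r, deriv (deriv ψ) t * max (t - r) 0
        = ∫ t in Ioi r, (t - r) * deriv (deriv ψ) t := by
      apply setIntegral_congr_fun measurableSet_Ioi
      intro t ht
      have : (0:ℝ) ≤ t - r := by linarith [show r < t from ht]
      simp only [max_eq_left this]
      ring
    rw [hz, he, hFTC, zero_add]
  intro r hr
  rcases eq_or_lt_of_le hr with hr0 | hr0
  · subst hr0
    set u : ℕ → ℝ := fun n => ((n:ℝ) + 1)⁻¹ with hu
    have hupos : ∀ n, 0 < u n := fun n => by positivity
    have hulim : Tendsto u atTop (nhds 0) := by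
      apply tendsto_inv_atTop_zero.comp
      exact tendsto_atTop_add_const_right _ 1 tendsto_natCast_atTop_atTop
    have h1 : Tendsto (fun n => ψ (u n)) atTop (nhds (ψ 0)) := by
      have hw : ContinuousWithinAt ψ (Ici 0) 0 := hcont 0 self_mem_Ici
      apply hw.tendsto.comp
      apply tendsto_nhdsWithin_of_tendsto_nhds_of_eventually_within _ hulim
      exact Eventually.of_forall (fun n => (hupos n).le)
    have h2 : Tendsto (fun n => ∫ t in Ioi (0:ℝ), deriv (deriv ψ) t * max (t - u n) 0) atTop
        (nhds (∫ t in Ioi (0:ℝ), deriv (deriv ψ) t * max (t - 0) 0)) := by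
      apply tendsto_integral_of_dominated_convergence (fun t => |t * deriv (deriv ψ) t|)
      · intro n
        exact ((measurable_deriv _).mul
          ((continuous_id.sub continuous_const).max continuous_const).measurable).aestronglyMeasurable
      · exact hint.abs
      · intro n
        filter_upwards [ae_restrict_mem measurableSet_Ioi] with t ht
        have ht0 : (0:ℝ) < t := ht
        have hmax : max (t - u n) 0 ≤ t := max_le (by linarith [(hupos n).le]) ht0.le
        have hmax0 : 0 ≤ max (t - u n) 0 := le_max_right _ _
        rw [Real.norm_eq_abs, abs_mul, abs_of_nonneg hmax0, abs_mul, abs_of_nonneg ht0.le,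
          mul_comm t]
        exact mul_le_mul_of_nonneg_left hmax (abs_nonneg _)
      · apply Eventually.of_forall
        intro t
        have hc : Continuous (fun s : ℝ => deriv (deriv ψ) t * max (t - s) 0) :=
          continuous_const.mul ((continuous_const.sub continuous_id).max continuous_const)
        exact (hc.tendsto 0).comp hulim
    have h3 : ∀ n, ψ (u n) = ∫ t in Ioi (0:ℝ), deriv (deriv ψ) t * max (t - u n) 0 :=
      fun n => key (u n) (hupos n)
    have h1' : Tendsto (fun n => ∫ t in Ioi (0:ℝ), deriv (deriv ψ) t * max (t - u n) 0) atTop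
        (nhds (ψ 0)) := h1.congr (fun n => h3 n)
    exact tendsto_nhds_unique h1' h2
  · exact key r hr0

/-- General sufficient condition for positive definiteness of a bivariate model in `ℝ`. -/
theorem bivariate_sufficient_R1
    (σ1 σ2 ρ : ℝ) (hσ1 : 0 < σ1) (hσ2 : 0 < σ2) (hρ : ρ ∈ Icc (-1 : ℝ) 1)
    (ψ11 ψ22 ψ12 : ℝ → ℝ)
    (hcont11 : ContinuousOn ψ11 (Ici 0)) (hcont22 : ContinuousOn ψ22 (Ici 0))
    (hcont12 : ContinuousOn ψ12 (Ici 0))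
    (h011 : ψ11 0 = 1) (h022 : ψ22 0 = 1) (h012 : ψ12 0 = 1)
    (hC11 : ContDiffOn ℝ 2 ψ11 (Ioi 0)) (hC22 : ContDiffOn ℝ 2 ψ22 (Ioi 0))
    (hC12 : ContDiffOn ℝ 2 ψ12 (Ioi 0))
    (hconv11 : ∀ r > (0 : ℝ), 0 ≤ deriv (deriv ψ11) r)
    (hconv22 : ∀ r > (0 : ℝ), 0 ≤ deriv (deriv ψ22) r)
    (hlim11 : Tendsto ψ11 atTop (nhds 0)) (hlim22 : Tendsto ψ22 atTop (nhds 0))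
    (hlim12 : Tendsto ψ12 atTop (nhds 0))
    (hlim11' : Tendsto (fun r => r * deriv ψ11 r) atTop (nhds 0))
    (hlim22' : Tendsto (fun r => r * deriv ψ22 r) atTop (nhds 0))
    (hlim12' : Tendsto (fun r => r * deriv ψ12 r) atTop (nhds 0))
    (hint11 : IntegrableOn (fun r => r * deriv (deriv ψ11) r) (Ioi 0))
    (hint22 : IntegrableOn (fun r => r * deriv (deriv ψ22) r) (Ioi 0))
    (hint12 : IntegrableOn (fun r => r * deriv (deriv ψ12) r) (Ioi 0))
    (hineq : ∀ r > (0 : ℝ),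
      ρ ^ 2 * (deriv (deriv ψ12) r) ^ 2 ≤ deriv (deriv ψ11) r * deriv (deriv ψ22) r) :
    PosDefIn 1 (fun r =>
      !![σ1 ^ 2 * ψ11 r, ρ * σ1 * σ2 * ψ12 r;
         ρ * σ1 * σ2 * ψ12 r, σ2 ^ 2 * ψ22 r]) := by
  intro p x a
  set y : Fin p → ℝ := fun i => x i 0 with hy
  set b : Fin p → ℝ := fun i => a i 0 with hb
  set c : Fin p → ℝ := fun i => a i 1 with hc
  have hnorm : ∀ i j, ‖x i - x j‖ = |y i - y j| := by
    intro i j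
    rw [EuclideanSpace.norm_eq]
    simp [Real.sqrt_sq_eq_abs, hy]
  have hrep11 := repA ψ11 hcont11 hC11 hlim11 hlim11' hint11
  have hrep22 := repA ψ22 hcont22 hC22 hlim22 hlim22' hint22
  have hrep12 := repA ψ12 hcont12 hC12 hlim12 hlim12' hint12
  set F : Fin p → Fin p → ℝ → ℝ := fun i j t =>
    (σ1^2 * deriv (deriv ψ11) t * (b i * b j)
      + ρ * σ1 * σ2 * deriv (deriv ψ12) t * (b i * c j + c i * b j)
      + σ2^2 * deriv (deriv ψ22) t * (c i * c j)) * max (t - |y i - y j|) 0 with hF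
  have habs : ∀ i j : Fin p, (0:ℝ) ≤ |y i - y j| := fun i j => abs_nonneg _
  have hFint : ∀ i j : Fin p, IntegrableOn (F i j) (Ioi 0) := by
    intro i j
    have he : F i j = fun t =>
        (σ1^2 * (b i * b j)) * (deriv (deriv ψ11) t * max (t - |y i - y j|) 0)
        + ((ρ * σ1 * σ2 * (b i * c j + c i * b j)) *
            (deriv (deriv ψ12) t * max (t - |y i - y j|) 0)
          + (σ2^2 * (c i * c j)) * (deriv (deriv ψ22) t * max (t - |y i - y j|) 0)) := by
      funext t; simp only [hF]; ring
    rw [he]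
    exact ((trunc_integrable ψ11 hint11 _ (habs i j)).const_mul _).add
      (((trunc_integrable ψ12 hint12 _ (habs i j)).const_mul _).add
        ((trunc_integrable ψ22 hint22 _ (habs i j)).const_mul _))
  have hterm : ∀ i j : Fin p,
      a i ⬝ᵥ (!![σ1 ^ 2 * ψ11 ‖x i - x j‖, ρ * σ1 * σ2 * ψ12 ‖x i - x j‖;
         ρ * σ1 * σ2 * ψ12 ‖x i - x j‖, σ2 ^ 2 * ψ22 ‖x i - x j‖]).mulVec (a j)
        = ∫ t in Ioi (0:ℝ), F i j t := by
    intro i j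
    have hdot : a i ⬝ᵥ (!![σ1 ^ 2 * ψ11 ‖x i - x j‖, ρ * σ1 * σ2 * ψ12 ‖x i - x j‖;
         ρ * σ1 * σ2 * ψ12 ‖x i - x j‖, σ2 ^ 2 * ψ22 ‖x i - x j‖]).mulVec (a j)
        = (σ1^2 * (b i * b j)) * ψ11 (|y i - y j|)
          + ((ρ * σ1 * σ2 * (b i * c j + c i * b j)) * ψ12 (|y i - y j|)
            + (σ2^2 * (c i * c j)) * ψ22 (|y i - y j|)) := by
      rw [hnorm i j] at *
      simp [Matrix.mulVec, dotProduct, Fin.sum_univ_two, hb, hc, Matrix.vecHead, Matrix.vecTail]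
      ring
    rw [hdot]
    have he : ∀ t : ℝ, F i j t =
        (σ1^2 * (b i * b j)) * (deriv (deriv ψ11) t * max (t - |y i - y j|) 0)
        + ((ρ * σ1 * σ2 * (b i * c j + c i * b j)) *
            (deriv (deriv ψ12) t * max (t - |y i - y j|) 0)
          + (σ2^2 * (c i * c j)) * (deriv (deriv ψ22) t * max (t - |y i - y j|) 0)) := by
      intro t; simp only [hF]; ring
    rw [setIntegral_congr_fun measurableSet_Ioi (fun t _ => he t)]
    have i1 : IntegrableOn (fun t => (σ1^2 * (b i * b j)) *
        (deriv (deriv ψ11) t * max (t - |y i - y j|) 0)) (Ioi 0) :=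
      (trunc_integrable ψ11 hint11 _ (habs i j)).const_mul _
    have i2 : IntegrableOn (fun t => (ρ * σ1 * σ2 * (b i * c j + c i * b j)) *
        (deriv (deriv ψ12) t * max (t - |y i - y j|) 0)) (Ioi 0) :=
      (trunc_integrable ψ12 hint12 _ (habs i j)).const_mul _
    have i3 : IntegrableOn (fun t => (σ2^2 * (c i * c j)) *
        (deriv (deriv ψ22) t * max (t - |y i - y j|) 0)) (Ioi 0) :=
      (trunc_integrable ψ22 hint22 _ (habs i j)).const_mul _
    have i23 : IntegrableOn (fun t => (ρ * σ1 * σ2 * (b i * c j + c i * b j)) *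
        (deriv (deriv ψ12) t * max (t - |y i - y j|) 0)
        + (σ2^2 * (c i * c j)) * (deriv (deriv ψ22) t * max (t - |y i - y j|) 0)) (Ioi 0) :=
      i2.add i3
    rw [integral_add i1 i23, integral_add i2 i3,
      integral_const_mul, integral_const_mul, integral_const_mul,
      ← hrep11 _ (habs i j), ← hrep12 _ (habs i j), ← hrep22 _ (habs i j)]
  have total : (∑ i : Fin p, ∑ j : Fin p,
      a i ⬝ᵥ ((fun r =>
      !![σ1 ^ 2 * ψ11 r, ρ * σ1 * σ2 * ψ12 r;
         ρ * σ1 * σ2 * ψ12 r, σ2 ^ 2 * ψ22 r]) ‖x i - x j‖).mulVec (a j))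
      = ∫ t in Ioi (0:ℝ), ∑ i : Fin p, ∑ j : Fin p, F i j t := by
    rw [integral_finset_sum _ (fun i _ => integrable_finset_sum _ (fun j _ => hFint i j))]
    apply Finset.sum_congr rfl
    intro i _
    rw [integral_finset_sum _ (fun j _ => hFint i j)]
    exact Finset.sum_congr rfl (fun j _ => hterm i j)
  rw [total]
  apply setIntegral_nonneg measurableSet_Ioi
  intro t ht
  have ht0 : (0:ℝ) < t := ht
  have hA : 0 ≤ σ1^2 * deriv (deriv ψ11) t := mul_nonneg (sq_nonneg _) (hconv11 t ht0)
  have hC : 0 ≤ σ2^2 * deriv (deriv ψ22) t := mul_nonneg (sq_nonneg _) (hconv22 t ht0)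
  have hB : (ρ * σ1 * σ2 * deriv (deriv ψ12) t)^2
      ≤ (σ1^2 * deriv (deriv ψ11) t) * (σ2^2 * deriv (deriv ψ22) t) := by
    have h := mul_le_mul_of_nonneg_left (hineq t ht0)
      (show (0:ℝ) ≤ σ1^2 * σ2^2 by positivity)
    nlinarith [h]
  have := sumD p y b c t (σ1^2 * deriv (deriv ψ11) t) (ρ * σ1 * σ2 * deriv (deriv ψ12) t)
    (σ2^2 * deriv (deriv ψ22) t) hA hC hB
  have heq : (∑ i : Fin p, ∑ j : Fin p, F i j t)
      = ∑ i : Fin p, ∑ j : Fin p,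
        ((σ1^2 * deriv (deriv ψ11) t) * (b i * b j)
          + (ρ * σ1 * σ2 * deriv (deriv ψ12) t) * (b i * c j + c i * b j)
          + (σ2^2 * deriv (deriv ψ22) t) * (c i * c j)) * max (t - |y i - y j|) 0 := by
    apply Finset.sum_congr rfl
    intro i _
    apply Finset.sum_congr rfl
    intro j _
    simp only [hF]
    try ring
  rw [heq]
  exact this
end
end
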